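/- arXiv:2105.13874 — 3 statements merged into one kernel-verified Lean document; each statement's English description precedes it below -/
import Mathlib

section
/- Let A ⊆ H be an affine commutative-by-finite Hopf algebra with A semiprime or central in H, or H pointed. Then the map π° : H̄* → H°, β ↦ β∘π, is an injective Hopf algebra homomorphism whose image equals {f ∈ H° : f(A⁺H) = 0} = {f ∈ H° : f(ah) = ε(a)f(h) = f(ha) for all a ∈ A, h ∈ H}, and this image (identified with H̄*) is a normal Hopf subalgebra of H°, i.e. it is stable under both the left and right adjoint actions of H°. -/
open TensorProduct LinearMap Coalgebra

namespace Paper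

noncomputable section

variable (k : Type) [Field k]

section Coalg

variable {C : Type} [AddCommMonoid C] [Module k C] [Coalgebra k C]

/-- Convolution product on the linear dual of a coalgebra. -/
noncomputable def conv (f g : Module.Dual k C) : Module.Dual k C :=
  (TensorProduct.lid k k).toLinearMap ∘ₗ TensorProduct.map f g ∘ₗ Coalgebra.comul

/-- The unit of the convolution algebra on the dual: the counit. -/
noncomputable def convOne : Module.Dual k C := Coalgebra.counit

/-- Iterated convolution power. -/
noncomputable def convPow (f : Module.Dual k C) : ℕ → Module.Dual k C
  | 0 => convOne k
  | n + 1 => conv k f (convPow f n)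

end Coalg

/-- The finite dual of an algebra: functionals vanishing on a two-sided ideal
of finite codimension. -/
def finDual (H : Type) [Ring H] [Algebra k H] : Set (Module.Dual k H) :=
  {f | ∃ I : Submodule k H, (∀ (h : H), ∀ x ∈ I, h * x ∈ I ∧ x * h ∈ I) ∧
    I ≤ LinearMap.ker f ∧ FiniteDimensional k (H ⧸ I)}

section Hopf

variable (H : Type) [Ring H] [HopfAlgebra k H]

/-- Left adjoint action `(ad_ℓ h)(a) = Σ h₁ a S(h₂)`. -/
noncomputable def adl (h a : H) : H :=
  TensorProduct.lift (((LinearMap.mul k H).comp (LinearMap.mulRight k a)).compl₂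
    (HopfAlgebra.antipode (R := k))) (Coalgebra.comul h)

/-- Right adjoint action `(ad_r h)(a) = Σ S(h₁) a h₂`. -/
noncomputable def adr (h a : H) : H :=
  TensorProduct.lift ((LinearMap.mul k H).comp ((LinearMap.mulRight k a) ∘ₗ
    (HopfAlgebra.antipode (R := k)))) (Coalgebra.comul h)

/-- Left adjoint action on the dual: `(ad_ℓ φ)(f) = Σ φ₁ f S°(φ₂)`, i.e.
`h ↦ Σ φ(h₁ S(h₃)) f(h₂)`. -/
noncomputable def adld (φ f : Module.Dual k H) : Module.Dual k H :=
  (TensorProduct.lid k k).toLinearMap ∘ₗ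
    TensorProduct.map (φ ∘ₗ LinearMap.mul' k H ∘ₗ
      (HopfAlgebra.antipode (R := k)).lTensor H) f ∘ₗ
    (TensorProduct.assoc k H H H).symm.toLinearMap ∘ₗ
    ((TensorProduct.comm k H H).toLinearMap.lTensor H) ∘ₗ
    ((Coalgebra.comul (R := k) (A := H)).lTensor H) ∘ₗ
    Coalgebra.comul

/-- Right adjoint action on the dual: `(ad_r φ)(f) = Σ S°(φ₁) f φ₂`, i.e.
`h ↦ Σ φ(S(h₁) h₃) f(h₂)`. -/
noncomputable def adrd (φ f : Module.Dual k H) : Module.Dual k H :=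
  (TensorProduct.lid k k).toLinearMap ∘ₗ
    TensorProduct.map (φ ∘ₗ LinearMap.mul' k H ∘ₗ
      (HopfAlgebra.antipode (R := k)).rTensor H) f ∘ₗ
    (TensorProduct.assoc k H H H).symm.toLinearMap ∘ₗ
    ((TensorProduct.comm k H H).toLinearMap.lTensor H) ∘ₗ
    ((Coalgebra.comul (R := k) (A := H)).lTensor H) ∘ₗ
    Coalgebra.comul

/-- A submodule is a subcoalgebra if its image under `comul` lies in `V ⊗ V`. -/
def IsSubcoalgebra (V : Submodule k H) : Prop :=
  ∀ x ∈ V, Coalgebra.comul (R := k) x ∈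
    LinearMap.range (TensorProduct.map V.subtype V.subtype)

/-- A Hopf algebra is pointed if every simple subcoalgebra is one-dimensional. -/
def IsPointedHopf : Prop :=
  ∀ V : Submodule k H, IsSubcoalgebra k H V → V ≠ ⊥ →
    (∀ W : Submodule k H, W ≤ V → IsSubcoalgebra k H W → W = ⊥ ∨ W = V) →
    Module.finrank k ↥V = 1

/-- A coideal: `ε(X) = 0` and `Δ(X) ⊆ X ⊗ H + H ⊗ X`. -/
def IsCoideal (X : Submodule k H) : Prop :=
  (∀ x ∈ X, Coalgebra.counit (R := k) x = 0) ∧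
  (∀ x ∈ X, Coalgebra.comul (R := k) x ∈
    LinearMap.range (TensorProduct.map X.subtype (LinearMap.id (M := H))) ⊔
    LinearMap.range (TensorProduct.map (LinearMap.id (M := H)) X.subtype))

/-- `S` is a Hopf subalgebra of the finite dual `H°` (with its convolution
product; closure under the coproduct is expressed in pairing form). -/
def IsHopfSubalgSet (S : Set (Module.Dual k H)) : Prop :=
  S ⊆ finDual k H ∧ convOne k ∈ S ∧
  (∀ f g, f ∈ S → g ∈ S → f + g ∈ S ∧ conv k f g ∈ S) ∧
  (∀ (c : k), ∀ f ∈ S, c • f ∈ S) ∧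
  (∀ f ∈ S, f ∘ₗ HopfAlgebra.antipode (R := k) ∈ S) ∧
  (∀ f ∈ S, ∃ (n : ℕ) (s t : Fin n → Module.Dual k H),
    (∀ i, s i ∈ S ∧ t i ∈ S) ∧ ∀ x y : H, f (x * y) = ∑ i, s i x * t i y)

end Hopf

section Ext

variable (A : Type) [CommRing A] [HopfAlgebra k A]
variable (H : Type) [Ring H] [HopfAlgebra k H]

/-- The submodule `A⁺H` of `H` (image of the augmentation ideal times `H`). -/
def augHIdeal (ι : A →ₗ[k] H) : Submodule k H :=
  Submodule.span k
    {x : H | ∃ (a : A) (h : H), Coalgebra.counit (R := k) a = 0 ∧ x = ι a * h}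

/-- The subset of the dual of `H` corresponding to `H̄* = (H/A⁺H)*`:
functionals vanishing on `A⁺H`. -/
def hbarStar (ι : A →ₗ[k] H) : Set (Module.Dual k H) :=
  {f | ∀ x ∈ augHIdeal k A H ι, f x = 0}

/-- The tangential component `W(H°)`. -/
def tangential (ι : A →ₗ[k] H) : Set (Module.Dual k H) :=
  {f | f ∈ finDual k H ∧ ∃ n : ℕ, 0 < n ∧ ∀ x ∈ (augHIdeal k A H ι) ^ n, f x = 0}

/-- The augmentation ideal of the commutative Hopf algebra `A`. -/
def augIdeal : Ideal A := RingHom.ker (Bialgebra.counitAlgHom k A)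

/-- The irreducible component `A'` of `A°` containing the counit:
functionals vanishing on a power of the augmentation ideal. -/
def Aprime : Set (Module.Dual k A) :=
  {f | ∃ n : ℕ, 0 < n ∧ ∀ x ∈ (augIdeal k A) ^ n, f x = 0}

/-- The Lie algebra `𝔤` of `G_H`: primitive functionals on `A`. -/
def gLie : Set (Module.Dual k A) :=
  {f | f 1 = 0 ∧ ∀ x y : A, f (x * y) =
    f x * Coalgebra.counit (R := k) y + Coalgebra.counit (R := k) x * f y}

/-- An ideal of `A` is `H̄`-stable if it is stable under the (left) adjoint
action of `H` on `A` (which factors through `H̄`). -/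
def IsHStable (ι : A →ₗ[k] H) (I : Ideal A) : Prop :=
  ∀ (h : H), ∀ a ∈ I, ∃ b ∈ I, ι b = adl k H h (ι a)

/-- `mc` is the `H̄`-core of `m`: the largest `H̄`-stable ideal of `A`
contained in `m`. -/
def IsCore (ι : A →ₗ[k] H) (m mc : Ideal A) : Prop :=
  IsHStable k A H ι mc ∧ mc ≤ m ∧
    ∀ I : Ideal A, IsHStable k A H ι I → I ≤ m → I ≤ mc

/-- The submodule `H·J` of `H`, for an ideal `J` of `A`. -/
def leftMul (ι : A →ₗ[k] H) (J : Ideal A) : Submodule k H :=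
  Submodule.span k {x : H | ∃ (h : H), ∃ a ∈ J, x = h * ι a}

/-- The submodule `J·H` of `H`, for an ideal `J` of `A`. -/
def rightMul (ι : A →ₗ[k] H) (J : Ideal A) : Submodule k H :=
  Submodule.span k {x : H | ∃ (h : H), ∃ a ∈ J, x = ι a * h}

/-- The subcoalgebra `ĝ := (H/H m_g^{(H̄)})*` of `H°`, as a submodule of the dual. -/
def ghat (ι : A →ₗ[k] H) (core : Ideal A → Ideal A) (g : A →ₐ[k] k) :
    Submodule k (Module.Dual k H) :=
  (leftMul k A H ι (core (RingHom.ker g))).dualAnnihilator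

/-- The character component `k̂G_H` of `H°`. -/
def charComp (ι : A →ₗ[k] H) (core : Ideal A → Ideal A) :
    Set (Module.Dual k H) :=
  {f | ∃ s : Finset (A →ₐ[k] k), s.Nonempty ∧
    ∀ x ∈ ⨅ g ∈ s, leftMul k A H ι (core (RingHom.ker g)), f x = 0}

/-- Hypothesis (OrbSemi): all orbit algebras `A/m^{(H̄)}` are semisimple. -/
def OrbSemi (core : Ideal A → Ideal A) : Prop :=
  ∀ m : Ideal A, m.IsMaximal → IsSemisimpleRing (A ⧸ core m)

/-- Restriction of functionals along `ι` : the map `ι° : H° → A°`. -/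
def iotaDual (ι : A →ₗ[k] H) (f : Module.Dual k H) : Module.Dual k A := f ∘ₗ ι

/-- Coextension of functionals along the projection `Π : H → A`:
the map `Π° : A° → H°`. -/
def PiDual (p : H →ₗ[k] A) (α : Module.Dual k A) : Module.Dual k H := α ∘ₗ p

/-- `A ⊆ H` is an affine commutative-by-finite Hopf algebra, where the
inclusion of the commutative normal Hopf subalgebra `A` is recorded by the
injective Hopf algebra map `ι`. -/
structure CommByFinite (ι : A →ₗ[k] H) : Prop where
  ι_inj : Function.Injective ι
  ι_one : ι 1 = 1
  ι_mul : ∀ a b : A, ι (a * b) = ι a * ι b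
  ι_comul : ∀ a : A,
    Coalgebra.comul (R := k) (ι a) = TensorProduct.map ι ι (Coalgebra.comul a)
  ι_counit : ∀ a : A,
    Coalgebra.counit (R := k) (ι a) = Coalgebra.counit (R := k) a
  ι_antipode : ∀ a : A,
    ι (HopfAlgebra.antipode (R := k) a) = HopfAlgebra.antipode (R := k) (ι a)
  affine : ∃ s : Finset A, Algebra.adjoin k (s : Set A) = ⊤
  normal_left : ∀ (h : H) (a : A), adl k H h (ι a) ∈ Set.range ι
  normal_right : ∀ (h : H) (a : A), adr k H h (ι a) ∈ Set.range ι
  finiteOver : ∃ s : Finset H,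
    Submodule.span k {x : H | ∃ (a : A), ∃ y ∈ s, x = ι a * y} = ⊤

/-- The standing hypothesis: `A` is semiprime (reduced) or central in `H`,
or `H` is pointed. -/
def StandingHyp (ι : A →ₗ[k] H) : Prop :=
  IsReduced A ∨ (∀ (a : A) (h : H), ι a * h = h * ι a) ∨ IsPointedHopf k H

/-- `Π : H → A` is the projection of a direct sum decomposition
`H = A ⊕ X` of right `A`-modules. -/
structure IsSplitting (ι : A →ₗ[k] H) (p : H →ₗ[k] A) : Prop where
  left_inv : ∀ a : A, p (ι a) = a
  right_linear : ∀ (h : H) (a : A), p (h * ι a) = p h * a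

/-- Hypothesis (CoSplit) for a given splitting `Π`: the complement
`X = ker Π` is a coideal of `H`. -/
def CoSplit (p : H →ₗ[k] A) : Prop := IsCoideal k H (LinearMap.ker p)

end Ext

section Quot

variable (A : Type) [CommRing A] [HopfAlgebra k A]
variable (H : Type) [Ring H] [HopfAlgebra k H]
variable (Hb : Type) [Ring Hb] [HopfAlgebra k Hb]

/-- `π : H → H̄` realises `H̄` as the quotient Hopf algebra `H/A⁺H`. -/
structure IsHbarQuotient (ι : A →ₗ[k] H) (π : H →ₗ[k] Hb) : Prop where
  π_surj : Function.Surjective π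
  π_one : π 1 = 1
  π_mul : ∀ x y : H, π (x * y) = π x * π y
  π_comul : ∀ x : H,
    Coalgebra.comul (R := k) (π x) = TensorProduct.map π π (Coalgebra.comul x)
  π_counit : ∀ x : H,
    Coalgebra.counit (R := k) (π x) = Coalgebra.counit (R := k) x
  π_antipode : ∀ x : H,
    π (HopfAlgebra.antipode (R := k) x) = HopfAlgebra.antipode (R := k) (π x)
  π_ker : LinearMap.ker π = augHIdeal k A H ι
  findim : FiniteDimensional k Hb

/-- Composition with `π` : the map `π° : H̄* → H°`. -/
def piDual (π : H →ₗ[k] Hb) (β : Module.Dual k Hb) : Module.Dual k H := β ∘ₗ π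

end Quot

end

end Paper


namespace StmtAux

section Conv

variable {k : Type} [Field k] {C H : Type}
  [AddCommGroup C] [Module k C] [Coalgebra k C]
  [Ring H] [Algebra k H]

/-- Convolution product on `Hom(C, H)`. -/
noncomputable def cst (f g : C →ₗ[k] H) : C →ₗ[k] H :=
  mul' k H ∘ₗ TensorProduct.map f g ∘ₗ Coalgebra.comul

/-- Convolution unit. -/
noncomputable def cone : C →ₗ[k] H := Algebra.linearMap k H ∘ₗ Coalgebra.counit

lemma mul'_assoc_maps :
    mul' k H ∘ₗ (mul' k H).rTensor H =
      mul' k H ∘ₗ (mul' k H).lTensor H ∘ₗ (TensorProduct.assoc k H H H).toLinearMap := by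
  apply TensorProduct.ext_threefold
  intro x y z
  simp [mul_assoc]

lemma assoc_nat (f g h : C →ₗ[k] H) :
    TensorProduct.map f (TensorProduct.map g h) ∘ₗ (TensorProduct.assoc k C C C).toLinearMap =
      (TensorProduct.assoc k H H H).toLinearMap ∘ₗ TensorProduct.map (TensorProduct.map f g) h := by
  apply TensorProduct.ext_threefold
  intro x y z
  simp

lemma cst_assoc (f g h : C →ₗ[k] H) : cst (cst f g) h = cst f (cst g h) := by
  have e1 : TensorProduct.map (cst f g) h =
      (mul' k H).rTensor H ∘ₗ TensorProduct.map (TensorProduct.map f g) h ∘ₗ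
        (Coalgebra.comul (R := k) (A := C)).rTensor C := by
    rw [show (cst f g : C →ₗ[k] H) = mul' k H ∘ₗ TensorProduct.map f g ∘ₗ comul from rfl]
    rw [show (h : C →ₗ[k] H) = LinearMap.id ∘ₗ h ∘ₗ LinearMap.id from rfl]
    rw [TensorProduct.map_comp, TensorProduct.map_comp]
    rfl
  have e2 : TensorProduct.map f (cst g h) =
      (mul' k H).lTensor H ∘ₗ TensorProduct.map f (TensorProduct.map g h) ∘ₗ
        (Coalgebra.comul (R := k) (A := C)).lTensor C := by
    rw [show (cst g h : C →ₗ[k] H) = mul' k H ∘ₗ TensorProduct.map g h ∘ₗ comul from rfl]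
    rw [show (f : C →ₗ[k] H) = LinearMap.id ∘ₗ f ∘ₗ LinearMap.id from rfl]
    rw [TensorProduct.map_comp, TensorProduct.map_comp]
    rfl
  have L : cst (cst f g) h =
      mul' k H ∘ₗ ((mul' k H).rTensor H ∘ₗ TensorProduct.map (TensorProduct.map f g) h ∘ₗ
        (Coalgebra.comul (R := k) (A := C)).rTensor C) ∘ₗ Coalgebra.comul := by
    rw [← e1]; rfl
  have R : cst f (cst g h) =
      mul' k H ∘ₗ ((mul' k H).lTensor H ∘ₗ TensorProduct.map f (TensorProduct.map g h) ∘ₗ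
        (Coalgebra.comul (R := k) (A := C)).lTensor C) ∘ₗ Coalgebra.comul := by
    rw [← e2]; rfl
  rw [L, R]
  ext c
  simp only [comp_apply]
  rw [← Coalgebra.coassoc_symm_apply (R := k) c]
  have nat := LinearMap.congr_fun (assoc_nat f g h)
    ((TensorProduct.assoc k C C C).symm ((comul.lTensor C) (comul c)))
  simp only [comp_apply, LinearEquiv.coe_coe] at nat
  rw [LinearEquiv.apply_symm_apply] at nat
  have massoc := LinearMap.congr_fun (mul'_assoc_maps (k := k) (H := H))
    (TensorProduct.map (TensorProduct.map f g) h
      ((TensorProduct.assoc k C C C).symm ((comul.lTensor C) (comul c))))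
  simp only [comp_apply, LinearEquiv.coe_coe] at massoc
  rw [massoc, nat]

lemma cst_one_left (f : C →ₗ[k] H) : cst cone f = f := by
  unfold cst cone
  ext c
  simp only [comp_apply]
  have : TensorProduct.map (Algebra.linearMap k H ∘ₗ counit) f =
      TensorProduct.map (Algebra.linearMap k H) f ∘ₗ
        (counit (R := k) (A := C)).rTensor C := by
    rw [show (f : C →ₗ[k] H) = f ∘ₗ LinearMap.id from rfl, TensorProduct.map_comp]; rfl
  rw [this]
  simp only [comp_apply, Coalgebra.rTensor_counit_comul]
  simp [Algebra.smul_def]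

lemma cst_one_right (f : C →ₗ[k] H) : cst f cone = f := by
  unfold cst cone
  ext c
  simp only [comp_apply]
  have : TensorProduct.map f (Algebra.linearMap k H ∘ₗ counit) =
      TensorProduct.map f (Algebra.linearMap k H) ∘ₗ
        (counit (R := k) (A := C)).lTensor C := by
    rw [show (f : C →ₗ[k] H) = f ∘ₗ LinearMap.id from rfl, TensorProduct.map_comp]; rfl
  rw [this]
  simp only [comp_apply, Coalgebra.lTensor_counit_comul]
  simp [Algebra.smul_def]

end Conv

section Antipode
variable {k H : Type} [Field k] [Ring H] [HopfAlgebra k H]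

local notation "S" => HopfAlgebra.antipode (R := k) (A := H)
local notation "μ" => LinearMap.mul' k H

lemma ttc_mul (u v : H ⊗[k] H) :
    TensorProduct.map μ μ (TensorProduct.tensorTensorTensorComm k H H H H (u ⊗ₜ v)) = u * v := by
  induction u using TensorProduct.induction_on with
  | zero => simp
  | tmul a b =>
    induction v using TensorProduct.induction_on with
    | zero => simp
    | tmul c d => simp [Algebra.TensorProduct.tmul_mul_tmul]
    | add v₁ v₂ h₁ h₂ => simp only [tmul_add, map_add, h₁, h₂, mul_add]
  | add u₁ u₂ h₁ h₂ => simp only [add_tmul, map_add, h₁, h₂, add_mul]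

lemma comul_D (x y : H) :
    Coalgebra.comul (R := k) (A := H ⊗[k] H) (x ⊗ₜ y) =
      TensorProduct.tensorTensorTensorComm k H H H H
        (Coalgebra.comul (R := k) x ⊗ₜ Coalgebra.comul (R := k) y) := rfl

lemma counit_D (x y : H) :
    Coalgebra.counit (R := k) (A := H ⊗[k] H) (x ⊗ₜ y) =
      Coalgebra.counit (R := k) x * Coalgebra.counit (R := k) y := by
  simp [mul_comm]

/-- `S ∘ μ` is a left convolution inverse of `μ`. -/
lemma t1 : cst (k := k) (C := H ⊗[k] H) (H := H) (S ∘ₗ μ) μ = cone := by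
  apply TensorProduct.ext'
  intro x y
  have hmap : TensorProduct.map (S ∘ₗ μ) μ =
      LinearMap.rTensor H S ∘ₗ TensorProduct.map μ μ := by
    rw [show (μ : H ⊗[k] H →ₗ[k] H) = LinearMap.id ∘ₗ μ from rfl, TensorProduct.map_comp]; rfl
  unfold cst cone
  simp only [comp_apply, comul_D, hmap, ttc_mul, ← Bialgebra.comul_mul]
  rw [HopfAlgebra.mul_antipode_rTensor_comul_apply, Bialgebra.counit_mul]
  simp [counit_D, Algebra.linearMap_apply]
  exact Algebra.commutes _ _

noncomputable def mop : H ⊗[k] H →ₗ[k] H :=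
  μ ∘ₗ TensorProduct.map S S ∘ₗ (TensorProduct.comm k H H).toLinearMap

lemma mop_tmul (x y : H) : mop (x ⊗ₜ[k] y) = S y * S x := rfl

/-- `K ((a⊗b)⊗z) = a * z * S b`. -/
noncomputable def K : (H ⊗[k] H) ⊗[k] H →ₗ[k] H :=
  μ ∘ₗ TensorProduct.map μ S ∘ₗ (TensorProduct.assoc k H H H).symm.toLinearMap ∘ₗ
    ((TensorProduct.comm k H H).toLinearMap.lTensor H) ∘ₗ
    (TensorProduct.assoc k H H H).toLinearMap

lemma K_tmul (a b z : H) : K ((a ⊗ₜ[k] b) ⊗ₜ z) = (a * z) * S b := rfl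

lemma claimB (u v : H ⊗[k] H) :
    μ (TensorProduct.map μ mop (TensorProduct.tensorTensorTensorComm k H H H H (u ⊗ₜ v))) =
      K (u ⊗ₜ (μ ((LinearMap.lTensor H S) v))) := by
  induction u using TensorProduct.induction_on with
  | zero => simp
  | tmul a b =>
    induction v using TensorProduct.induction_on with
    | zero => simp
    | tmul c d =>
      simp only [tensorTensorTensorComm_tmul, map_tmul, mul'_apply, mop_tmul, lTensor_tmul,
        K_tmul]
      noncomm_ring
    | add v₁ v₂ h₁ h₂ =>
      simp only [tmul_add, map_add, h₁, h₂]
  | add u₁ u₂ h₁ h₂ =>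
    simp only [add_tmul, map_add, h₁, h₂]

lemma claimC (u : H ⊗[k] H) : K (u ⊗ₜ (1 : H)) = μ ((LinearMap.lTensor H S) u) := by
  induction u using TensorProduct.induction_on with
  | zero => simp
  | tmul a b => simp [K_tmul]
  | add u₁ u₂ h₁ h₂ => simp only [add_tmul, map_add, h₁, h₂]

/-- `mop` is a right convolution inverse of `μ`. -/
lemma t2 : cst (k := k) (C := H ⊗[k] H) (H := H) μ mop = cone := by
  apply TensorProduct.ext'
  intro x y
  unfold cst cone
  simp only [comp_apply, comul_D, claimB, HopfAlgebra.mul_antipode_lTensor_comul_apply]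
  rw [Algebra.algebraMap_eq_smul_one, tmul_smul, map_smul, claimC,
    HopfAlgebra.mul_antipode_lTensor_comul_apply]
  simp [counit_D, Algebra.linearMap_apply, Algebra.algebraMap_eq_smul_one, smul_smul, mul_comm]

theorem antipode_mul (x y : H) :
    HopfAlgebra.antipode (R := k) (x * y) =
      HopfAlgebra.antipode (R := k) y * HopfAlgebra.antipode (R := k) x := by
  have h : (S ∘ₗ μ : H ⊗[k] H →ₗ[k] H) = mop := by
    calc (S ∘ₗ μ : H ⊗[k] H →ₗ[k] H) = cst (S ∘ₗ μ) cone := (cst_one_right _).symm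
    _ = cst (S ∘ₗ μ) (cst μ mop) := by rw [t2]
    _ = cst (cst (S ∘ₗ μ) μ) mop := (cst_assoc _ _ _).symm
    _ = cst cone mop := by rw [t1]
    _ = mop := cst_one_left _
  simpa [mop_tmul] using LinearMap.congr_fun h (x ⊗ₜ y)

theorem antipode_one : HopfAlgebra.antipode (R := k) (1 : H) = 1 := by
  have h := HopfAlgebra.mul_antipode_rTensor_comul_apply (R := k) (1 : H)
  rw [show Coalgebra.comul (R := k) (1 : H) = (1 : H) ⊗ₜ[k] (1 : H) by
    simpa [Algebra.TensorProduct.one_def] using Bialgebra.comul_one k H] at h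
  simpa using h

end Antipode
end StmtAux


namespace StmtAux

section Main

open Paper

variable {k : Type} [Field k]
variable {A : Type} [CommRing A] [HopfAlgebra k A]
variable {H : Type} [Ring H] [HopfAlgebra k H]
variable {Hb : Type} [Ring Hb] [HopfAlgebra k Hb]

local notation "ε" => Coalgebra.counit (R := k)
local notation "Δ" => Coalgebra.comul (R := k)
local notation "𝒮" => HopfAlgebra.antipode (R := k)

lemma gen_mem (ι : A →ₗ[k] H) (a : A) (h : H) (ha : ε a = 0) :
    ι a * h ∈ augHIdeal k A H ι :=
  Submodule.subset_span ⟨a, h, ha, rfl⟩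

/-- `H A⁺ ⊆ A⁺ H`. -/
lemma key1 {ι : A →ₗ[k] H} (hC : CommByFinite k A H ι) (a : A) (ha : ε a = 0) (h : H) :
    h * ι a ∈ augHIdeal k A H ι := by
  set c : H := ι a with hc
  set B : H ⊗[k] H →ₗ[k] H := TensorProduct.lift (((LinearMap.mul k H).comp
    (LinearMap.mulRight k c)).compl₂ (HopfAlgebra.antipode (R := k))) with hB
  have hBt : ∀ x y : H, B (x ⊗ₜ[k] y) = (x * c) * 𝒮 y := fun _ _ => rfl
  have hadl : ∀ x : H, B (Δ x) = adl k H x c := fun _ => rfl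
  have hεc : ε c = 0 := by rw [hc, hC.ι_counit, ha]
  have hεB : ∀ T : H ⊗[k] H, ε (B T) = 0 := by
    intro T
    induction T using TensorProduct.induction_on with
    | zero => simp
    | tmul x y => rw [hBt, Bialgebra.counit_mul, Bialgebra.counit_mul, hεc,
        mul_zero, zero_mul]
    | add u v hu hv => rw [map_add, map_add, hu, hv, add_zero]
  -- step (i): ∀ x, μ ((B ∘ₗ Δ).rTensor (Δ x)) = x * c
  have hstep : ∀ x : H,
      LinearMap.mul' k H (((B ∘ₗ Coalgebra.comul).rTensor H) (Δ x)) = x * c := by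
    intro x
    have h1 : ((B ∘ₗ Coalgebra.comul).rTensor H) (Δ x)
        = B.rTensor H (((Coalgebra.comul (R := k) (A := H)).rTensor H) (Δ x)) := by
      rw [LinearMap.rTensor_comp]; rfl
    rw [h1, ← Coalgebra.coassoc_symm_apply]
    set inner : H ⊗[k] H →ₗ[k] H :=
      LinearMap.mulLeft k c ∘ₗ LinearMap.mul' k H ∘ₗ (𝒮).rTensor H with hinner
    have hA1 : LinearMap.mul' k H ∘ₗ B.rTensor H =
        LinearMap.mul' k H ∘ₗ inner.lTensor H ∘ₗ (TensorProduct.assoc k H H H).toLinearMap := by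
      apply TensorProduct.ext_threefold
      intro x y z
      simp [hBt, hinner, mul_assoc]
    have hA1' := LinearMap.congr_fun hA1
      ((TensorProduct.assoc k H H H).symm
        (((Coalgebra.comul (R := k) (A := H)).lTensor H) (Δ x)))
    simp only [LinearMap.comp_apply, LinearEquiv.coe_coe, LinearEquiv.apply_symm_apply] at hA1'
    rw [hA1']
    rw [← LinearMap.lTensor_comp_apply]
    have hic : inner ∘ₗ (Coalgebra.comul (R := k) (A := H)) =
        LinearMap.mulLeft k c ∘ₗ Algebra.linearMap k H ∘ₗ Coalgebra.counit := by
      ext y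
      simp [hinner, HopfAlgebra.mul_antipode_rTensor_comul_apply]
    rw [hic]
    have h2 : (LinearMap.mulLeft k c ∘ₗ Algebra.linearMap k H ∘ₗ
        (Coalgebra.counit (R := k) (A := H))).lTensor H (Δ x) =
        (LinearMap.mulLeft k c ∘ₗ Algebra.linearMap k H).lTensor H
          (((Coalgebra.counit (R := k) (A := H)).lTensor H) (Δ x)) := by
      rw [← LinearMap.lTensor_comp_apply]; rfl
    rw [h2, Coalgebra.lTensor_counit_comul]
    simp
  -- step (ii)
  have hmem : ∀ T : H ⊗[k] H,
      LinearMap.mul' k H (((B ∘ₗ Coalgebra.comul).rTensor H) T) ∈ augHIdeal k A H ι := by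
    intro T
    induction T using TensorProduct.induction_on with
    | zero => simpa using Submodule.zero_mem _
    | tmul x y =>
      obtain ⟨b, hb⟩ := hC.normal_left x a
      have hεb : ε b = 0 := by
        rw [← hC.ι_counit, hb, ← hadl, hεB]
      have : LinearMap.mul' k H (((B ∘ₗ Coalgebra.comul).rTensor H) (x ⊗ₜ[k] y))
          = ι b * y := by
        rw [LinearMap.rTensor_tmul, LinearMap.mul'_apply, LinearMap.comp_apply, hadl, ← hb]
      rw [this]
      exact gen_mem ι b y hεb
    | add u v hu hv => rw [map_add, map_add]; exact Submodule.add_mem _ hu hv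
  have := hmem (Δ h)
  rwa [hstep h] at this

/-- The span of `H A⁺`. -/
def augHIdeal' (ι : A →ₗ[k] H) : Submodule k H :=
  Submodule.span k {x : H | ∃ (h : H) (b : A), Coalgebra.counit (R := k) b = 0 ∧ x = h * ι b}

/-- `A⁺ H ⊆ span(H A⁺)`. -/
lemma key2 {ι : A →ₗ[k] H} (hC : CommByFinite k A H ι) (a : A) (ha : ε a = 0) (h : H) :
    ι a * h ∈ augHIdeal' ι := by
  set c : H := ι a with hc
  set B : H ⊗[k] H →ₗ[k] H := TensorProduct.lift ((LinearMap.mul k H).comp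
    ((LinearMap.mulRight k c) ∘ₗ (HopfAlgebra.antipode (R := k)))) with hB
  have hBt : ∀ x y : H, B (x ⊗ₜ[k] y) = (𝒮 x * c) * y := fun _ _ => rfl
  have hadr : ∀ x : H, B (Δ x) = adr k H x c := fun _ => rfl
  have hεc : ε c = 0 := by rw [hc, hC.ι_counit, ha]
  have hεB : ∀ T : H ⊗[k] H, ε (B T) = 0 := by
    intro T
    induction T using TensorProduct.induction_on with
    | zero => simp
    | tmul x y => rw [hBt, Bialgebra.counit_mul, Bialgebra.counit_mul, hεc,
        mul_zero, zero_mul]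
    | add u v hu hv => rw [map_add, map_add, hu, hv, add_zero]
  -- step (i'): μ ((B ∘ₗ Δ).lTensor (Δ x)) = c * x
  have hstep : ∀ x : H,
      LinearMap.mul' k H (((B ∘ₗ Coalgebra.comul).lTensor H) (Δ x)) = c * x := by
    intro x
    have h1 : ((B ∘ₗ Coalgebra.comul).lTensor H) (Δ x)
        = B.lTensor H (((Coalgebra.comul (R := k) (A := H)).lTensor H) (Δ x)) := by
      rw [LinearMap.lTensor_comp]; rfl
    rw [h1, ← Coalgebra.coassoc_apply]
    have hA1 : LinearMap.mul' k H ∘ₗ B.lTensor H ∘ₗ (TensorProduct.assoc k H H H).toLinearMap =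
        LinearMap.mul' k H ∘ₗ TensorProduct.map
          (LinearMap.mul' k H ∘ₗ (𝒮).lTensor H) (LinearMap.mulLeft k c) := by
      apply TensorProduct.ext_threefold
      intro x y z
      simp [hBt, mul_assoc]
    have hA1' := LinearMap.congr_fun hA1
      (((Coalgebra.comul (R := k) (A := H)).rTensor H) (Δ x))
    simp only [LinearMap.comp_apply, LinearEquiv.coe_coe] at hA1'
    rw [hA1']
    have h2 : ∀ t : H ⊗[k] H,
        TensorProduct.map (LinearMap.mul' k H ∘ₗ (𝒮).lTensor H) (LinearMap.mulLeft k c)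
          (((Coalgebra.comul (R := k) (A := H)).rTensor H) t) =
        TensorProduct.map ((LinearMap.mul' k H ∘ₗ (𝒮).lTensor H) ∘ₗ Coalgebra.comul)
          (LinearMap.mulLeft k c) t := by
      intro t
      induction t using TensorProduct.induction_on with
      | zero => simp
      | tmul p q => rfl
      | add u v hu hv => rw [map_add, map_add, hu, hv, map_add]
    rw [h2]
    have h3 : ((LinearMap.mul' k H ∘ₗ (𝒮).lTensor H) ∘ₗ (Coalgebra.comul (R := k) (A := H)))
        = Algebra.linearMap k H ∘ₗ Coalgebra.counit := by
      rw [LinearMap.comp_assoc]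
      exact HopfAlgebra.mul_antipode_lTensor_comul
    rw [h3]
    have hA2 : ∀ u : H ⊗[k] H,
        LinearMap.mul' k H (TensorProduct.map (Algebra.linearMap k H ∘ₗ Coalgebra.counit)
          (LinearMap.mulLeft k c) u) =
        LinearMap.mulLeft k c ((TensorProduct.lid k H)
          (((Coalgebra.counit (R := k) (A := H)).rTensor H) u)) := by
      intro u
      induction u using TensorProduct.induction_on with
      | zero => simp
      | tmul p q =>
        simp only [TensorProduct.map_tmul, LinearMap.mul'_apply, LinearMap.comp_apply,
          LinearMap.rTensor_tmul, TensorProduct.lid_tmul, LinearMap.mulLeft_apply,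
          Algebra.linearMap_apply, Algebra.smul_def]
        rw [← mul_assoc, ← mul_assoc, Algebra.commutes]
      | add u v hu hv => rw [map_add, map_add, hu, hv, map_add, map_add, map_add]
    rw [hA2, Coalgebra.rTensor_counit_comul]
    simp
  -- step (ii')
  have hmem : ∀ T : H ⊗[k] H,
      LinearMap.mul' k H (((B ∘ₗ Coalgebra.comul).lTensor H) T) ∈ augHIdeal' ι := by
    intro T
    induction T using TensorProduct.induction_on with
    | zero => simpa using Submodule.zero_mem _
    | tmul x y =>
      obtain ⟨b, hb⟩ := hC.normal_right y a
      have hεb : ε b = 0 := by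
        rw [← hC.ι_counit, hb, ← hadr, hεB]
      have : LinearMap.mul' k H (((B ∘ₗ Coalgebra.comul).lTensor H) (x ⊗ₜ[k] y))
          = x * ι b := by
        rw [LinearMap.lTensor_tmul, LinearMap.mul'_apply, LinearMap.comp_apply, hadr, ← hb]
      rw [this]
      exact Submodule.subset_span ⟨x, b, hεb, rfl⟩
    | add u v hu hv => rw [map_add, map_add]; exact Submodule.add_mem _ hu hv
  have := hmem (Δ h)
  rwa [hstep h] at this

lemma hbar_char {ι : A →ₗ[k] H} (hC : CommByFinite k A H ι) (f : Module.Dual k H) :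
    f ∈ hbarStar k A H ι ↔ ∀ (a : A) (h : H),
      f (ι a * h) = ε a * f h ∧ f (h * ι a) = ε a * f h := by
  constructor
  · intro hf a h
    have hsplit : ι a = ι (a - ε a • 1) + ε a • (1 : H) := by
      rw [map_sub, map_smul, hC.ι_one]; abel
    have hε' : ε (a - ε a • (1 : A)) = 0 := by
      rw [map_sub, map_smul, Bialgebra.counit_one, smul_eq_mul, mul_one, sub_self]
    constructor
    · have : ι a * h = ι (a - ε a • 1) * h + ε a • h := by
        rw [hsplit, add_mul, smul_mul_assoc, one_mul]
      rw [this, map_add, map_smul, hf _ (gen_mem ι _ h hε'), zero_add, smul_eq_mul]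
    · have : h * ι a = h * ι (a - ε a • 1) + ε a • h := by
        rw [hsplit, mul_add, mul_smul_comm, mul_one]
      rw [this, map_add, map_smul, hf _ (key1 hC _ hε' h), zero_add, smul_eq_mul]
  · intro hf x hx
    have : augHIdeal k A H ι ≤ LinearMap.ker f := by
      rw [augHIdeal, Submodule.span_le]
      rintro _ ⟨a, h, ha, rfl⟩
      simp only [SetLike.mem_coe, LinearMap.mem_ker]
      rw [(hf a h).1, ha, zero_mul]
    exact this hx

variable {Hb : Type} [Ring Hb] [HopfAlgebra k Hb] {ι : A →ₗ[k] H} {π : H →ₗ[k] Hb}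

lemma pi_iota (hC : CommByFinite k A H ι) (hQ : IsHbarQuotient k A H Hb ι π) (a : A) :
    π (ι a) = ε a • (1 : Hb) := by
  have hε' : ε (a - ε a • (1 : A)) = 0 := by
    rw [map_sub, map_smul, Bialgebra.counit_one, smul_eq_mul, mul_one, sub_self]
  have hker : π (ι (a - ε a • 1)) = 0 := by
    have hmem : ι (a - ε a • 1) ∈ augHIdeal k A H ι := by
      simpa using gen_mem ι (a - ε a • 1) 1 hε'
    rw [← hQ.π_ker] at hmem
    exact hmem
  have hsplit : ι a = ι (a - ε a • 1) + ε a • (1 : H) := by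
    rw [map_sub, map_smul, hC.ι_one]; abel
  rw [hsplit, map_add, hker, zero_add, map_smul, hQ.π_one]

lemma fprop (hC : CommByFinite k A H ι) (hQ : IsHbarQuotient k A H Hb ι π)
    (β : Module.Dual k Hb) (a : A) (u : H) :
    piDual k H Hb π β (u * ι a) = ε a * piDual k H Hb π β u ∧
    piDual k H Hb π β (ι a * u) = ε a * piDual k H Hb π β u := by
  constructor
  · show β (π (u * ι a)) = _
    rw [hQ.π_mul, pi_iota hC hQ, mul_smul_comm, mul_one, map_smul, smul_eq_mul]
    rfl
  · show β (π (ι a * u)) = _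
    rw [hQ.π_mul, pi_iota hC hQ, smul_mul_assoc, one_mul, map_smul, smul_eq_mul]
    rfl

lemma mem_range_of_vanish (hQ : IsHbarQuotient k A H Hb ι π) (f : Module.Dual k H)
    (hf : ∀ x ∈ augHIdeal k A H ι, f x = 0) :
    f ∈ Set.range (piDual k H Hb π) := by
  obtain ⟨σ, hσ⟩ := π.exists_rightInverse_of_surjective
    (LinearMap.range_eq_top.2 hQ.π_surj)
  refine ⟨f ∘ₗ σ, ?_⟩
  ext h
  show f (σ (π h)) = f h
  have hker : σ (π h) - h ∈ augHIdeal k A H ι := by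
    rw [← hQ.π_ker, LinearMap.mem_ker, map_sub]
    have := LinearMap.congr_fun hσ (π h)
    simp only [LinearMap.comp_apply, LinearMap.id_apply] at this
    rw [this, sub_self]
  have := hf _ hker
  rw [map_sub, sub_eq_zero] at this
  exact this

section Adjoint

/-- `h ↦ Σ h₁ ⊗ (h₂ ⊗ h₃)`. -/
noncomputable def e2 : H →ₗ[k] H ⊗[k] (H ⊗[k] H) :=
  (Coalgebra.comul (R := k) (A := H)).lTensor H ∘ₗ Coalgebra.comul

/-- `a ↦ Σ a₁ ⊗ (a₂ ⊗ a₃)`. -/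
noncomputable def e2A : A →ₗ[k] A ⊗[k] (A ⊗[k] A) :=
  (Coalgebra.comul (R := k) (A := A)).lTensor A ∘ₗ Coalgebra.comul

noncomputable def iota3 (ι : A →ₗ[k] H) : A ⊗[k] (A ⊗[k] A) →ₗ[k] H ⊗[k] (H ⊗[k] H) :=
  TensorProduct.map ι (TensorProduct.map ι ι)

noncomputable def Lam (φ f : Module.Dual k H) : H ⊗[k] (H ⊗[k] H) →ₗ[k] k :=
  (TensorProduct.lid k k).toLinearMap ∘ₗ
    TensorProduct.map (φ ∘ₗ LinearMap.mul' k H ∘ₗ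
      (HopfAlgebra.antipode (R := k)).lTensor H) f ∘ₗ
    (TensorProduct.assoc k H H H).symm.toLinearMap ∘ₗ
    ((TensorProduct.comm k H H).toLinearMap.lTensor H)

noncomputable def Lar (φ f : Module.Dual k H) : H ⊗[k] (H ⊗[k] H) →ₗ[k] k :=
  (TensorProduct.lid k k).toLinearMap ∘ₗ
    TensorProduct.map (φ ∘ₗ LinearMap.mul' k H ∘ₗ
      (HopfAlgebra.antipode (R := k)).rTensor H) f ∘ₗ
    (TensorProduct.assoc k H H H).symm.toLinearMap ∘ₗ
    ((TensorProduct.comm k H H).toLinearMap.lTensor H)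

lemma adld_eq (φ f : Module.Dual k H) (x : H) :
    adld k H φ f x = Lam (k := k) (H := H) φ f (e2 (k := k) (H := H) x) := rfl

lemma adrd_eq (φ f : Module.Dual k H) (x : H) :
    adrd k H φ f x = Lar (k := k) (H := H) φ f (e2 (k := k) (H := H) x) := rfl

lemma Lam_tmul (φ f : Module.Dual k H) (x y z : H) :
    Lam (k := k) (H := H) φ f (x ⊗ₜ (y ⊗ₜ z)) = φ (x * 𝒮 z) * f y := by
  simp [Lam, smul_eq_mul]

lemma Lar_tmul (φ f : Module.Dual k H) (x y z : H) :
    Lar (k := k) (H := H) φ f (x ⊗ₜ (y ⊗ₜ z)) = φ (𝒮 x * z) * f y := by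
  simp [Lar, smul_eq_mul]

lemma lT_comul_mul (u v : H ⊗[k] H) :
    (Coalgebra.comul (R := k) (A := H)).lTensor H (u * v) =
      (Coalgebra.comul (R := k) (A := H)).lTensor H u *
        (Coalgebra.comul (R := k) (A := H)).lTensor H v := by
  induction u using TensorProduct.induction_on with
  | zero => simp
  | tmul a b =>
    induction v using TensorProduct.induction_on with
    | zero => simp
    | tmul c d =>
      simp only [Algebra.TensorProduct.tmul_mul_tmul, LinearMap.lTensor_tmul,
        Bialgebra.comul_mul]
    | add v₁ v₂ h₁ h₂ => rw [mul_add, map_add, h₁, h₂, map_add, mul_add]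
  | add u₁ u₂ h₁ h₂ => rw [add_mul, map_add, h₁, h₂, map_add, add_mul]

lemma e2_mul (x y : H) :
    e2 (k := k) (H := H) (x * y) = e2 (k := k) (H := H) x * e2 (k := k) (H := H) y := by
  simp only [e2, LinearMap.comp_apply, Bialgebra.comul_mul]
  exact lT_comul_mul _ _

lemma e2_iota {ι : A →ₗ[k] H} (hC : CommByFinite k A H ι) (b : A) :
    e2 (k := k) (H := H) (ι b) = iota3 ι (e2A (k := k) (A := A) b) := by
  have claim : ∀ V : A ⊗[k] A,
      (Coalgebra.comul (R := k) (A := H)).lTensor H (TensorProduct.map ι ι V) =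
        TensorProduct.map ι (TensorProduct.map ι ι)
          ((Coalgebra.comul (R := k) (A := A)).lTensor A V) := by
    intro V
    induction V using TensorProduct.induction_on with
    | zero => simp
    | tmul x y =>
      simp only [TensorProduct.map_tmul, LinearMap.lTensor_tmul, hC.ι_comul]
    | add u v hu hv => rw [map_add, map_add, hu, hv, map_add, map_add]
  simp only [e2, e2A, iota3, LinearMap.comp_apply, hC.ι_comul]
  exact claim _

noncomputable def nul : A ⊗[k] (A ⊗[k] A) →ₗ[k] A :=
  LinearMap.mul' k A ∘ₗ
    ((HopfAlgebra.antipode (R := k) (A := A)) ∘ₗ (TensorProduct.lid k A).toLinearMap ∘ₗ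
      (Coalgebra.counit (R := k) (A := A)).rTensor A).lTensor A

noncomputable def nur : A ⊗[k] (A ⊗[k] A) →ₗ[k] A :=
  LinearMap.mul' k A ∘ₗ (HopfAlgebra.antipode (R := k) (A := A)).rTensor A ∘ₗ
    ((TensorProduct.lid k A).toLinearMap ∘ₗ
      (Coalgebra.counit (R := k) (A := A)).rTensor A).lTensor A

lemma nul_tmul (a b c : A) :
    nul (k := k) (A := A) (a ⊗ₜ (b ⊗ₜ c)) = ε b • (a * 𝒮 c) := by
  simp [nul, mul_smul_comm]

lemma nur_tmul (a b c : A) :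
    nur (k := k) (A := A) (a ⊗ₜ (b ⊗ₜ c)) = ε b • (𝒮 a * c) := by
  simp [nur, smul_mul_assoc]

lemma nul_e2A (b : A) :
    nul (k := k) (A := A) (e2A (k := k) (A := A) b) = algebraMap k A (ε b) := by
  have h1 : ((HopfAlgebra.antipode (R := k) (A := A)) ∘ₗ (TensorProduct.lid k A).toLinearMap ∘ₗ
      (Coalgebra.counit (R := k) (A := A)).rTensor A) ∘ₗ (Coalgebra.comul (R := k) (A := A)) =
      HopfAlgebra.antipode (R := k) := by
    ext y
    simp [Coalgebra.rTensor_counit_comul]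
  simp only [nul, e2A, LinearMap.comp_apply, ← LinearMap.lTensor_comp_apply, h1]
  exact HopfAlgebra.mul_antipode_lTensor_comul_apply b

lemma nur_e2A (b : A) :
    nur (k := k) (A := A) (e2A (k := k) (A := A) b) = algebraMap k A (ε b) := by
  have h1 : ((TensorProduct.lid k A).toLinearMap ∘ₗ
      (Coalgebra.counit (R := k) (A := A)).rTensor A) ∘ₗ (Coalgebra.comul (R := k) (A := A)) =
      LinearMap.id := by
    ext y
    simp [Coalgebra.rTensor_counit_comul]
  simp only [nur, e2A, LinearMap.comp_apply, ← LinearMap.lTensor_comp_apply, h1,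
    LinearMap.lTensor_id, LinearMap.id_apply]
  exact HopfAlgebra.mul_antipode_rTensor_comul_apply b

noncomputable def gl (ι : A →ₗ[k] H) : A →ₗ[k] H ⊗[k] (H ⊗[k] H) :=
  ((TensorProduct.mk k H (H ⊗[k] H)).flip ((1 : H) ⊗ₜ[k] (1 : H))) ∘ₗ ι

noncomputable def gr (ι : A →ₗ[k] H) : A →ₗ[k] H ⊗[k] (H ⊗[k] H) :=
  (TensorProduct.mk k H (H ⊗[k] H)) 1 ∘ₗ (TensorProduct.mk k H H) 1 ∘ₗ ι

lemma gl_apply (ι : A →ₗ[k] H) (d : A) : gl ι d = ι d ⊗ₜ[k] ((1 : H) ⊗ₜ[k] (1 : H)) := rfl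

lemma gr_apply (ι : A →ₗ[k] H) (d : A) : gr ι d = (1 : H) ⊗ₜ[k] ((1 : H) ⊗ₜ[k] ι d) := rfl

end Adjoint

section Claims

variable {ι : A →ₗ[k] H}

lemma claimL (hC : CommByFinite k A H ι) (φ f : Module.Dual k H)
    (hf : ∀ (u : H) (a : A), f (u * ι a) = ε a * f u)
    (U : A ⊗[k] (A ⊗[k] A)) (T : H ⊗[k] (H ⊗[k] H)) :
    Lam (k := k) (H := H) φ f (T * iota3 ι U) =
      Lam (k := k) (H := H) φ f (T * gl ι (nul (k := k) (A := A) U)) := by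
  induction U using TensorProduct.induction_on with
  | zero => simp
  | add U₁ U₂ h₁ h₂ => simp only [map_add, mul_add, h₁, h₂]
  | tmul a Q =>
    induction Q using TensorProduct.induction_on with
    | zero => simp [TensorProduct.tmul_zero]
    | add Q₁ Q₂ h₁ h₂ =>
      simp only [TensorProduct.tmul_add, map_add, mul_add, h₁, h₂]
    | tmul b c =>
      induction T using TensorProduct.induction_on with
      | zero => simp
      | add T₁ T₂ h₁ h₂ => simp only [add_mul, map_add, h₁, h₂]
      | tmul u P =>
        induction P using TensorProduct.induction_on with
        | zero => simp [TensorProduct.zero_tmul, TensorProduct.tmul_zero]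
        | add P₁ P₂ h₁ h₂ =>
          simp only [TensorProduct.tmul_add, add_mul, map_add, h₁, h₂]
        | tmul v w =>
          have hl : (u ⊗ₜ[k] (v ⊗ₜ[k] w)) * iota3 ι (a ⊗ₜ (b ⊗ₜ c)) =
              (u * ι a) ⊗ₜ[k] ((v * ι b) ⊗ₜ[k] (w * ι c)) := by
            simp [iota3, Algebra.TensorProduct.tmul_mul_tmul]
          rw [hl, Lam_tmul, nul_tmul, map_smul, mul_smul_comm, map_smul, gl_apply,
            Algebra.TensorProduct.tmul_mul_tmul, Algebra.TensorProduct.tmul_mul_tmul,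
            mul_one, mul_one, Lam_tmul]
          rw [StmtAux.antipode_mul (k := k) w (ι c), ← hC.ι_antipode c, hf v b,
            hC.ι_mul, smul_eq_mul]
          simp only [mul_assoc]
          ring

lemma claimR (hC : CommByFinite k A H ι) (φ f : Module.Dual k H)
    (hf : ∀ (u : H) (a : A), f (ι a * u) = ε a * f u)
    (U : A ⊗[k] (A ⊗[k] A)) (T : H ⊗[k] (H ⊗[k] H)) :
    Lar (k := k) (H := H) φ f (iota3 ι U * T) =
      Lar (k := k) (H := H) φ f (gr ι (nur (k := k) (A := A) U) * T) := by
  induction U using TensorProduct.induction_on with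
  | zero => simp
  | add U₁ U₂ h₁ h₂ => simp only [map_add, add_mul, h₁, h₂]
  | tmul a Q =>
    induction Q using TensorProduct.induction_on with
    | zero => simp [TensorProduct.tmul_zero]
    | add Q₁ Q₂ h₁ h₂ =>
      simp only [TensorProduct.tmul_add, map_add, add_mul, h₁, h₂]
    | tmul b c =>
      induction T using TensorProduct.induction_on with
      | zero => simp
      | add T₁ T₂ h₁ h₂ => simp only [mul_add, map_add, h₁, h₂]
      | tmul u P =>
        induction P using TensorProduct.induction_on with
        | zero => simp [TensorProduct.zero_tmul, TensorProduct.tmul_zero]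
        | add P₁ P₂ h₁ h₂ =>
          simp only [TensorProduct.tmul_add, mul_add, map_add, h₁, h₂]
        | tmul v w =>
          have hl : iota3 ι (a ⊗ₜ (b ⊗ₜ c)) * (u ⊗ₜ[k] (v ⊗ₜ[k] w)) =
              (ι a * u) ⊗ₜ[k] ((ι b * v) ⊗ₜ[k] (ι c * w)) := by
            simp [iota3, Algebra.TensorProduct.tmul_mul_tmul]
          rw [hl, Lar_tmul, nur_tmul, map_smul, smul_mul_assoc, map_smul, gr_apply,
            Algebra.TensorProduct.tmul_mul_tmul, Algebra.TensorProduct.tmul_mul_tmul,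
            one_mul, one_mul, Lar_tmul]
          rw [StmtAux.antipode_mul (k := k) (ι a) u, ← hC.ι_antipode a, hf v b,
            hC.ι_mul, smul_eq_mul]
          simp only [mul_assoc]
          ring

lemma adld_gen (hC : CommByFinite k A H ι) (φ f : Module.Dual k H)
    (hf : ∀ (u : H) (a : A), f (u * ι a) = ε a * f u)
    (b : A) (hb : ε b = 0) (y : H) :
    adld k H φ f (y * ι b) = 0 := by
  rw [adld_eq, e2_mul, e2_iota hC, claimL hC φ f hf, nul_e2A, hb, map_zero, map_zero,
    mul_zero, map_zero]

lemma adrd_gen (hC : CommByFinite k A H ι) (φ f : Module.Dual k H)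
    (hf : ∀ (u : H) (a : A), f (ι a * u) = ε a * f u)
    (b : A) (hb : ε b = 0) (y : H) :
    adrd k H φ f (ι b * y) = 0 := by
  rw [adrd_eq, e2_mul, e2_iota hC, claimR hC φ f hf, nur_e2A, hb, map_zero, map_zero,
    zero_mul, map_zero]

end Claims

end Main

end StmtAux

open Paper in
/-- For an affine commutative-by-finite Hopf algebra `A ⊆ H`
(with `A` semiprime or central, or `H` pointed), the map
`π° : H̄* → H°, β ↦ β ∘ π` is an injective Hopf algebra homomorphism whose image
is `{f ∈ H° : f(A⁺H) = 0} = {f ∈ H° : f(ah) = ε(a)f(h) = f(ha)}`, and this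
image is a normal Hopf subalgebra of `H°`. -/
theorem statement_0
    (k : Type) [Field k] [IsAlgClosed k]
    (A : Type) [CommRing A] [HopfAlgebra k A]
    (H : Type) [Ring H] [HopfAlgebra k H]
    (Hb : Type) [Ring Hb] [HopfAlgebra k Hb]
    (ι : A →ₗ[k] H) (π : H →ₗ[k] Hb)
    (hCbF : CommByFinite k A H ι)
    (hQ : IsHbarQuotient k A H Hb ι π)
    (hyp : StandingHyp k A H ι) :
    -- `π°` is injective
    Function.Injective (piDual k H Hb π) ∧
    -- `π°` is an algebra homomorphism for the convolution products
    (∀ β γ : Module.Dual k Hb,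
      piDual k H Hb π (conv k β γ) = conv k (piDual k H Hb π β) (piDual k H Hb π γ)) ∧
    piDual k H Hb π (convOne k) = convOne k ∧
    -- `π°` is a coalgebra map (in pairing form) commuting with the antipodes,
    -- hence a Hopf algebra homomorphism
    (∀ (β : Module.Dual k Hb) (x y : H),
      piDual k H Hb π β (x * y) = β (π x * π y)) ∧
    (∀ β : Module.Dual k Hb, piDual k H Hb π β 1 = β 1) ∧
    (∀ (β : Module.Dual k Hb) (h : H),
      piDual k H Hb π β (HopfAlgebra.antipode (R := k) h)
        = β (HopfAlgebra.antipode (R := k) (π h))) ∧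
    -- the image of `π°` is `{f ∈ H° : f(A⁺H) = 0}`
    Set.range (piDual k H Hb π) = finDual k H ∩ hbarStar k A H ι ∧
    -- `= {f : f(ah) = ε(a)f(h) = f(ha) for all a ∈ A, h ∈ H}`
    hbarStar k A H ι =
      {f : Module.Dual k H | ∀ (a : A) (h : H),
        f (ι a * h) = Coalgebra.counit (R := k) a * f h ∧
        f (h * ι a) = Coalgebra.counit (R := k) a * f h} ∧
    -- normality: the image is stable under both adjoint actions of `H°`
    (∀ φ ∈ finDual k H, ∀ β : Module.Dual k Hb,
      adld k H φ (piDual k H Hb π β) ∈ Set.range (piDual k H Hb π) ∧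
      adrd k H φ (piDual k H Hb π β) ∈ Set.range (piDual k H Hb π)) := by
  classical
  have hchar : hbarStar k A H ι =
      {f : Module.Dual k H | ∀ (a : A) (h : H),
        f (ι a * h) = Coalgebra.counit (R := k) a * f h ∧
        f (h * ι a) = Coalgebra.counit (R := k) a * f h} := by
    ext f
    simp only [Set.mem_setOf_eq]
    exact StmtAux.hbar_char hCbF f
  refine ⟨?_, ?_, ?_, ?_, ?_, ?_, ?_, hchar, ?_⟩
  · -- injectivity
    intro β γ h
    ext b
    obtain ⟨x, rfl⟩ := hQ.π_surj b
    exact LinearMap.congr_fun h x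
  · -- multiplicative for convolution
    intro β γ
    ext x
    show (TensorProduct.lid k k) (TensorProduct.map β γ (Coalgebra.comul (π x))) =
      (TensorProduct.lid k k) (TensorProduct.map (β ∘ₗ π) (γ ∘ₗ π) (Coalgebra.comul x))
    rw [hQ.π_comul,
      show TensorProduct.map (β ∘ₗ π) (γ ∘ₗ π) =
        TensorProduct.map β γ ∘ₗ TensorProduct.map π π from TensorProduct.map_comp β γ π π,
      LinearMap.comp_apply]
  · -- unital
    ext x
    exact hQ.π_counit x
  · -- coalgebra morphism, pairing form
    intro β x y
    show β (π (x * y)) = β (π x * π y)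
    rw [hQ.π_mul]
  · intro β
    show β (π 1) = β 1
    rw [hQ.π_one]
  · intro β h
    show β (π (HopfAlgebra.antipode (R := k) h)) = β (HopfAlgebra.antipode (R := k) (π h))
    rw [hQ.π_antipode]
  · -- range identification
    ext f
    constructor
    · rintro ⟨β, rfl⟩
      have hvan : ∀ x ∈ augHIdeal k A H ι, piDual k H Hb π β x = 0 := by
        intro x hx
        have hx0 : π x = 0 := by
          rw [← LinearMap.mem_ker, hQ.π_ker]; exact hx
        show β (π x) = 0
        rw [hx0, map_zero]
      constructor
      · -- finite dual
        refine ⟨augHIdeal k A H ι, ?_, ?_, ?_⟩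
        · intro h x hx
          have hx0 : π x = 0 := by rw [← LinearMap.mem_ker, hQ.π_ker]; exact hx
          constructor
          · rw [← hQ.π_ker, LinearMap.mem_ker, hQ.π_mul, hx0, mul_zero]
          · rw [← hQ.π_ker, LinearMap.mem_ker, hQ.π_mul, hx0, zero_mul]
        · intro x hx
          exact hvan x hx
        · have e := π.quotKerEquivOfSurjective hQ.π_surj
          rw [hQ.π_ker] at e
          have := hQ.findim
          exact Module.Finite.equiv e.symm
      · exact hvan
    · rintro ⟨_, hbar⟩
      exact StmtAux.mem_range_of_vanish hQ f hbar
  · -- normality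
    intro φ hφ β
    set f := piDual k H Hb π β with hfdef
    have hfr : ∀ (u : H) (a : A), f (u * ι a) = Coalgebra.counit (R := k) a * f u :=
      fun u a => (StmtAux.fprop hCbF hQ β a u).1
    have hfl : ∀ (u : H) (a : A), f (ι a * u) = Coalgebra.counit (R := k) a * f u :=
      fun u a => (StmtAux.fprop hCbF hQ β a u).2
    constructor
    · apply StmtAux.mem_range_of_vanish hQ
      have hker : StmtAux.augHIdeal' ι ≤ LinearMap.ker (adld k H φ f) := by
        rw [StmtAux.augHIdeal', Submodule.span_le]
        rintro _ ⟨h, b, hb, rfl⟩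
        exact StmtAux.adld_gen hCbF φ f hfr b hb h
      have h2 : augHIdeal k A H ι ≤ LinearMap.ker (adld k H φ f) := by
        rw [augHIdeal, Submodule.span_le]
        rintro _ ⟨a, h, ha, rfl⟩
        exact hker (StmtAux.key2 hCbF a ha h)
      exact fun x hx => h2 hx
    · apply StmtAux.mem_range_of_vanish hQ
      have h2 : augHIdeal k A H ι ≤ LinearMap.ker (adrd k H φ f) := by
        rw [augHIdeal, Submodule.span_le]
        rintro _ ⟨a, h, ha, rfl⟩
        exact StmtAux.adrd_gen hCbF φ f hfl a ha h
      exact fun x hx => h2 hx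
end

section
/- Let A ⊆ H be an affine commutative-by-finite Hopf algebra with A semiprime or central in H, or H pointed, so that H = A ⊕ X as right A-modules, with projection Π : H → A along X. Then: (i) the map Π° : A° → H°, α ↦ α∘Π, is a well-defined injective morphism of right A°-comodules; (ii) the restriction map ι° : H° → A°, f ↦ f∘ι, is a surjective Hopf algebra homomorphism with ι° ∘ Π° = id on A°; (iii) via ι°, H° is a right and a left A°-comodule algebra, and its subalgebra of right coinvariants and its subalgebra of left coinvariants both equal H̄*. -/
open TensorProduct LinearMap Coalgebra

namespace Aux

variable {k : Type} [Field k]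

section Cnv

variable {C : Type} [AddCommGroup C] [Module k C] [Coalgebra k C]
variable {B : Type} [Ring B] [Algebra k B]

/-- Convolution of linear maps from a coalgebra to an algebra. -/
noncomputable def cnv (f g : C →ₗ[k] B) : C →ₗ[k] B :=
  LinearMap.mul' k B ∘ₗ TensorProduct.map f g ∘ₗ Coalgebra.comul

lemma cnv_repr (f g : C →ₗ[k] B) {c : C} {τ : Type*} (r : Coalgebra.Repr k c τ) :
    cnv f g c = ∑ i ∈ r.index, f (r.left i) * g (r.right i) := by
  simp only [cnv, LinearMap.comp_apply, ← r.eq, map_sum, TensorProduct.map_tmul,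
    LinearMap.mul'_apply]

/-- The convolution unit. -/
noncomputable def cnvOne : C →ₗ[k] B :=
  Algebra.linearMap k B ∘ₗ Coalgebra.counit

lemma cnv_one_left (f : C →ₗ[k] B) : cnv cnvOne f = f := by
  ext c
  set r := ℛ k c with hr
  rw [cnv_repr _ _ r]
  have h2 := Coalgebra.sum_counit_tmul_eq (R := k) r
  have h2' := congrArg (TensorProduct.lid k C) h2
  simp only [map_sum, TensorProduct.lid_tmul, one_smul] at h2'
  calc ∑ i ∈ r.index, cnvOne (k := k) (B := B) (r.left i) * f (r.right i)
      = ∑ i ∈ r.index, Coalgebra.counit (R := k) (r.left i) • f (r.right i) := by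
        simp [cnvOne, Algebra.smul_def]
    _ = f c := by simpa [map_sum, map_smul] using congrArg f h2'

lemma cnv_one_right (f : C →ₗ[k] B) : cnv f cnvOne = f := by
  ext c
  set r := ℛ k c with hr
  rw [cnv_repr _ _ r]
  have h2 := Coalgebra.sum_tmul_counit_eq (R := k) r
  have h2' := congrArg (TensorProduct.rid k C) h2
  simp only [map_sum, TensorProduct.rid_tmul, one_smul] at h2'
  calc ∑ i ∈ r.index, f (r.left i) * cnvOne (k := k) (B := B) (r.right i)
      = ∑ i ∈ r.index, Coalgebra.counit (R := k) (r.right i) • f (r.left i) := by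
        refine Finset.sum_congr rfl fun i _ => ?_
        rw [cnvOne, LinearMap.comp_apply, Algebra.linearMap_apply, ← Algebra.commutes,
          ← Algebra.smul_def]
    _ = f c := by simpa [map_sum, map_smul] using congrArg f h2'

lemma cnv_assoc (f g p : C →ₗ[k] B) : cnv (cnv f g) p = cnv f (cnv g p) := by
  ext c
  set r := ℛ k c with hr
  set rl : ∀ i, Coalgebra.Repr k (r.left i) (C × C) := fun i => ℛ k (r.left i) with hrl
  set rr : ∀ i, Coalgebra.Repr k (r.right i) (C × C) := fun i => ℛ k (r.right i) with hrr
  have key := Coalgebra.sum_tmul_tmul_eq (R := k) r rl rr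
  have key' := congrArg (LinearMap.mul' k B ∘ₗ (LinearMap.mul' k B).lTensor B ∘ₗ
    TensorProduct.map f (TensorProduct.map g p)) key
  simp only [map_sum, LinearMap.comp_apply, TensorProduct.map_tmul,
    LinearMap.lTensor_tmul, LinearMap.mul'_apply] at key'
  rw [cnv_repr (cnv f g) p r, cnv_repr f (cnv g p) r]
  calc ∑ i ∈ r.index, cnv f g (r.left i) * p (r.right i)
      = ∑ i ∈ r.index, ∑ j ∈ (rl i).index,
          f ((rl i).left j) * (g ((rl i).right j) * p (r.right i)) := by
        refine Finset.sum_congr rfl fun i _ => ?_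
        rw [cnv_repr f g (rl i), Finset.sum_mul]
        simp [mul_assoc]
    _ = ∑ i ∈ r.index, ∑ j ∈ (rr i).index,
          f (r.left i) * (g ((rr i).left j) * p ((rr i).right j)) := key'
    _ = ∑ i ∈ r.index, f (r.left i) * cnv g p (r.right i) := by
        refine Finset.sum_congr rfl fun i _ => ?_
        rw [cnv_repr g p (rr i), Finset.mul_sum]

lemma cnv_cancel {f m g : C →ₗ[k] B} (h1 : cnv f m = cnvOne) (h2 : cnv m g = cnvOne) :
    f = g := by
  have := cnv_assoc f m g
  rw [h1, h2, cnv_one_left, cnv_one_right] at this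
  exact this.symm

end Cnv


variable {H : Type} [Ring H] [HopfAlgebra k H]

local notation "S" => HopfAlgebra.antipode (R := k) (A := H)

lemma antipode_one : S 1 = 1 := by
  have := HopfAlgebra.mul_antipode_rTensor_comul_apply (R := k) (A := H) 1
  simpa [Algebra.TensorProduct.one_def] using this

lemma counit_antipode (h : H) :
    Coalgebra.counit (R := k) (S h) = Coalgebra.counit (R := k) h := by
  set r := ℛ k h with hr
  have h1 := HopfAlgebra.sum_antipode_mul_eq_algebraMap_counit (R := k) r
  have h1' := congrArg (Coalgebra.counit (R := k)) h1
  simp only [map_sum, Bialgebra.counit_mul, Bialgebra.counit_algebraMap] at h1'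
  have h2 := Coalgebra.sum_tmul_counit_eq (R := k) r
  have h2' := congrArg (TensorProduct.rid k H) h2
  simp only [map_sum, TensorProduct.rid_tmul, one_smul] at h2'
  calc Coalgebra.counit (R := k) (S h)
      = Coalgebra.counit (R := k) (S (∑ i ∈ r.index,
          Coalgebra.counit (R := k) (r.right i) • r.left i)) := by rw [h2']
    _ = ∑ i ∈ r.index, Coalgebra.counit (R := k) (S (r.left i)) *
          Coalgebra.counit (R := k) (r.right i) := by
        simp [map_sum, map_smul, smul_eq_mul, mul_comm]
    _ = Coalgebra.counit (R := k) h := h1'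

lemma comul_tmul_repr (a b : H) {τ₁ τ₂ : Type*} (ra : Coalgebra.Repr k a τ₁)
    (rb : Coalgebra.Repr k b τ₂) :
    Coalgebra.comul (R := k) (a ⊗ₜ[k] b) =
      ∑ i ∈ ra.index, ∑ j ∈ rb.index,
        (ra.left i ⊗ₜ[k] rb.left j) ⊗ₜ[k] (ra.right i ⊗ₜ[k] rb.right j) := by
  rw [TensorProduct.comul_tmul, ← ra.eq, ← rb.eq]
  rw [TensorProduct.sum_tmul]
  rw [map_sum]
  refine Finset.sum_congr rfl fun i _ => ?_
  rw [TensorProduct.tmul_sum, map_sum]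
  refine Finset.sum_congr rfl fun j _ => ?_
  simp [TensorProduct.tensorTensorTensorComm]

lemma counit_tmul (a b : H) :
    Coalgebra.counit (R := k) (a ⊗ₜ[k] b)
      = Coalgebra.counit (R := k) a * Coalgebra.counit (R := k) b := by
  rw [TensorProduct.counit_tmul, smul_eq_mul, mul_comm]

/-- A representation of `comul (a*b)` from representations of `a` and `b`. -/
noncomputable def mulRepr (a b : H) {τ₁ τ₂ : Type*} (ra : Coalgebra.Repr k a τ₁)
    (rb : Coalgebra.Repr k b τ₂) :
    Coalgebra.Repr k (a * b) (τ₁ × τ₂) where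
  index := ra.index ×ˢ rb.index
  left := fun p => ra.left p.1 * rb.left p.2
  right := fun p => ra.right p.1 * rb.right p.2
  eq := by
    rw [Bialgebra.comul_mul, ← ra.eq, ← rb.eq, Finset.sum_mul_sum]
    rw [Finset.sum_product]
    exact Finset.sum_congr rfl fun i _ => Finset.sum_congr rfl fun j _ => by
      rw [Algebra.TensorProduct.tmul_mul_tmul]

namespace AntipodeMul

noncomputable def F : H ⊗[k] H →ₗ[k] H := S ∘ₗ LinearMap.mul' k H
noncomputable def M : H ⊗[k] H →ₗ[k] H := LinearMap.mul' k H
noncomputable def G : H ⊗[k] H →ₗ[k] H :=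
  LinearMap.mul' k H ∘ₗ TensorProduct.map S S ∘ₗ (TensorProduct.comm k H H).toLinearMap

lemma cnv_tmul (f g : H ⊗[k] H →ₗ[k] H) (a b : H)
    {τ₁ τ₂ : Type*} (ra : Coalgebra.Repr k a τ₁) (rb : Coalgebra.Repr k b τ₂) :
    cnv f g (a ⊗ₜ[k] b) = ∑ i ∈ ra.index, ∑ j ∈ rb.index,
      f (ra.left i ⊗ₜ[k] rb.left j) * g (ra.right i ⊗ₜ[k] rb.right j) := by
  rw [cnv, LinearMap.comp_apply, LinearMap.comp_apply, comul_tmul_repr a b ra rb]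
  simp [map_sum]

lemma claim1 : cnv (F (k := k) (H := H)) M = cnvOne := by
  apply TensorProduct.ext'
  intro a b
  set ra := ℛ k a; set rb := ℛ k b
  rw [cnv_tmul _ _ a b ra rb]
  have key := HopfAlgebra.sum_antipode_mul_eq_algebraMap_counit (R := k) (mulRepr a b ra rb)
  calc ∑ i ∈ ra.index, ∑ j ∈ rb.index,
        F (ra.left i ⊗ₜ[k] rb.left j) * M (ra.right i ⊗ₜ[k] rb.right j)
      = algebraMap k H (Coalgebra.counit (R := k) (a * b)) := by
        rw [← key]
        simp only [mulRepr, Finset.sum_product]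
        simp [F, M]
    _ = cnvOne (k := k) (a ⊗ₜ[k] b) := by
        rw [cnvOne, LinearMap.comp_apply, Algebra.linearMap_apply, counit_tmul,
          Bialgebra.counit_mul]

lemma claim2 : cnv (M (k := k) (H := H)) G = cnvOne := by
  apply TensorProduct.ext'
  intro a b
  set ra := ℛ k a; set rb := ℛ k b
  rw [cnv_tmul _ _ a b ra rb]
  calc ∑ i ∈ ra.index, ∑ j ∈ rb.index,
        M (ra.left i ⊗ₜ[k] rb.left j) * G (ra.right i ⊗ₜ[k] rb.right j)
      = ∑ i ∈ ra.index, ra.left i *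
          ((∑ j ∈ rb.index, rb.left j * S (rb.right j)) * S (ra.right i)) := by
        refine Finset.sum_congr rfl fun i _ => ?_
        rw [Finset.sum_mul, Finset.mul_sum]
        refine Finset.sum_congr rfl fun j _ => ?_
        simp only [M, G, LinearMap.comp_apply, LinearEquiv.coe_coe, TensorProduct.comm_tmul,
          TensorProduct.map_tmul, LinearMap.mul'_apply]
        rw [mul_assoc, ← mul_assoc (rb.left j)]
    _ = ∑ i ∈ ra.index, ra.left i * (algebraMap k H (Coalgebra.counit (R := k) b)
          * S (ra.right i)) := by
        rw [HopfAlgebra.sum_mul_antipode_eq_algebraMap_counit (R := k) rb]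
    _ = Coalgebra.counit (R := k) b • ∑ i ∈ ra.index, ra.left i * S (ra.right i) := by
        rw [Finset.smul_sum]
        refine Finset.sum_congr rfl fun i _ => ?_
        rw [← Algebra.smul_def, mul_smul_comm]
    _ = cnvOne (k := k) (a ⊗ₜ[k] b) := by
        rw [HopfAlgebra.sum_mul_antipode_eq_algebraMap_counit (R := k) ra, cnvOne, LinearMap.comp_apply,
          Algebra.linearMap_apply, counit_tmul]
        rw [Algebra.smul_def, ← map_mul, mul_comm]

set_option maxHeartbeats 2000000 in
lemma antipode_mul' (a b : H) : S (a * b) = S b * S a := by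
  have hFG : F (k := k) (H := H) = G := cnv_cancel claim1 claim2
  have := LinearMap.congr_fun hFG (a ⊗ₜ[k] b)
  simp only [F, G, LinearMap.comp_apply, LinearEquiv.coe_coe, TensorProduct.comm_tmul,
    TensorProduct.map_tmul, LinearMap.mul'_apply] at this
  exact this

end AntipodeMul


section Sums
variable {C : Type} [AddCommMonoid C] [Module k C] [Coalgebra k C]

lemma sum_counit_smul_left {c : C} {τ : Type*} (r : Coalgebra.Repr k c τ) :
    ∑ i ∈ r.index, Coalgebra.counit (R := k) (r.right i) • r.left i = c := by
  have h2 := Coalgebra.sum_tmul_counit_eq (R := k) r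
  have h2' := congrArg (TensorProduct.rid k C) h2
  simp only [map_sum, TensorProduct.rid_tmul, one_smul] at h2'
  exact h2'

lemma sum_counit_smul_right {c : C} {τ : Type*} (r : Coalgebra.Repr k c τ) :
    ∑ i ∈ r.index, Coalgebra.counit (R := k) (r.left i) • r.right i = c := by
  have h2 := Coalgebra.sum_counit_tmul_eq (R := k) r
  have h2' := congrArg (TensorProduct.lid k C) h2
  simp only [map_sum, TensorProduct.lid_tmul, one_smul] at h2'
  exact h2'

lemma sum_counit_mul_counit {c : C} {τ : Type*} (r : Coalgebra.Repr k c τ) :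
    ∑ i ∈ r.index, Coalgebra.counit (R := k) (r.left i) *
      Coalgebra.counit (R := k) (r.right i) = Coalgebra.counit (R := k) c := by
  have := congrArg (Coalgebra.counit (R := k)) (sum_counit_smul_left r)
  simpa [map_sum, smul_eq_mul, mul_comm] using this

end Sums
end Aux


section Aux2

open Paper Aux

variable {k : Type} [Field k] {H : Type} [Ring H] [HopfAlgebra k H]

local notation "S" => HopfAlgebra.antipode (R := k) (A := H)

lemma adr_repr (h x : H) {τ : Type*} (r : Coalgebra.Repr k h τ) :
    Paper.adr k H h x = ∑ i ∈ r.index, S (r.left i) * x * r.right i := by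
  rw [Paper.adr, ← r.eq, map_sum]
  simp [TensorProduct.lift.tmul, mul_assoc]

lemma adl_repr (h x : H) {τ : Type*} (r : Coalgebra.Repr k h τ) :
    Paper.adl k H h x = ∑ i ∈ r.index, r.left i * x * S (r.right i) := by
  rw [Paper.adl, ← r.eq, map_sum]
  simp [TensorProduct.lift.tmul, mul_assoc]

lemma adr_add (h x y : H) :
    Paper.adr k H h (x + y) = Paper.adr k H h x + Paper.adr k H h y := by
  rw [adr_repr h x (ℛ k h), adr_repr h y (ℛ k h), adr_repr h (x + y) (ℛ k h),
    ← Finset.sum_add_distrib]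
  exact Finset.sum_congr rfl fun i _ => by rw [mul_add, add_mul]

lemma adr_smul (h : H) (c : k) (x : H) :
    Paper.adr k H h (c • x) = c • Paper.adr k H h x := by
  rw [adr_repr h x (ℛ k h), adr_repr h (c • x) (ℛ k h), Finset.smul_sum]
  exact Finset.sum_congr rfl fun i _ => by rw [mul_smul_comm, smul_mul_assoc]

noncomputable def adrL (h : H) : H →ₗ[k] H where
  toFun x := Paper.adr k H h x
  map_add' x y := adr_add h x y
  map_smul' c x := adr_smul h c x

@[simp] lemma adrL_apply (h x : H) : adrL (k := k) h x = Paper.adr k H h x := rfl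

noncomputable def adrR (x : H) : H →ₗ[k] H :=
  TensorProduct.lift ((LinearMap.mul k H).comp ((LinearMap.mulRight k x) ∘ₗ
    (HopfAlgebra.antipode (R := k)))) ∘ₗ Coalgebra.comul

@[simp] lemma adrR_apply (x h : H) : adrR (k := k) x h = Paper.adr k H h x := rfl

lemma adr_one (x : H) : Paper.adr k H 1 x = x := by
  rw [Paper.adr, Bialgebra.comul_one, Algebra.TensorProduct.one_def]
  simp [TensorProduct.lift.tmul, antipode_one]

lemma counit_adr (h x : H) :
    Coalgebra.counit (R := k) (Paper.adr k H h x)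
      = Coalgebra.counit (R := k) h * Coalgebra.counit (R := k) x := by
  set r := ℛ k h
  rw [adr_repr h x r, map_sum]
  calc ∑ i ∈ r.index, Coalgebra.counit (R := k) (S (r.left i) * x * r.right i)
      = Coalgebra.counit (R := k) x * ∑ i ∈ r.index, Coalgebra.counit (R := k) (r.left i) *
          Coalgebra.counit (R := k) (r.right i) := by
        rw [Finset.mul_sum]
        exact Finset.sum_congr rfl fun i _ => by
          rw [Bialgebra.counit_mul, Bialgebra.counit_mul, counit_antipode]; ring
    _ = _ := by rw [sum_counit_mul_counit r]; ring

lemma counit_adl (h x : H) :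
    Coalgebra.counit (R := k) (Paper.adl k H h x)
      = Coalgebra.counit (R := k) h * Coalgebra.counit (R := k) x := by
  set r := ℛ k h
  rw [adl_repr h x r, map_sum]
  calc ∑ i ∈ r.index, Coalgebra.counit (R := k) (r.left i * x * S (r.right i))
      = Coalgebra.counit (R := k) x * ∑ i ∈ r.index, Coalgebra.counit (R := k) (r.left i) *
          Coalgebra.counit (R := k) (r.right i) := by
        rw [Finset.mul_sum]
        exact Finset.sum_congr rfl fun i _ => by
          rw [Bialgebra.counit_mul, Bialgebra.counit_mul, counit_antipode]; ring
    _ = _ := by rw [sum_counit_mul_counit r]; ring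

lemma adr_adr (h h' x : H) :
    Paper.adr k H h' (Paper.adr k H h x) = Paper.adr k H (h * h') x := by
  set r := ℛ k h
  set r' := ℛ k h'
  rw [adr_repr h x r, adr_repr h' _ r', adr_repr (h * h') x (mulRepr h h' r r')]
  simp only [mulRepr, Finset.sum_product]
  rw [Finset.sum_comm]
  refine Finset.sum_congr rfl fun j _ => ?_
  rw [Finset.mul_sum, Finset.sum_mul]
  refine Finset.sum_congr rfl fun i _ => ?_
  rw [AntipodeMul.antipode_mul']
  simp [mul_assoc]


lemma mul_eq_sum_adl (x h : H) {τ : Type*} (r : Coalgebra.Repr k h τ) :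
    h * x = ∑ i ∈ r.index, Paper.adl k H (r.left i) x * r.right i := by
  set rl : ∀ i, Coalgebra.Repr k (r.left i) (H × H) := fun i => ℛ k (r.left i) with hrl
  set rr : ∀ i, Coalgebra.Repr k (r.right i) (H × H) := fun i => ℛ k (r.right i) with hrr
  have key := Coalgebra.sum_tmul_tmul_eq (R := k) r rl rr
  have key' := congrArg (LinearMap.mul' k H ∘ₗ (LinearMap.mul' k H).lTensor H ∘ₗ
    TensorProduct.map (LinearMap.mulRight k x)
      (TensorProduct.map (HopfAlgebra.antipode (R := k)) LinearMap.id)) key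
  simp only [map_sum, LinearMap.comp_apply, TensorProduct.map_tmul, LinearMap.lTensor_tmul,
    LinearMap.mul'_apply, LinearMap.mulRight_apply, LinearMap.id_coe, id_eq] at key'
  calc h * x
      = ∑ i ∈ r.index, ∑ j ∈ (rr i).index,
          r.left i * x * (S ((rr i).left j) * (rr i).right j) := by
        rw [eq_comm]
        calc ∑ i ∈ r.index, ∑ j ∈ (rr i).index,
              r.left i * x * (S ((rr i).left j) * (rr i).right j)
            = ∑ i ∈ r.index, Coalgebra.counit (R := k) (r.right i) • (r.left i * x) := by
              refine Finset.sum_congr rfl fun i _ => ?_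
              rw [← Finset.mul_sum, HopfAlgebra.sum_antipode_mul_eq_algebraMap_counit (R := k) (rr i),
                ← Algebra.commutes, ← Algebra.smul_def]
          _ = h * x := by
              rw [show (∑ i ∈ r.index, Coalgebra.counit (R := k) (r.right i) • (r.left i * x))
                  = (∑ i ∈ r.index, Coalgebra.counit (R := k) (r.right i) • r.left i) * x by
                rw [Finset.sum_mul]
                exact Finset.sum_congr rfl fun i _ => (smul_mul_assoc _ _ _).symm]
              rw [sum_counit_smul_left r]
    _ = ∑ i ∈ r.index, ∑ j ∈ (rl i).index,
          (rl i).left j * x * (S ((rl i).right j) * r.right i) := key'.symm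
    _ = ∑ i ∈ r.index, Paper.adl k H (r.left i) x * r.right i := by
        refine Finset.sum_congr rfl fun i _ => ?_
        rw [adl_repr _ _ (rl i), Finset.sum_mul]
        exact Finset.sum_congr rfl fun j _ => by simp only [mul_assoc]

lemma mul_eq_sum_adr (x h : H) {τ : Type*} (r : Coalgebra.Repr k h τ) :
    x * h = ∑ i ∈ r.index, r.left i * Paper.adr k H (r.right i) x := by
  set rl : ∀ i, Coalgebra.Repr k (r.left i) (H × H) := fun i => ℛ k (r.left i) with hrl
  set rr : ∀ i, Coalgebra.Repr k (r.right i) (H × H) := fun i => ℛ k (r.right i) with hrr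
  have key := Coalgebra.sum_tmul_tmul_eq (R := k) r rl rr
  have key' := congrArg (LinearMap.mul' k H ∘ₗ (LinearMap.mul' k H).lTensor H ∘ₗ
    TensorProduct.map LinearMap.id
      (TensorProduct.map ((LinearMap.mulRight k x) ∘ₗ HopfAlgebra.antipode (R := k))
        LinearMap.id)) key
  simp only [map_sum, LinearMap.comp_apply, TensorProduct.map_tmul, LinearMap.lTensor_tmul,
    LinearMap.mul'_apply, LinearMap.mulRight_apply, LinearMap.id_coe, id_eq] at key'
  calc x * h
      = ∑ i ∈ r.index, ∑ j ∈ (rl i).index,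
          (rl i).left j * (S ((rl i).right j) * x * r.right i) := by
        rw [eq_comm]
        calc ∑ i ∈ r.index, ∑ j ∈ (rl i).index,
              (rl i).left j * (S ((rl i).right j) * x * r.right i)
            = ∑ i ∈ r.index, Coalgebra.counit (R := k) (r.left i) • (x * r.right i) := by
              refine Finset.sum_congr rfl fun i _ => ?_
              calc ∑ j ∈ (rl i).index, (rl i).left j * (S ((rl i).right j) * x * r.right i)
                  = (∑ j ∈ (rl i).index, (rl i).left j * S ((rl i).right j)) *
                      (x * r.right i) := by
                    rw [Finset.sum_mul]
                    exact Finset.sum_congr rfl fun j _ => by simp only [mul_assoc]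
                _ = Coalgebra.counit (R := k) (r.left i) • (x * r.right i) := by
                    rw [HopfAlgebra.sum_mul_antipode_eq_algebraMap_counit (R := k) (rl i), ← Algebra.smul_def]
          _ = x * h := by
              rw [show (∑ i ∈ r.index, Coalgebra.counit (R := k) (r.left i) • (x * r.right i))
                  = x * (∑ i ∈ r.index, Coalgebra.counit (R := k) (r.left i) • r.right i) by
                rw [Finset.mul_sum]
                exact Finset.sum_congr rfl fun i _ => (mul_smul_comm _ _ _).symm]
              rw [sum_counit_smul_right r]
    _ = ∑ i ∈ r.index, r.left i * Paper.adr k H (r.right i) x := by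
        rw [key']
        refine Finset.sum_congr rfl fun i _ => ?_
        rw [adr_repr _ _ (rr i), Finset.mul_sum]


section Iota

variable {A : Type} [CommRing A] [HopfAlgebra k A] {ι : A →ₗ[k] H}

/-- Transport a representation along `ι`. -/
noncomputable def iotaRepr (hC : Paper.CommByFinite k A H ι) (c : A)
    {τ : Type*} (rc : Coalgebra.Repr k c τ) : Coalgebra.Repr k (ι c) τ where
  index := rc.index
  left := fun i => ι (rc.left i)
  right := fun i => ι (rc.right i)
  eq := by
    rw [hC.ι_comul, ← rc.eq, map_sum]
    exact Finset.sum_congr rfl fun i _ => by rw [TensorProduct.map_tmul]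

lemma adr_iota (hC : Paper.CommByFinite k A H ι) (c a : A) :
    Paper.adr k H (ι c) (ι a) = Coalgebra.counit (R := k) c • ι a := by
  set rc := ℛ k c
  rw [adr_repr _ _ (iotaRepr hC c rc)]
  calc ∑ i ∈ rc.index, S (ι (rc.left i)) * ι a * ι (rc.right i)
      = ι (∑ i ∈ rc.index, (HopfAlgebra.antipode (R := k) (rc.left i) * rc.right i) * a) := by
        rw [map_sum]
        refine Finset.sum_congr rfl fun i _ => ?_
        rw [← hC.ι_antipode, ← hC.ι_mul, ← hC.ι_mul]
        congr 1
        ring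
    _ = ι (algebraMap k A (Coalgebra.counit (R := k) c) * a) := by
        rw [← Finset.sum_mul, HopfAlgebra.sum_antipode_mul_eq_algebraMap_counit (R := k) rc]
    _ = Coalgebra.counit (R := k) c • ι a := by rw [← Algebra.smul_def, map_smul]

lemma adr_aug_zero (hC : Paper.CommByFinite k A H ι) (a : A) :
    ∀ u ∈ Paper.augHIdeal k A H ι, Paper.adr k H u (ι a) = 0 := by
  intro u hu
  have : ∀ u ∈ Paper.augHIdeal k A H ι, adrR (k := k) (ι a) u = 0 := by
    intro u hu
    induction hu using Submodule.span_induction with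
    | mem x hx =>
        obtain ⟨c, h, hc0, rfl⟩ := hx
        rw [adrR_apply, ← adr_adr, adr_iota hC, hc0, zero_smul]
        exact map_zero (adrL (k := k) h)
    | zero => exact map_zero _
    | add x y _ _ hx hy => rw [map_add, hx, hy, add_zero]
    | smul c x _ hx => rw [map_smul, hx, smul_zero]
  simpa using this u hu

lemma mem_span_sup_aug (hC : Paper.CommByFinite k A H ι) {s : Finset H}
    (hs : Submodule.span k {x : H | ∃ a : A, ∃ y ∈ s, x = ι a * y} = ⊤) (h : H) :
    h ∈ Submodule.span k (↑s : Set H) ⊔ Paper.augHIdeal k A H ι := by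
  have hh : h ∈ Submodule.span k {x : H | ∃ a : A, ∃ y ∈ s, x = ι a * y} := by
    rw [hs]; trivial
  induction hh using Submodule.span_induction with
  | mem x hx =>
      obtain ⟨a, y, hy, rfl⟩ := hx
      have hdec : ι a * y = ι (a - Coalgebra.counit (R := k) a • 1) * y +
          Coalgebra.counit (R := k) a • y := by
        rw [map_sub, map_smul, hC.ι_one, sub_mul, smul_mul_assoc, one_mul, sub_add_cancel]
      rw [hdec]
      refine Submodule.add_mem _ (Submodule.mem_sup_right ?_) (Submodule.mem_sup_left ?_)
      · refine Submodule.subset_span ⟨a - Coalgebra.counit (R := k) a • 1, y, ?_, rfl⟩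
        rw [map_sub, map_smul, Bialgebra.counit_one, smul_eq_mul, mul_one, sub_self]
      · exact Submodule.smul_mem _ _ (Submodule.subset_span hy)
  | zero => exact Submodule.zero_mem _
  | add x y _ _ hx hy => exact Submodule.add_mem _ hx hy
  | smul c x _ hx => exact Submodule.smul_mem _ _ hx

end Iota

section FD

variable {A : Type} [CommRing A] [HopfAlgebra k A]

lemma fd_quot_inf {M₁ M₂ : Submodule k A} (h1 : FiniteDimensional k (A ⧸ M₁))
    (h2 : FiniteDimensional k (A ⧸ M₂)) : FiniteDimensional k (A ⧸ (M₁ ⊓ M₂)) := by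
  set φ : A →ₗ[k] (A ⧸ M₁) × (A ⧸ M₂) := M₁.mkQ.prod M₂.mkQ
  have hker : LinearMap.ker φ = M₁ ⊓ M₂ := by
    rw [LinearMap.ker_prod, Submodule.ker_mkQ, Submodule.ker_mkQ]
  haveI : FiniteDimensional k ((A ⧸ M₁) × (A ⧸ M₂)) := by infer_instance
  have e := φ.quotKerEquivRange
  rw [hker] at e
  exact Module.Finite.equiv e.symm

lemma fd_quot_iInf {X : Type} (s : Finset X) (M : X → Submodule k A)
    (hfd : ∀ x ∈ s, FiniteDimensional k (A ⧸ M x)) :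
    FiniteDimensional k (A ⧸ ⨅ x ∈ s, M x) := by
  classical
  induction s using Finset.induction_on with
  | empty =>
      have : (⨅ x ∈ (∅ : Finset X), M x) = ⊤ := by simp
      rw [this]
      haveI : Subsingleton (A ⧸ (⊤ : Submodule k A)) :=
        Submodule.Quotient.subsingleton_iff.mpr rfl
      infer_instance
  | insert a s' hx ih =>
      have : (⨅ x ∈ insert a s', M x) = M a ⊓ ⨅ x ∈ s', M x := by
        rw [Finset.iInf_insert]
      rw [this]
      exact fd_quot_inf (hfd a (Finset.mem_insert_self a s'))
        (ih fun x hxs => hfd x (Finset.mem_insert_of_mem hxs))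

lemma exists_finset_span_sup {J : Submodule k A} (fd : FiniteDimensional k (A ⧸ J)) :
    ∃ T : Finset A, ∀ a : A, a ∈ Submodule.span k (↑T : Set A) ⊔ J := by
  classical
  obtain ⟨V, hV⟩ := fd.fg_top
  choose g hg using Submodule.Quotient.mk_surjective J
  refine ⟨V.image g, fun a => ?_⟩
  have h1 : Submodule.Quotient.mk a ∈ Submodule.map J.mkQ
      (Submodule.span k (↑(V.image g) : Set A)) := by
    rw [Submodule.map_span, Finset.coe_image, ← Set.image_comp]
    have himg : (⇑J.mkQ ∘ g) '' (↑V : Set (A ⧸ J)) = (↑V : Set (A ⧸ J)) := by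
      have : (⇑J.mkQ ∘ g) '' (↑V : Set (A ⧸ J)) = id '' (↑V : Set (A ⧸ J)) :=
        Set.image_congr fun v _ => by simp only [Function.comp_apply,
          Submodule.mkQ_apply, hg v, id_eq]
      rw [this, Set.image_id]
    rw [himg, hV]
    trivial
  obtain ⟨t, ht, hteq⟩ := h1
  have hdiff : a - t ∈ J := by
    rw [← Submodule.Quotient.eq J]
    exact ((Submodule.mkQ_apply J t) ▸ hteq).symm
  have : a = t + (a - t) := by ring
  rw [this]
  exact Submodule.add_mem _ (Submodule.mem_sup_left ht) (Submodule.mem_sup_right hdiff)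

end FD

section Main

variable {A : Type} [CommRing A] [HopfAlgebra k A] {ι : A →ₗ[k] H}

lemma piDual_mem (hC : Paper.CommByFinite k A H ι) {p : H →ₗ[k] A}
    (hsplit : Paper.IsSplitting k A H ι p) {α : Module.Dual k A}
    (hα : α ∈ Paper.finDual k A) : Paper.PiDual k A H p α ∈ Paper.finDual k H := by
  classical
  obtain ⟨I, hIdeal, hIker, hIfd⟩ := hα
  set N : Submodule k H := I.map ι with hN
  set J : Submodule k A := ⨅ h : H, (N.comap ((adrL (k := k) h) ∘ₗ ι)) with hJ
  have hmemJ : ∀ a : A, (a ∈ J ↔ ∀ h : H, Paper.adr k H h (ι a) ∈ N) := by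
    intro a
    simp only [hJ, Submodule.mem_iInf, Submodule.mem_comap, LinearMap.comp_apply, adrL_apply]
  have hJI : J ≤ I := by
    intro a ha
    have h1 := (hmemJ a).1 ha 1
    rw [adr_one] at h1
    obtain ⟨b, hb, hba⟩ := h1
    rwa [← hC.ι_inj hba]
  have hJstab : ∀ a ∈ J, ∀ h : H, ∃ b ∈ J, ι b = Paper.adr k H h (ι a) := by
    intro a ha h
    obtain ⟨b, hb⟩ := hC.normal_right h a
    refine ⟨b, ?_, hb⟩
    rw [hmemJ]
    intro h'
    rw [hb, adr_adr]
    exact (hmemJ a).1 ha (h * h')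
  set IH : Submodule k H := Submodule.span k {x : H | ∃ h : H, ∃ a ∈ J, x = h * ι a} with hIH
  have hgen : ∀ (h : H), ∀ a ∈ J, h * ι a ∈ IH := fun h a ha =>
    Submodule.subset_span ⟨h, a, ha, rfl⟩
  -- two-sided absorption
  have habsorb : ∀ (g : H), ∀ x ∈ IH, g * x ∈ IH ∧ x * g ∈ IH := by
    intro g x hx
    constructor
    · induction hx using Submodule.span_induction with
      | mem y hy =>
          obtain ⟨h, a, ha, rfl⟩ := hy
          rw [← mul_assoc]
          exact hgen (g * h) a ha
      | zero => rw [mul_zero]; exact Submodule.zero_mem _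
      | add u v _ _ hu hv => rw [mul_add]; exact Submodule.add_mem _ hu hv
      | smul c u _ hu => rw [mul_smul_comm]; exact Submodule.smul_mem _ _ hu
    · induction hx using Submodule.span_induction with
      | mem y hy =>
          obtain ⟨h, a, ha, rfl⟩ := hy
          rw [mul_assoc, mul_eq_sum_adr (ι a) g (ℛ k g), Finset.mul_sum]
          refine Submodule.sum_mem _ fun i _ => ?_
          obtain ⟨b, hbJ, hbeq⟩ := hJstab a ha ((ℛ k g).right i)
          rw [← hbeq, ← mul_assoc]
          exact hgen _ b hbJ
      | zero => rw [zero_mul]; exact Submodule.zero_mem _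
      | add u v _ _ hu hv => rw [add_mul]; exact Submodule.add_mem _ hu hv
      | smul c u _ hu => rw [smul_mul_assoc]; exact Submodule.smul_mem _ _ hu
  -- contained in the kernel
  have hker : ∀ x ∈ IH, Paper.PiDual k A H p α x = 0 := by
    intro x hx
    induction hx using Submodule.span_induction with
    | mem y hy =>
        obtain ⟨h, a, ha, rfl⟩ := hy
        have : Paper.PiDual k A H p α (h * ι a) = α (p h * a) := by
          rw [Paper.PiDual, LinearMap.comp_apply, hsplit.right_linear]
        rw [this]
        exact hIker ((hIdeal (p h) a (hJI ha)).1)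
    | zero => exact map_zero _
    | add u v _ _ hu hv => rw [map_add, hu, hv, add_zero]
    | smul c u _ hu => rw [map_smul, hu, smul_zero]
  -- finite dimensionality of A/J
  obtain ⟨s, hs⟩ := hC.finiteOver
  have hrange_fd : FiniteDimensional k ↥(LinearMap.range (N.mkQ ∘ₗ ι)) := by
    have hkerNι : LinearMap.ker (N.mkQ ∘ₗ ι) = I := by
      rw [LinearMap.ker_comp, Submodule.ker_mkQ, hN, Submodule.comap_map_eq,
        LinearMap.ker_eq_bot.mpr hC.ι_inj, sup_bot_eq]
    have e := (N.mkQ ∘ₗ ι).quotKerEquivRange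
    rw [hkerNι] at e
    exact Module.Finite.equiv e
  have hJfd : FiniteDimensional k (A ⧸ J) := by
    have hJeq : J = ⨅ y ∈ s, (N.comap ((adrL (k := k) y) ∘ₗ ι)) := by
      refine le_antisymm (le_iInf₂ fun y _ => iInf_le _ y) ?_
      intro a ha
      rw [hmemJ]
      intro h
      have hmem := mem_span_sup_aug hC hs h
      obtain ⟨y', hy', u, hu, rfl⟩ := Submodule.mem_sup.mp hmem
      have hadd : Paper.adr k H (y' + u) (ι a) =
          Paper.adr k H y' (ι a) + Paper.adr k H u (ι a) :=
        map_add (adrR (k := k) (ι a)) y' u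
      rw [hadd, adr_aug_zero hC a u hu, add_zero]
      have hy'' : ∀ z ∈ Submodule.span k (↑s : Set H), Paper.adr k H z (ι a) ∈ N := by
        intro z hz
        induction hz using Submodule.span_induction with
        | mem w hw =>
            have h1 := ha
            rw [Submodule.mem_iInf] at h1
            have h2 := h1 w
            rw [Submodule.mem_iInf] at h2
            simpa using h2 hw
        | zero =>
            rw [show Paper.adr k H 0 (ι a) = 0 from map_zero (adrR (k := k) (ι a))]
            exact Submodule.zero_mem _
        | add u v _ _ hu hv =>
            rw [show Paper.adr k H (u + v) (ι a) = _ from map_add (adrR (k := k) (ι a)) u v]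
            exact Submodule.add_mem _ hu hv
        | smul c u _ hu =>
            rw [show Paper.adr k H (c • u) (ι a) = _ from map_smul (adrR (k := k) (ι a)) c u]
            exact Submodule.smul_mem _ _ hu
      exact hy'' y' hy'
    rw [hJeq]
    refine fd_quot_iInf s _ fun y _ => ?_
    set L : A →ₗ[k] H ⧸ N := N.mkQ ∘ₗ (adrL (k := k) y) ∘ₗ ι with hL
    have hkerL : LinearMap.ker L = N.comap ((adrL (k := k) y) ∘ₗ ι) := by
      rw [hL, LinearMap.ker_comp, Submodule.ker_mkQ]
    have hle : LinearMap.range L ≤ LinearMap.range (N.mkQ ∘ₗ ι) := by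
      rintro _ ⟨a, rfl⟩
      obtain ⟨b, hb⟩ := hC.normal_right y a
      exact ⟨b, by simp [hL, hb]⟩
    haveI := hrange_fd
    haveI : FiniteDimensional k ↥(LinearMap.range L) :=
      Submodule.finiteDimensional_of_le hle
    have e := L.quotKerEquivRange
    rw [hkerL] at e
    exact Module.Finite.equiv e.symm
  -- spanning finite set for A modulo J
  obtain ⟨T, hT⟩ := exists_finset_span_sup hJfd
  -- finite dimensionality of H/IH
  have hJleft : ∀ j ∈ J, ∀ y : H, ι j * y ∈ IH := by
    intro j hj y
    rw [mul_eq_sum_adr (ι j) y (ℛ k y)]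
    refine Submodule.sum_mem _ fun i _ => ?_
    obtain ⟨b, hbJ, hbeq⟩ := hJstab j hj ((ℛ k y).right i)
    rw [← hbeq]
    exact hgen _ b hbJ
  set G : Finset H := (T ×ˢ s).image (fun q => ι q.1 * q.2) with hG
  have hspan : ∀ x : H, x ∈ Submodule.span k (↑G : Set H) ⊔ IH := by
    intro x
    have hx : x ∈ Submodule.span k {x : H | ∃ a : A, ∃ y ∈ s, x = ι a * y} := by
      rw [hs]; trivial
    induction hx using Submodule.span_induction with
    | mem w hw =>
        obtain ⟨a, y, hy, rfl⟩ := hw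
        obtain ⟨t, ht, j, hj, rfl⟩ := Submodule.mem_sup.mp (hT a)
        have htG : ∀ u, u ∈ Submodule.span k (↑T : Set A) →
            ι u * y ∈ Submodule.span k (↑G : Set H) := by
          intro u hu
          induction hu using Submodule.span_induction with
          | mem t' ht' =>
              refine Submodule.subset_span ?_
              simp only [hG, Finset.coe_image, Set.mem_image, Finset.mem_coe,
                Finset.mem_product]
              exact ⟨(t', y), ⟨ht', hy⟩, rfl⟩
          | zero => rw [map_zero, zero_mul]; exact Submodule.zero_mem _
          | add u v _ _ hu hv => rw [map_add, add_mul]; exact Submodule.add_mem _ hu hv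
          | smul c u _ hu =>
              rw [map_smul, smul_mul_assoc]; exact Submodule.smul_mem _ _ hu
        have : ι (t + j) * y = ι t * y + ι j * y := by rw [map_add, add_mul]
        rw [this]
        exact Submodule.add_mem _ (Submodule.mem_sup_left (htG t ht))
          (Submodule.mem_sup_right (hJleft j hj y))
    | zero => exact Submodule.zero_mem _
    | add u v _ _ hu hv => exact Submodule.add_mem _ hu hv
    | smul c u _ hu => exact Submodule.smul_mem _ _ hu
  have hIHfd : FiniteDimensional k (H ⧸ IH) := by
    refine ⟨⟨G.image IH.mkQ, ?_⟩⟩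
    rw [Finset.coe_image]
    refine top_unique ?_
    intro z _
    obtain ⟨x, rfl⟩ := IH.mkQ_surjective z
    obtain ⟨g, hg, w, hw, rfl⟩ := Submodule.mem_sup.mp (hspan x)
    have hw0 : IH.mkQ w = 0 := (Submodule.Quotient.mk_eq_zero IH).mpr hw
    have : IH.mkQ (g + w) = IH.mkQ g := by rw [map_add, hw0, add_zero]
    rw [this, ← Submodule.map_span]
    exact Submodule.mem_map_of_mem hg
  exact ⟨IH, habsorb, fun x hx => hker x hx, hIHfd⟩

end Main

section Rest

variable {A : Type} [CommRing A] [HopfAlgebra k A] {ι : A →ₗ[k] H}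

lemma iotaDual_mem (hC : Paper.CommByFinite k A H ι) {f : Module.Dual k H}
    (hf : f ∈ Paper.finDual k H) : Paper.iotaDual k A H ι f ∈ Paper.finDual k A := by
  obtain ⟨IH, habs, hker, hfd⟩ := hf
  refine ⟨IH.comap ι, ?_, ?_, ?_⟩
  · intro c x hx
    constructor
    · rw [Submodule.mem_comap, hC.ι_mul]
      exact (habs (ι c) (ι x) hx).1
    · rw [Submodule.mem_comap, hC.ι_mul]
      exact (habs (ι c) (ι x) hx).2
  · intro x hx
    exact hker hx
  · have hkerc : LinearMap.ker (IH.mkQ ∘ₗ ι) = IH.comap ι := by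
      rw [LinearMap.ker_comp, Submodule.ker_mkQ]
    have e := (IH.mkQ ∘ₗ ι).quotKerEquivRange
    rw [hkerc] at e
    haveI : FiniteDimensional k ↥(LinearMap.range (IH.mkQ ∘ₗ ι)) := by infer_instance
    exact Module.Finite.equiv e.symm

lemma hbar_vanish_mul (hC : Paper.CommByFinite k A H ι) {f : Module.Dual k H}
    (hbar : ∀ x ∈ Paper.augHIdeal k A H ι, f x = 0) (d : A) (y : H) :
    f (ι d * y) = Coalgebra.counit (R := k) d * f y := by
  have hd : ι d * y = ι (d - Coalgebra.counit (R := k) d • 1) * y +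
      Coalgebra.counit (R := k) d • y := by
    rw [map_sub, map_smul, hC.ι_one, sub_mul, smul_mul_assoc, one_mul, sub_add_cancel]
  rw [hd, map_add, map_smul]
  have h0 : f (ι (d - Coalgebra.counit (R := k) d • 1) * y) = 0 :=
    hbar _ (Submodule.subset_span ⟨d - Coalgebra.counit (R := k) d • 1, y, by
      rw [map_sub, map_smul, Bialgebra.counit_one, smul_eq_mul, mul_one, sub_self], rfl⟩)
  rw [h0, zero_add, smul_eq_mul]

lemma coinv_right_to_hbar (hC : Paper.CommByFinite k A H ι) {f : Module.Dual k H}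
    (hcoinv : ∀ (h : H) (a : A), f (h * ι a) = Coalgebra.counit (R := k) a * f h) :
    ∀ x ∈ Paper.augHIdeal k A H ι, f x = 0 := by
  intro x hx
  induction hx using Submodule.span_induction with
  | mem w hw =>
      obtain ⟨c, h, hc0, rfl⟩ := hw
      rw [mul_eq_sum_adr (ι c) h (ℛ k h), map_sum]
      refine Finset.sum_eq_zero fun i _ => ?_
      obtain ⟨b, hb⟩ := hC.normal_right ((ℛ k h).right i) c
      rw [← hb, hcoinv]
      have hεb : Coalgebra.counit (R := k) b = 0 := by
        have h1 := hC.ι_counit b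
        rw [hb, counit_adr, hC.ι_counit, hc0, mul_zero] at h1
        exact h1.symm
      rw [hεb, zero_mul]
  | zero => exact map_zero f
  | add u v _ _ hu hv => rw [map_add, hu, hv, add_zero]
  | smul c u _ hu => rw [map_smul, hu, smul_zero]

lemma hbar_to_coinv_right (hC : Paper.CommByFinite k A H ι) {f : Module.Dual k H}
    (hbar : ∀ x ∈ Paper.augHIdeal k A H ι, f x = 0) (h : H) (a : A) :
    f (h * ι a) = Coalgebra.counit (R := k) a * f h := by
  have hd : ι a = ι (a - Coalgebra.counit (R := k) a • 1) +
      Coalgebra.counit (R := k) a • 1 := by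
    rw [map_sub, map_smul, hC.ι_one, sub_add_cancel]
  set a' := a - Coalgebra.counit (R := k) a • 1 with ha'
  have hεa' : Coalgebra.counit (R := k) a' = 0 := by
    rw [ha', map_sub, map_smul, Bialgebra.counit_one, smul_eq_mul, mul_one, sub_self]
  have hzero : f (h * ι a') = 0 := by
    rw [mul_eq_sum_adl (ι a') h (ℛ k h), map_sum]
    refine Finset.sum_eq_zero fun i _ => ?_
    obtain ⟨d, hdeq⟩ := hC.normal_left ((ℛ k h).left i) a'
    rw [← hdeq, hbar_vanish_mul hC hbar]
    have hεd : Coalgebra.counit (R := k) d = 0 := by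
      have h1 := hC.ι_counit d
      rw [hdeq, counit_adl, hC.ι_counit, hεa', mul_zero] at h1
      exact h1.symm
    rw [hεd, zero_mul]
  calc f (h * ι a)
      = f (h * ι a') + Coalgebra.counit (R := k) a • f h := by
        rw [hd]
        rw [mul_add, map_add, mul_smul_comm, mul_one, map_smul]
    _ = Coalgebra.counit (R := k) a * f h := by rw [hzero, zero_add, smul_eq_mul]

lemma coinv_left_to_hbar {f : Module.Dual k H}
    (hcoinv : ∀ (h : H) (a : A), f (ι a * h) = Coalgebra.counit (R := k) a * f h) :
    ∀ x ∈ Paper.augHIdeal k A H ι, f x = 0 := by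
  intro x hx
  induction hx using Submodule.span_induction with
  | mem w hw =>
      obtain ⟨c, h, hc0, rfl⟩ := hw
      rw [hcoinv, hc0, zero_mul]
  | zero => exact map_zero f
  | add u v _ _ hu hv => rw [map_add, hu, hv, add_zero]
  | smul c u _ hu => rw [map_smul, hu, smul_zero]

end Rest

end Aux2

open Paper in
/-- With `H = A ⊕ X` as right `A`-modules and `Π : H → A` the
projection along `X`: (i) `Π° : A° → H°, α ↦ α∘Π` is a well-defined injective
morphism of right `A°`-comodules; (ii) `ι° : H° → A°, f ↦ f∘ι` is a surjective
Hopf algebra homomorphism with `ι° ∘ Π° = id`; (iii) via `ι°`, `H°` is a right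
and left `A°`-comodule algebra whose right and left coinvariants equal `H̄*`. -/
theorem statement_2
    (k : Type) [Field k] [IsAlgClosed k]
    (A : Type) [CommRing A] [HopfAlgebra k A]
    (H : Type) [Ring H] [HopfAlgebra k H]
    (ι : A →ₗ[k] H) (p : H →ₗ[k] A)
    (hCbF : CommByFinite k A H ι)
    (hyp : StandingHyp k A H ι)
    (hsplit : IsSplitting k A H ι p) :
    -- (i) `Π°` maps `A°` into `H°`, injectively
    (∀ α ∈ finDual k A, PiDual k A H p α ∈ finDual k H) ∧
    Set.InjOn (PiDual k A H p) (finDual k A) ∧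
    -- and is a morphism of right `A°`-comodules (pairing form)
    (∀ α ∈ finDual k A, ∀ (h : H) (a : A),
      PiDual k A H p α (h * ι a) = PiDual k A H p (α ∘ₗ LinearMap.mulRight k a) h) ∧
    -- (ii) `ι°` maps `H°` into `A°` and is a Hopf algebra homomorphism:
    (∀ f ∈ finDual k H, iotaDual k A H ι f ∈ finDual k A) ∧
    (∀ f g : Module.Dual k H,
      iotaDual k A H ι (conv k f g) = conv k (iotaDual k A H ι f) (iotaDual k A H ι g)) ∧
    iotaDual k A H ι (convOne k) = convOne k ∧
    (∀ (f : Module.Dual k H) (a b : A), iotaDual k A H ι f (a * b) = f (ι a * ι b)) ∧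
    (∀ f : Module.Dual k H, iotaDual k A H ι f 1 = f 1) ∧
    (∀ (f : Module.Dual k H) (a : A),
      iotaDual k A H ι f (HopfAlgebra.antipode (R := k) a)
        = f (HopfAlgebra.antipode (R := k) (ι a))) ∧
    -- `ι° ∘ Π° = id`, so `Π°` is injective and `ι°` is surjective onto `A°`
    (∀ α : Module.Dual k A, iotaDual k A H ι (PiDual k A H p α) = α) ∧
    (∀ α ∈ finDual k A, ∃ f ∈ finDual k H, iotaDual k A H ι f = α) ∧
    -- (iii) right and left `A°`-coinvariants of `H°` both equal `H̄*`
    {f ∈ finDual k H | ∀ (h : H) (a : A),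
        f (h * ι a) = Coalgebra.counit (R := k) a * f h}
      = finDual k H ∩ hbarStar k A H ι ∧
    {f ∈ finDual k H | ∀ (h : H) (a : A),
        f (ι a * h) = Coalgebra.counit (R := k) a * f h}
      = finDual k H ∩ hbarStar k A H ι := by
  have idPi : ∀ γ : Module.Dual k A, iotaDual k A H ι (PiDual k A H p γ) = γ := by
    intro γ
    apply LinearMap.ext
    intro a
    show γ (p (ι a)) = γ a
    rw [hsplit.left_inv a]
  refine ⟨fun α hα => piDual_mem hCbF hsplit hα, ?_, ?_, ?_, ?_, ?_, ?_, ?_, ?_,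
    idPi, ?_, ?_, ?_⟩
  · -- injectivity
    intro α hα β hβ hαβ
    rw [← idPi α, ← idPi β, hαβ]
  · -- comodule morphism pairing form
    intro α hα h a
    show α (p (h * ι a)) = (α ∘ₗ LinearMap.mulRight k a) (p h)
    rw [hsplit.right_linear]
    rfl
  · -- iotaDual maps finDual to finDual
    exact fun f hf => iotaDual_mem hCbF hf
  · -- multiplicativity of iotaDual w.r.t. convolution
    intro f g
    apply LinearMap.ext
    intro a
    show conv k f g (ι a) = _
    simp only [conv, iotaDual, LinearMap.comp_apply, LinearEquiv.coe_coe]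
    rw [hCbF.ι_comul]
    rw [show (TensorProduct.map f g) (TensorProduct.map ι ι (Coalgebra.comul a))
        = TensorProduct.map (f ∘ₗ ι) (g ∘ₗ ι) (Coalgebra.comul a) by
      rw [← LinearMap.comp_apply, ← TensorProduct.map_comp]]
  · -- counit compatibility
    apply LinearMap.ext
    intro a
    show Coalgebra.counit (R := k) (ι a) = Coalgebra.counit (R := k) a
    exact hCbF.ι_counit a
  · -- algebra map property
    intro f a b
    show f (ι (a * b)) = f (ι a * ι b)
    rw [hCbF.ι_mul]
  · -- unit
    intro f
    show f (ι 1) = f 1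
    rw [hCbF.ι_one]
  · -- antipode
    intro f a
    show f (ι (HopfAlgebra.antipode (R := k) a)) = _
    rw [hCbF.ι_antipode]
  · -- surjectivity onto finDual A
    intro α hα
    exact ⟨PiDual k A H p α, piDual_mem hCbF hsplit hα, idPi α⟩
  · -- right coinvariants
    ext f
    simp only [Set.mem_setOf_eq, Set.mem_inter_iff, hbarStar]
    constructor
    · rintro ⟨hf, hcoinv⟩
      exact ⟨hf, coinv_right_to_hbar hCbF hcoinv⟩
    · rintro ⟨hf, hbar⟩
      exact ⟨hf, fun h a => hbar_to_coinv_right hCbF hbar h a⟩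
  · -- left coinvariants
    ext f
    simp only [Set.mem_setOf_eq, Set.mem_inter_iff, hbarStar]
    constructor
    · rintro ⟨hf, hcoinv⟩
      exact ⟨hf, coinv_left_to_hbar hcoinv⟩
    · rintro ⟨hf, hbar⟩
      refine ⟨hf, fun h a => ?_⟩
      exact hbar_vanish_mul hCbF hbar a h
end

section
/- Let A ⊆ H be an affine commutative-by-finite Hopf algebra with A semiprime or central in H, or H pointed. Suppose that as an algebra H = A #_σ H̄ is a crossed product whose cleaving map γ : H̄ → H is a coalgebra map (for instance if H ≅ A # H̄ is a smash product with H̄ a Hopf subalgebra of H). Then (CoSplit) holds, the induced action of A° on H̄* is trivial, and H° ≅ H̄* ⊗ A° as algebras, as left H̄*-modules, and as right A°-comodules. -/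
open TensorProduct LinearMap Coalgebra

namespace S5Aux

open TensorProduct Coalgebra HopfAlgebra LinearMap

variable {k : Type} [Field k]

section CoalgHelpers

variable {C : Type} [AddCommMonoid C] [Module k C] [Coalgebra k C]

lemma exists_fin_repr {M N : Type} [AddCommMonoid M] [AddCommMonoid N]
    [Module k M] [Module k N] (t : M ⊗[k] N) :
    ∃ (n : ℕ) (l : Fin n → M) (r : Fin n → N), t = ∑ i, l i ⊗ₜ[k] r i := by
  obtain ⟨S, hS⟩ := TensorProduct.exists_finset t
  refine ⟨S.card, fun i => (S.equivFin.symm i).1.1, fun i => (S.equivFin.symm i).1.2, ?_⟩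
  rw [hS, ← Finset.sum_attach S (fun p => p.1 ⊗ₜ[k] p.2)]
  exact (Equiv.sum_comp S.equivFin.symm _).symm

lemma sum_counit_smul {a : C} {I_r : Type} (r : Coalgebra.Repr k a I_r) :
    ∑ i ∈ r.index, Coalgebra.counit (R := k) (r.left i) • r.right i = a := by
  have h := Coalgebra.sum_counit_tmul_eq (R := k) r
  apply_fun (TensorProduct.lid k C) at h
  simp only [map_sum, TensorProduct.lid_tmul] at h
  simpa using h

lemma sum_smul_counit {a : C} {I_r : Type} (r : Coalgebra.Repr k a I_r) :
    ∑ i ∈ r.index, Coalgebra.counit (R := k) (r.right i) • r.left i = a := by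
  have h := Coalgebra.sum_tmul_counit_eq (R := k) r
  apply_fun (TensorProduct.rid k C) at h
  simp only [map_sum, TensorProduct.rid_tmul] at h
  simpa using h

lemma sum_counit_counit {a : C} {I_r : Type} (r : Coalgebra.Repr k a I_r) :
    ∑ i ∈ r.index,
      Coalgebra.counit (R := k) (r.left i) * Coalgebra.counit (R := k) (r.right i)
      = Coalgebra.counit (R := k) a := by
  have h := congrArg (Coalgebra.counit (R := k)) (sum_counit_smul r)
  simpa [map_sum, smul_eq_mul] using h

lemma conv_repr (f g : Module.Dual k C) {a : C} {I_r : Type} (r : Coalgebra.Repr k a I_r) :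
    Paper.conv k f g a = ∑ i ∈ r.index, f (r.left i) * g (r.right i) := by
  show (TensorProduct.lid k k) (TensorProduct.map f g (Coalgebra.comul a)) = _
  rw [← r.eq, map_sum, map_sum]
  simp [smul_eq_mul]

end CoalgHelpers

section BialgHelpers

variable {B : Type} [Ring B] [Bialgebra k B]

/-- Representation of `comul (x*y)` from representations of `x` and `y`. -/
noncomputable def mulRepr {I₁ I₂ : Type} {x y : B} (rx : Coalgebra.Repr k x I₁) (ry : Coalgebra.Repr k y I₂) :
    Coalgebra.Repr k (x * y) (I₁ × I₂) where
  index := rx.index ×ˢ ry.index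
  left := fun p => rx.left p.1 * ry.left p.2
  right := fun p => rx.right p.1 * ry.right p.2
  eq := by
    rw [Finset.sum_product]
    rw [Bialgebra.comul_mul (R := k), ← rx.eq, ← ry.eq, Finset.sum_mul_sum]
    simp [Algebra.TensorProduct.tmul_mul_tmul]

/-- Representation of `comul (φ x)` for a coalgebra-map-like `φ`. -/
noncomputable def mapRepr {C D : Type} [AddCommMonoid C] [Module k C] [Coalgebra k C]
    [AddCommMonoid D] [Module k D] [Coalgebra k D] {I₀ : Type} (φ : C →ₗ[k] D) {x : C}
    (hφ : Coalgebra.comul (R := k) (φ x) = TensorProduct.map φ φ (Coalgebra.comul x))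
    (r : Coalgebra.Repr k x I₀) : Coalgebra.Repr k (φ x) I₀ where
  index := r.index
  left := φ ∘ r.left
  right := φ ∘ r.right
  eq := by rw [hφ, ← r.eq, map_sum]; simp

noncomputable def oneRepr : Coalgebra.Repr k (1 : B) ℕ where
  index := ({0} : Finset ℕ)
  left := fun _ => 1
  right := fun _ => 1
  eq := by simp [Algebra.TensorProduct.one_def]

noncomputable def gpRepr {x : B} (hx : Coalgebra.comul (R := k) x = x ⊗ₜ[k] x) :
    Coalgebra.Repr k x ℕ where
  index := ({0} : Finset ℕ)
  left := fun _ => x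
  right := fun _ => x
  eq := by simp [hx]

end BialgHelpers

section HopfHelpers

variable {H : Type} [Ring H] [HopfAlgebra k H]

local notation "aS" => HopfAlgebra.antipode (R := k)

lemma antipode_one' : (aS (1 : H)) = 1 := by
  have h := HopfAlgebra.sum_mul_antipode_eq_smul (R := k) (oneRepr (B := H) (k := k))
  simpa [oneRepr] using h

lemma adr_repr (h a : H) {I_r : Type} (r : Coalgebra.Repr k h I_r) :
    Paper.adr k H h a = ∑ i ∈ r.index, (aS (r.left i) * a) * r.right i := by
  show TensorProduct.lift _ (Coalgebra.comul h) = _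
  rw [← r.eq, map_sum]
  simp [LinearMap.mul_apply']

end HopfHelpers

end S5Aux
namespace S5Aux

open TensorProduct Coalgebra HopfAlgebra LinearMap

variable {k : Type} [Field k]

section Antipode

variable {H : Type} [Ring H] [HopfAlgebra k H]

local notation "aS" => HopfAlgebra.antipode (R := k)
local notation "ε" => Coalgebra.counit (R := k)

lemma claimA {w z : H} {I_rw : Type} (rw : Coalgebra.Repr k w I_rw) {I_rz : Type} (rz : Coalgebra.Repr k z I_rz) :
    ∑ s ∈ rw.index, ∑ t ∈ rz.index,
      (rw.left s * rz.left t) * (aS (rz.right t) * aS (rw.right s))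
      = (ε w * ε z) • (1 : H) := by
  have inner : ∀ s, ∑ t ∈ rz.index,
      (rw.left s * rz.left t) * (aS (rz.right t) * aS (rw.right s))
      = ε z • (rw.left s * aS (rw.right s)) := by
    intro s
    have h1 : ∀ t, (rw.left s * rz.left t) * (aS (rz.right t) * aS (rw.right s))
        = rw.left s * ((rz.left t * aS (rz.right t)) * aS (rw.right s)) := by
      intro t
      rw [mul_assoc, ← mul_assoc (rz.left t)]
    simp only [h1, ← Finset.mul_sum, ← Finset.sum_mul]
    rw [HopfAlgebra.sum_mul_antipode_eq_smul rz]
    rw [smul_mul_assoc, one_mul, mul_smul_comm]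
  simp only [inner]
  rw [← Finset.smul_sum, HopfAlgebra.sum_mul_antipode_eq_smul rw, smul_smul, mul_comm]

lemma claimB {w z : H} {I_rw : Type} (rw : Coalgebra.Repr k w I_rw) {I_rz : Type} (rz : Coalgebra.Repr k z I_rz) :
    ∑ s ∈ rw.index, ∑ t ∈ rz.index,
      aS (rw.left s * rz.left t) * (rw.right s * rz.right t)
      = (ε w * ε z) • (1 : H) := by
  have h := HopfAlgebra.sum_antipode_mul_eq_smul (R := k) (mulRepr rw rz)
  simp only [mulRepr] at h
  rw [Finset.sum_product] at h
  rw [h, Bialgebra.counit_mul]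

lemma innerL {I J : Type} (s : Finset I) (t : Finset J)
    (a b : I → H) (a' b' : J → H) (R : H) (c : k)
    (h : ∑ i ∈ s, ∑ j ∈ t, aS (a i * a' j) * (b i * b' j) = c • 1) :
    ∑ j ∈ t, ∑ i ∈ s, aS (a i * a' j) * (b i * b' j * R) = c • R := by
  have h1 : ∀ (j : J) (i : I), aS (a i * a' j) * (b i * b' j * R)
      = (aS (a i * a' j) * (b i * b' j)) * R := by
    intro j i; exact (mul_assoc _ _ _).symm
  simp only [h1, ← Finset.sum_mul]
  rw [Finset.sum_comm, h, smul_mul_assoc, one_mul]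

lemma innerR {I J : Type} (s : Finset I) (t : Finset J)
    (a b : I → H) (a' b' : J → H) (L : H) (c : k)
    (h : ∑ i ∈ s, ∑ j ∈ t, (a i * a' j) * (aS (b' j) * aS (b i)) = c • 1) :
    ∑ j ∈ t, ∑ i ∈ s, L * (a i * a' j * (aS (b' j) * aS (b i))) = c • L := by
  simp only [← Finset.mul_sum]
  rw [Finset.sum_comm, h, mul_smul_comm, mul_one]

lemma collect_smul_mul {I J : Type} (s : Finset I) (t : Finset J)
    (c : I → k) (d : J → k) (f : I → H) (g : J → H) :
    ∑ j ∈ t, ∑ i ∈ s, (c i * d j) • (g j * f i)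
      = (∑ j ∈ t, d j • g j) * (∑ i ∈ s, c i • f i) := by
  rw [Finset.sum_mul_sum]
  refine Finset.sum_congr rfl fun j _ => Finset.sum_congr rfl fun i _ => ?_
  rw [smul_mul_assoc, mul_smul_comm, smul_smul, mul_comm (d j) (c i)]

lemma collect_smul_mul2 {I J : Type} (s : Finset I) (t : Finset J)
    (c : I → k) (d : J → k) (f : I → H) (g : J → H) :
    ∑ j ∈ t, ∑ i ∈ s, (c i * d j) • aS (f i * g j)
      = aS ((∑ i ∈ s, c i • f i) * (∑ j ∈ t, d j • g j)) := by
  rw [Finset.sum_mul_sum, map_sum, Finset.sum_comm]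
  refine Finset.sum_congr rfl fun j _ => ?_
  rw [map_sum]
  refine Finset.sum_congr rfl fun i _ => ?_
  rw [smul_mul_assoc, mul_smul_comm, map_smul, map_smul, smul_smul]

lemma sum_counit_smul_antipode {a : H} {I_r : Type} (r : Coalgebra.Repr k a I_r) :
    ∑ i ∈ r.index, ε (r.left i) • aS (r.right i) = aS a := by
  simp only [← map_smul, ← map_sum]
  rw [sum_counit_smul]

/-- The linear map `(a⊗(b⊗c)) ⊗ (a'⊗(b'⊗c')) ↦ S(aa') * ((bb') * (S c' * S c))`. -/
noncomputable def Xi :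
    (H ⊗[k] (H ⊗[k] H)) ⊗[k] (H ⊗[k] (H ⊗[k] H)) →ₗ[k] H :=
  (LinearMap.mul' k H) ∘ₗ
  (TensorProduct.map ((HopfAlgebra.antipode (R := k)) ∘ₗ LinearMap.mul' k H)
    ((LinearMap.mul' k H) ∘ₗ
      (TensorProduct.map (LinearMap.mul' k H)
        ((LinearMap.mul' k H) ∘ₗ
          (TensorProduct.map (HopfAlgebra.antipode (R := k)) (HopfAlgebra.antipode (R := k))) ∘ₗ
          (TensorProduct.comm k H H).toLinearMap)) ∘ₗ
      (TensorProduct.tensorTensorTensorComm k H H H H).toLinearMap)) ∘ₗ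
  (TensorProduct.tensorTensorTensorComm k H (H ⊗[k] H) H (H ⊗[k] H)).toLinearMap

lemma Xi_apply (a b c a' b' c' : H) :
    Xi ((a ⊗ₜ[k] (b ⊗ₜ[k] c)) ⊗ₜ[k] (a' ⊗ₜ[k] (b' ⊗ₜ[k] c')))
      = aS (a * a') * ((b * b') * (aS c' * aS c)) := by
  simp [Xi, TensorProduct.tensorTensorTensorComm_tmul, LinearMap.mul'_apply]

lemma antipode_mul' (x y : H) : aS (x * y) = aS y * aS x := by
  classical
  set rx := ℛ k x with hrx
  set ry := ℛ k y with hry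
  have hx := Coalgebra.sum_tmul_tmul_eq (R := k) rx
    (fun i => ℛ k (rx.left i)) (fun i => ℛ k (rx.right i))
  have hy := Coalgebra.sum_tmul_tmul_eq (R := k) ry
    (fun i => ℛ k (ry.left i)) (fun i => ℛ k (ry.right i))
  have key : Xi ((∑ i ∈ rx.index, ∑ j ∈ (ℛ k (rx.left i)).index,
        (ℛ k (rx.left i)).left j ⊗ₜ[k] ((ℛ k (rx.left i)).right j ⊗ₜ[k] rx.right i)) ⊗ₜ[k]
      (∑ i ∈ ry.index, ∑ j ∈ (ℛ k (ry.left i)).index,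
        (ℛ k (ry.left i)).left j ⊗ₜ[k] ((ℛ k (ry.left i)).right j ⊗ₜ[k] ry.right i)))
      = Xi ((∑ i ∈ rx.index, ∑ j ∈ (ℛ k (rx.right i)).index,
        rx.left i ⊗ₜ[k] ((ℛ k (rx.right i)).left j ⊗ₜ[k] (ℛ k (rx.right i)).right j)) ⊗ₜ[k]
      (∑ i ∈ ry.index, ∑ j ∈ (ℛ k (ry.right i)).index,
        ry.left i ⊗ₜ[k] ((ℛ k (ry.right i)).left j ⊗ₜ[k] (ℛ k (ry.right i)).right j))) := by
    rw [hx, hy]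
  simp only [TensorProduct.sum_tmul, TensorProduct.tmul_sum, map_sum, Xi_apply] at key
  have T1 : ∑ j ∈ ry.index, ∑ w ∈ (ℛ k (ry.left j)).index, ∑ i ∈ rx.index,
      ∑ u ∈ (ℛ k (rx.left i)).index,
        aS ((ℛ k (rx.left i)).left u * (ℛ k (ry.left j)).left w) *
          ((ℛ k (rx.left i)).right u * (ℛ k (ry.left j)).right w *
            (aS (ry.right j) * aS (rx.right i)))
      = aS y * aS x := by
    calc
      _ = ∑ j ∈ ry.index, ∑ i ∈ rx.index,
            (ε (rx.left i) * ε (ry.left j)) • (aS (ry.right j) * aS (rx.right i)) := by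
        refine Finset.sum_congr rfl fun j _ => ?_
        rw [Finset.sum_comm]
        refine Finset.sum_congr rfl fun i _ => ?_
        exact innerL _ _ _ _ _ _ _ _ (claimB (ℛ k (rx.left i)) (ℛ k (ry.left j)))
      _ = (∑ j ∈ ry.index, ε (ry.left j) • aS (ry.right j)) *
            (∑ i ∈ rx.index, ε (rx.left i) • aS (rx.right i)) :=
        collect_smul_mul _ _ _ _ _ _
      _ = aS y * aS x := by
        rw [sum_counit_smul_antipode, sum_counit_smul_antipode]
  have T2 : ∑ j ∈ ry.index, ∑ t ∈ (ℛ k (ry.right j)).index, ∑ i ∈ rx.index,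
      ∑ s ∈ (ℛ k (rx.right i)).index,
        aS (rx.left i * ry.left j) *
          ((ℛ k (rx.right i)).left s * (ℛ k (ry.right j)).left t *
            (aS ((ℛ k (ry.right j)).right t) * aS ((ℛ k (rx.right i)).right s)))
      = aS (x * y) := by
    calc
      _ = ∑ j ∈ ry.index, ∑ i ∈ rx.index,
            (ε (rx.right i) * ε (ry.right j)) • aS (rx.left i * ry.left j) := by
        refine Finset.sum_congr rfl fun j _ => ?_
        rw [Finset.sum_comm]
        refine Finset.sum_congr rfl fun i _ => ?_
        exact innerR _ _ _ _ _ _ _ _ (claimA (ℛ k (rx.right i)) (ℛ k (ry.right j)))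
      _ = aS ((∑ i ∈ rx.index, ε (rx.right i) • rx.left i) *
            (∑ j ∈ ry.index, ε (ry.right j) • ry.left j)) :=
        collect_smul_mul2 _ _ _ _ _ _
      _ = aS (x * y) := by rw [sum_smul_counit, sum_smul_counit]
  rw [T1, T2] at key
  exact key.symm

lemma adr_mul (g h a : H) :
    Paper.adr k H (g * h) a = Paper.adr k H h (Paper.adr k H g a) := by
  classical
  set rg := ℛ k g
  set rh := ℛ k h
  rw [adr_repr (g * h) a (mulRepr rg rh), adr_repr h _ rh, adr_repr g a rg]
  simp only [mulRepr]
  rw [Finset.sum_product]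
  rw [Finset.sum_comm]
  refine Finset.sum_congr rfl fun j _ => ?_
  rw [Finset.mul_sum, Finset.sum_mul]
  refine Finset.sum_congr rfl fun i _ => ?_
  rw [antipode_mul']
  simp only [mul_assoc]

end Antipode

end S5Aux
namespace S5Aux

open TensorProduct HopfAlgebra LinearMap
open scoped Coalgebra

variable {k : Type} [Field k]

section Main

variable {A H Hb : Type} [CommRing A] [HopfAlgebra k A]
  [Ring H] [HopfAlgebra k H] [Ring Hb] [HopfAlgebra k Hb]

local notation "aS" => HopfAlgebra.antipode (R := k)
local notation "ε" => Coalgebra.counit (R := k)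

variable (ι : A →ₗ[k] H) (π : H →ₗ[k] Hb) (γ γ' : Hb →ₗ[k] H)

/-- Bundled hypotheses of Statement 5. -/
structure Hyp : Prop where
  hCbF : Paper.CommByFinite k A H ι
  hQ : Paper.IsHbarQuotient k A H Hb ι π
  hγ_comul : ∀ b : Hb,
    Coalgebra.comul (R := k) (γ b) = _root_.TensorProduct.map γ γ (Coalgebra.comul b)
  hγ_counit : ∀ b : Hb, ε (γ b) = ε b
  hγ_comod : ∀ b : Hb,
    _root_.TensorProduct.map (LinearMap.id (M := H)) π (Coalgebra.comul (R := k) (γ b))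
      = _root_.TensorProduct.map γ (LinearMap.id (M := Hb)) (Coalgebra.comul b)
  hγ' : ∀ (b : Hb) (n : ℕ) (l r : Fin n → Hb),
    Coalgebra.comul (R := k) b = ∑ i, l i ⊗ₜ[k] r i →
    (∑ i, γ (l i) * γ' (r i)) = ε b • (1 : H) ∧
    (∑ i, γ' (l i) * γ (r i)) = ε b • (1 : H)
  hcross : ∀ h : H, ∃ (n : ℕ) (a : Fin n → A) (b : Fin n → Hb),
    h = ∑ i, ι (a i) * γ (b i)

variable {ι π γ γ'}

lemma gg' (hh : Hyp ι π γ γ') (x : Hb) {I_r : Type} (r : Coalgebra.Repr k x I_r) :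
    ∑ i ∈ r.index, γ (r.left i) * γ' (r.right i) = ε x • (1 : H) := by
  have e1 : ∑ i ∈ r.index, γ (r.left i) * γ' (r.right i)
      = LinearMap.mul' k H (_root_.TensorProduct.map γ γ' (Coalgebra.comul x)) := by
    rw [← r.eq, map_sum, map_sum]; simp
  obtain ⟨n, l, rr, hrep⟩ := exists_fin_repr (Coalgebra.comul (R := k) x)
  have e2 : LinearMap.mul' k H (_root_.TensorProduct.map γ γ' (Coalgebra.comul x))
      = ∑ i, γ (l i) * γ' (rr i) := by
    rw [hrep, map_sum, map_sum]; simp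
  rw [e1, e2]
  exact (hh.hγ' x n l rr hrep).1

lemma g'g (hh : Hyp ι π γ γ') (x : Hb) {I_r : Type} (r : Coalgebra.Repr k x I_r) :
    ∑ i ∈ r.index, γ' (r.left i) * γ (r.right i) = ε x • (1 : H) := by
  have e1 : ∑ i ∈ r.index, γ' (r.left i) * γ (r.right i)
      = LinearMap.mul' k H (_root_.TensorProduct.map γ' γ (Coalgebra.comul x)) := by
    rw [← r.eq, map_sum, map_sum]; simp
  obtain ⟨n, l, rr, hrep⟩ := exists_fin_repr (Coalgebra.comul (R := k) x)
  have e2 : LinearMap.mul' k H (_root_.TensorProduct.map γ' γ (Coalgebra.comul x))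
      = ∑ i, γ' (l i) * γ (rr i) := by
    rw [hrep, map_sum, map_sum]; simp
  rw [e1, e2]
  exact (hh.hγ' x n l rr hrep).2

lemma pi_gamma (hh : Hyp ι π γ γ') (b : Hb) : π (γ b) = b := by
  set r := ℛ k b with hr
  have hcg : Coalgebra.comul (R := k) (γ b)
      = ∑ i ∈ r.index, γ (r.left i) ⊗ₜ[k] γ (r.right i) := by
    rw [hh.hγ_comul, ← r.eq, map_sum]; simp
  have h2 := hh.hγ_comod b
  rw [hcg, ← r.eq, map_sum, map_sum] at h2
  simp only [_root_.TensorProduct.map_tmul, LinearMap.id_coe, id_eq] at h2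
  have h3 := congrArg (fun t => (TensorProduct.lid k Hb)
    ((_root_.TensorProduct.map (Coalgebra.counit (R := k)) (LinearMap.id (M := Hb))) t)) h2
  simp only [map_sum, _root_.TensorProduct.map_tmul, _root_.TensorProduct.lid_tmul, LinearMap.id_coe, id_eq] at h3
  calc π (γ b) = π (γ (∑ i ∈ r.index, ε (r.left i) • r.right i)) := by
        rw [sum_counit_smul]
    _ = ∑ i ∈ r.index, ε (r.left i) • π (γ (r.right i)) := by
        rw [map_sum, map_sum]; simp
    _ = ∑ i ∈ r.index, ε (γ (r.left i)) • π (γ (r.right i)) := by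
        simp only [hh.hγ_counit]
    _ = ∑ i ∈ r.index, ε (γ (r.left i)) • r.right i := h3
    _ = ∑ i ∈ r.index, ε (r.left i) • r.right i := by simp only [hh.hγ_counit]
    _ = b := sum_counit_smul r

lemma pi_iota (hh : Hyp ι π γ γ') (a : A) : π (ι a) = ε a • 1 := by
  have hmem : ι (a - ε a • 1) ∈ Paper.augHIdeal k A H ι := by
    apply Submodule.subset_span
    refine ⟨a - ε a • 1, 1, ?_, by rw [mul_one]⟩
    simp [Bialgebra.counit_one]
  rw [← hh.hQ.π_ker, LinearMap.mem_ker] at hmem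
  have expand : ι (a - ε a • 1) = ι a - ε a • ι 1 := by
    rw [map_sub, map_smul]
  rw [expand, map_sub, map_smul, hh.hCbF.ι_one, hh.hQ.π_one, sub_eq_zero] at hmem
  exact hmem

lemma uv_one (hh : Hyp ι π γ γ') : γ 1 * γ' 1 = 1 := by
  have h := (hh.hγ' 1 1 (fun _ => (1 : Hb)) (fun _ => (1 : Hb))
    (by simp [Bialgebra.comul_one, Algebra.TensorProduct.one_def])).1
  simpa [Bialgebra.counit_one] using h

lemma vu_one (hh : Hyp ι π γ γ') : γ' 1 * γ 1 = 1 := by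
  have h := (hh.hγ' 1 1 (fun _ => (1 : Hb)) (fun _ => (1 : Hb))
    (by simp [Bialgebra.comul_one, Algebra.TensorProduct.one_def])).2
  simpa [Bialgebra.counit_one] using h

lemma comul_u (hh : Hyp ι π γ γ') :
    Coalgebra.comul (R := k) (γ (1 : Hb)) = γ 1 ⊗ₜ[k] γ 1 := by
  rw [hh.hγ_comul]
  simp [Bialgebra.comul_one, Algebra.TensorProduct.one_def]

lemma counit_u (hh : Hyp ι π γ γ') : ε (γ (1 : Hb)) = 1 := by
  rw [hh.hγ_counit, Bialgebra.counit_one]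

lemma comul_v (hh : Hyp ι π γ γ') :
    Coalgebra.comul (R := k) (γ' (1 : Hb)) = γ' 1 ⊗ₜ[k] γ' 1 := by
  have h2 : (γ' 1 ⊗ₜ[k] γ' 1) * (γ 1 ⊗ₜ[k] γ 1) = (1 : H ⊗[k] H) := by
    rw [Algebra.TensorProduct.tmul_mul_tmul, vu_one hh, Algebra.TensorProduct.one_def]
  calc Coalgebra.comul (R := k) (γ' 1) = 1 * Coalgebra.comul (R := k) (γ' 1) :=
        (one_mul _).symm
    _ = ((γ' 1 ⊗ₜ[k] γ' 1) * (γ 1 ⊗ₜ[k] γ 1)) * Coalgebra.comul (R := k) (γ' 1) := by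
        rw [h2]
    _ = (γ' 1 ⊗ₜ[k] γ' 1) *
        (Coalgebra.comul (R := k) (γ 1) * Coalgebra.comul (R := k) (γ' 1)) := by
        rw [mul_assoc, comul_u hh]
    _ = (γ' 1 ⊗ₜ[k] γ' 1) * Coalgebra.comul (R := k) (γ 1 * γ' 1) := by
        rw [Bialgebra.comul_mul]
    _ = γ' 1 ⊗ₜ[k] γ' 1 := by
        rw [uv_one hh, Bialgebra.comul_one, mul_one]

lemma counit_v (hh : Hyp ι π γ γ') : ε (γ' (1 : Hb)) = 1 := by
  have h := congrArg (Coalgebra.counit (R := k)) (uv_one hh (ι := ι))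
  rw [Bialgebra.counit_mul, Bialgebra.counit_one, counit_u hh] at h
  simpa using h

/-- The projection-candidate `Ψ(h) = Σ γ'(π h₁) h₂`. -/
noncomputable def Psi (π : H →ₗ[k] Hb) (γ' : Hb →ₗ[k] H) : H →ₗ[k] H :=
  LinearMap.mul' k H ∘ₗ _root_.TensorProduct.map (γ' ∘ₗ π) LinearMap.id ∘ₗ Coalgebra.comul

lemma Psi_repr (x : H) {I_r : Type} (r : Coalgebra.Repr k x I_r) :
    Psi π γ' x = ∑ i ∈ r.index, γ' (π (r.left i)) * r.right i := by
  show LinearMap.mul' k H (_root_.TensorProduct.map (γ' ∘ₗ π) LinearMap.id (Coalgebra.comul x)) = _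
  rw [← r.eq, map_sum, map_sum]
  simp

lemma Psi_one (hh : Hyp ι π γ γ') : Psi π γ' (1 : H) = γ' 1 := by
  rw [Psi_repr 1 (oneRepr (B := H))]
  simp [oneRepr, hh.hQ.π_one]

lemma Psi_gamma_iota (hh : Hyp ι π γ γ') (b : Hb) (a : A) :
    Psi π γ' (γ b * ι a) = ε b • ι a := by
  classical
  set rb := ℛ k b with hrb
  set ra := ℛ k a with hra
  rw [Psi_repr _ (mulRepr (mapRepr γ (hh.hγ_comul b) rb) (mapRepr ι (hh.hCbF.ι_comul a) ra))]
  simp only [mulRepr, mapRepr, Function.comp]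
  rw [Finset.sum_product]
  have hterm : ∀ i j, γ' (π (γ (rb.left i) * ι (ra.left j))) * (γ (rb.right i) * ι (ra.right j))
      = (γ' (rb.left i) * γ (rb.right i)) * (ε (ra.left j) • ι (ra.right j)) := by
    intro i j
    rw [hh.hQ.π_mul, pi_gamma hh, pi_iota hh, mul_smul_comm, mul_one, map_smul,
      smul_mul_assoc, ← mul_assoc, ← mul_smul_comm]
  simp only [hterm]
  rw [← Finset.sum_mul_sum, g'g hh b rb]
  have : ∑ j ∈ ra.index, ε (ra.left j) • ι (ra.right j) = ι a := by
    simp only [← map_smul, ← map_sum]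
    rw [sum_counit_smul]
  rw [this, smul_mul_assoc, one_mul]

lemma Psi_mul_iota (hh : Hyp ι π γ γ') (x : H) (a : A) :
    Psi π γ' (x * ι a) = Psi π γ' x * ι a := by
  classical
  set rx := ℛ k x with hrx
  set ra := ℛ k a with hra
  rw [Psi_repr _ (mulRepr rx (mapRepr ι (hh.hCbF.ι_comul a) ra)), Psi_repr x rx]
  simp only [mulRepr, mapRepr, Function.comp]
  rw [Finset.sum_product]
  have hterm : ∀ i j, γ' (π (rx.left i * ι (ra.left j))) * (rx.right i * ι (ra.right j))
      = (γ' (π (rx.left i)) * rx.right i) * (ε (ra.left j) • ι (ra.right j)) := by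
    intro i j
    rw [hh.hQ.π_mul, pi_iota hh, mul_smul_comm, mul_one, map_smul,
      smul_mul_assoc, ← mul_assoc, ← mul_smul_comm]
  simp only [hterm]
  rw [← Finset.sum_mul_sum]
  congr 1
  simp only [← map_smul, ← map_sum]
  rw [sum_counit_smul]

lemma Psi_iota (hh : Hyp ι π γ γ') (a : A) :
    Psi π γ' (ι a) = γ' 1 * ι a := by
  classical
  set ra := ℛ k a with hra
  rw [Psi_repr _ (mapRepr ι (hh.hCbF.ι_comul a) ra)]
  simp only [mapRepr, Function.comp]
  have hterm : ∀ j, γ' (π (ι (ra.left j))) * ι (ra.right j)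
      = γ' 1 * (ε (ra.left j) • ι (ra.right j)) := by
    intro j
    rw [pi_iota hh, map_smul, smul_mul_assoc, ← mul_smul_comm]
  simp only [hterm, ← Finset.mul_sum]
  congr 1
  simp only [← map_smul, ← map_sum]
  rw [sum_counit_smul]

/-- The Sweedler identity `ι(a) x = Σ x₁ (S(x₂) ι(a) x₃)`. -/
lemma iota_mul_expand (a : A) (x : H) {I_rx : Type} (rx : Coalgebra.Repr k x I_rx) :
    ι a * x = ∑ i ∈ rx.index, rx.left i * Paper.adr k H (rx.right i) (ι a) := by
  classical
  have key := Coalgebra.sum_tmul_tmul_eq (R := k) rx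
    (fun i => ℛ k (rx.left i)) (fun i => ℛ k (rx.right i))
  set Θ : H ⊗[k] (H ⊗[k] H) →ₗ[k] H :=
    LinearMap.mul' k H ∘ₗ _root_.TensorProduct.map LinearMap.id
      (LinearMap.mul' k H ∘ₗ _root_.TensorProduct.map
        ((LinearMap.mulRight k (ι a)) ∘ₗ (HopfAlgebra.antipode (R := k))) LinearMap.id)
    with hΘ
  have Θ_apply : ∀ p q r : H, Θ (p ⊗ₜ[k] (q ⊗ₜ[k] r)) = p * ((aS q * ι a) * r) := by
    intro p q r
    simp [hΘ, LinearMap.mul'_apply]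
  have key2 := congrArg Θ key
  simp only [map_sum, Θ_apply] at key2
  -- left side of key2 is `ι a * x`
  have hL : ∑ i ∈ rx.index, ∑ j ∈ (ℛ k (rx.left i)).index,
      (ℛ k (rx.left i)).left j * ((aS ((ℛ k (rx.left i)).right j) * ι a) * rx.right i)
      = ι a * x := by
    have hterm : ∀ i j, (ℛ k (rx.left i)).left j *
        ((aS ((ℛ k (rx.left i)).right j) * ι a) * rx.right i)
        = ((ℛ k (rx.left i)).left j * aS ((ℛ k (rx.left i)).right j)) * (ι a * rx.right i) := by
      intro i j
      rw [mul_assoc, mul_assoc]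
    simp only [hterm, ← Finset.sum_mul]
    have hinner : ∀ i, (∑ j ∈ (ℛ k (rx.left i)).index,
        (ℛ k (rx.left i)).left j * aS ((ℛ k (rx.left i)).right j)) * (ι a * rx.right i)
        = ε (rx.left i) • (ι a * rx.right i) := by
      intro i
      rw [HopfAlgebra.sum_mul_antipode_eq_smul (ℛ k (rx.left i)), smul_mul_assoc, one_mul]
    simp only [hinner, ← mul_smul_comm, ← Finset.mul_sum]
    rw [sum_counit_smul]
  -- right side of key2 is the `adr` sum
  have hR : ∑ i ∈ rx.index, ∑ j ∈ (ℛ k (rx.right i)).index,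
      rx.left i * ((aS ((ℛ k (rx.right i)).left j) * ι a) * (ℛ k (rx.right i)).right j)
      = ∑ i ∈ rx.index, rx.left i * Paper.adr k H (rx.right i) (ι a) := by
    refine Finset.sum_congr rfl fun i _ => ?_
    rw [← Finset.mul_sum, adr_repr (rx.right i) (ι a) (ℛ k (rx.right i))]
  rw [hL, hR] at key2
  exact key2

/-- Generators `γ(b) ι(a)` of `H`. -/
def Mgen : Set H := {y : H | ∃ (b : Hb) (a : A), y = γ b * ι a}

/-- Generators `ι(a) γ(b)` of `H`. -/
def Ngen : Set H := {y : H | ∃ (a : A) (b : Hb), y = ι a * γ b}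

lemma Ntop (hh : Hyp ι π γ γ') : Submodule.span k (Ngen (ι := ι) (γ := γ)) = ⊤ := by
  rw [eq_top_iff]
  intro h _
  obtain ⟨n, a, b, hsum⟩ := hh.hcross h
  rw [hsum]
  exact Submodule.sum_mem _ fun i _ =>
    Submodule.subset_span ⟨a i, b i, rfl⟩

lemma Mtop (hh : Hyp ι π γ γ') : Submodule.span k (Mgen (ι := ι) (γ := γ)) = ⊤ := by
  rw [eq_top_iff, ← Ntop hh, Submodule.span_le]
  rintro y ⟨a, b, rfl⟩
  rw [iota_mul_expand a (γ b) (mapRepr γ (hh.hγ_comul b) (ℛ k b))]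
  refine Submodule.sum_mem _ fun j _ => ?_
  simp only [mapRepr, Function.comp]
  obtain ⟨z, hz⟩ := hh.hCbF.normal_right (γ ((ℛ k b).right j)) a
  rw [← hz]
  exact Submodule.subset_span ⟨_, z, rfl⟩

lemma mem_of_gen {V : Type} [AddCommMonoid V] [Module k V] (hh : Hyp ι π γ γ')
    (S : Submodule k V) (f : H →ₗ[k] V)
    (hgen : ∀ (b : Hb) (a : A), f (γ b * ι a) ∈ S) (x : H) : f x ∈ S := by
  have hle : Submodule.span k (Mgen (ι := ι) (γ := γ)) ≤ S.comap f :=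
    Submodule.span_le.mpr (by rintro y ⟨b, a, rfl⟩; exact hgen b a)
  rw [Mtop hh] at hle
  exact hle Submodule.mem_top

lemma ext_of_gen {V : Type} [AddCommMonoid V] [Module k V] (hh : Hyp ι π γ γ')
    (f g : H →ₗ[k] V) (hgen : ∀ (b : Hb) (a : A), f (γ b * ι a) = g (γ b * ι a)) :
    f = g := by
  apply LinearMap.ext_on (Mtop hh)
  rintro y ⟨b, a, rfl⟩
  exact hgen b a

lemma Psi_range (hh : Hyp ι π γ γ') (x : H) :
    Psi π γ' x ∈ LinearMap.range ι := by
  refine mem_of_gen hh _ (Psi π γ') (fun b a => ?_) x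
  rw [Psi_gamma_iota hh]
  exact Submodule.smul_mem _ _ ⟨a, rfl⟩

end Main

end S5Aux
namespace S5Aux

open TensorProduct HopfAlgebra LinearMap
open scoped Coalgebra

variable {k : Type} [Field k]

section Main2

variable {A H Hb : Type} [CommRing A] [HopfAlgebra k A]
  [Ring H] [HopfAlgebra k H] [Ring Hb] [HopfAlgebra k Hb]

local notation "aS" => HopfAlgebra.antipode (R := k)
local notation "ε" => Coalgebra.counit (R := k)

variable {ι : A →ₗ[k] H} {π : H →ₗ[k] Hb} {γ γ' : Hb →ₗ[k] H}

lemma map_iota_inj (hh : Hyp ι π γ γ') :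
    Function.Injective (_root_.TensorProduct.map ι ι) := by
  obtain ⟨g0, hg0⟩ := LinearMap.exists_leftInverse_of_injective ι
    (LinearMap.ker_eq_bot.mpr hh.hCbF.ι_inj)
  have hcomp : (_root_.TensorProduct.map g0 g0) ∘ₗ (_root_.TensorProduct.map ι ι)
      = LinearMap.id := by
    rw [← _root_.TensorProduct.map_comp, hg0, _root_.TensorProduct.map_id]
  intro x y hxy
  have h2 := congrArg (_root_.TensorProduct.map g0 g0) hxy
  rwa [← LinearMap.comp_apply, ← LinearMap.comp_apply, hcomp,
    LinearMap.id_apply, LinearMap.id_apply] at h2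

lemma v_mul_Sv (hh : Hyp ι π γ γ') : γ' (1 : Hb) * aS (γ' 1) = 1 := by
  have h := HopfAlgebra.sum_mul_antipode_eq_smul (R := k) (gpRepr (comul_v hh))
  simp only [gpRepr, Finset.sum_singleton] at h
  rw [counit_v hh, one_smul] at h
  exact h

lemma Sv_eq_u (hh : Hyp ι π γ γ') : aS (γ' (1 : Hb)) = γ (1 : Hb) := by
  calc aS (γ' (1 : Hb)) = (γ 1 * γ' 1) * aS (γ' 1) := by rw [uv_one hh, one_mul]
    _ = γ 1 * (γ' 1 * aS (γ' 1)) := mul_assoc _ _ _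
    _ = γ 1 := by rw [v_mul_Sv hh, mul_one]

section WithGC

variable (g : H →ₗ[k] A) (c : A)

/-- The splitting `p(h) = S(c) · ι⁻¹(Ψ(h))`. -/
noncomputable def pmap (π : H →ₗ[k] Hb) (γ' : Hb →ₗ[k] H) (g : H →ₗ[k] A) (c : A) :
    H →ₗ[k] A :=
  (LinearMap.mulLeft k (HopfAlgebra.antipode (R := k) c)) ∘ₗ g ∘ₗ Psi π γ'

variable {g c}

lemma pmap_apply (x : H) : pmap π γ' g c x = aS c * g (Psi π γ' x) := rfl

lemma iota_g_psi (hh : Hyp ι π γ γ') (hg : ∀ a, g (ι a) = a) (x : H) :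
    ι (g (Psi π γ' x)) = Psi π γ' x := by
  obtain ⟨w, hw⟩ := Psi_range hh x
  rw [← hw, hg]

lemma iota_c (hh : Hyp ι π γ γ') (hc : ι c = γ' 1) : ι c = γ' 1 := hc

lemma counit_c (hh : Hyp ι π γ γ') (hc : ι c = γ' 1) : ε c = 1 := by
  have h := hh.hCbF.ι_counit c
  rw [hc, counit_v hh] at h
  exact h.symm

lemma iota_Sc (hh : Hyp ι π γ γ') (hc : ι c = γ' 1) : ι (aS c) = γ 1 := by
  rw [hh.hCbF.ι_antipode, hc, Sv_eq_u hh]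

lemma c_mul_Sc (hh : Hyp ι π γ γ') (hc : ι c = γ' 1) : c * aS c = 1 := by
  apply hh.hCbF.ι_inj
  rw [hh.hCbF.ι_mul, hc, iota_Sc hh hc, hh.hCbF.ι_one, vu_one hh]

lemma Sc_mul_c (hh : Hyp ι π γ γ') (hc : ι c = γ' 1) : aS c * c = 1 := by
  apply hh.hCbF.ι_inj
  rw [hh.hCbF.ι_mul, hc, iota_Sc hh hc, hh.hCbF.ι_one, uv_one hh]

lemma comul_d (hh : Hyp ι π γ γ') (hc : ι c = γ' 1) :
    Coalgebra.comul (R := k) (aS c) = aS c ⊗ₜ[k] aS c := by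
  apply map_iota_inj hh
  rw [← hh.hCbF.ι_comul, iota_Sc hh hc, comul_u hh, _root_.TensorProduct.map_tmul,
    iota_Sc hh hc]

lemma counit_d (hh : Hyp ι π γ γ') (hc : ι c = γ' 1) : ε (aS c) = 1 := by
  have h := hh.hCbF.ι_counit (aS c)
  rw [iota_Sc hh hc, counit_u hh] at h
  exact h.symm

lemma pmap_gamma_iota (hh : Hyp ι π γ γ') (hg : ∀ a, g (ι a) = a) (hc : ι c = γ' 1)
    (b : Hb) (a : A) :
    pmap π γ' g c (γ b * ι a) = ε b • (aS c * a) := by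
  have h1 : ι (g (Psi π γ' (γ b * ι a))) = ι (ε b • a) := by
    rw [iota_g_psi hh hg, Psi_gamma_iota hh, map_smul]
  have h2 := hh.hCbF.ι_inj h1
  rw [pmap_apply, h2, mul_smul_comm]

lemma pmap_iota (hh : Hyp ι π γ γ') (hg : ∀ a, g (ι a) = a) (hc : ι c = γ' 1)
    (a : A) : pmap π γ' g c (ι a) = a := by
  have h1 : ι (g (Psi π γ' (ι a))) = ι (c * a) := by
    rw [iota_g_psi hh hg, Psi_iota hh, ← hc, ← hh.hCbF.ι_mul]
  have h2 := hh.hCbF.ι_inj h1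
  rw [pmap_apply, h2, ← mul_assoc, Sc_mul_c hh hc, one_mul]

lemma pmap_mul_iota (hh : Hyp ι π γ γ') (hg : ∀ a, g (ι a) = a) (hc : ι c = γ' 1)
    (x : H) (a : A) : pmap π γ' g c (x * ι a) = pmap π γ' g c x * a := by
  have h1 : ι (g (Psi π γ' (x * ι a))) = ι (g (Psi π γ' x) * a) := by
    rw [iota_g_psi hh hg, Psi_mul_iota hh, hh.hCbF.ι_mul, iota_g_psi hh hg]
  have h2 := hh.hCbF.ι_inj h1
  rw [pmap_apply, h2, pmap_apply, mul_assoc]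

lemma counit_comp_pmap (hh : Hyp ι π γ γ') (hg : ∀ a, g (ι a) = a) (hc : ι c = γ' 1) :
    (Coalgebra.counit (R := k) (A := A)) ∘ₗ pmap π γ' g c
      = (Coalgebra.counit (R := k) (A := H)) := by
  refine ext_of_gen hh _ _ fun b a => ?_
  rw [LinearMap.comp_apply, pmap_gamma_iota hh hg hc, map_smul, Bialgebra.counit_mul,
    counit_d hh hc, one_mul, Bialgebra.counit_mul, hh.hγ_counit, hh.hCbF.ι_counit,
    smul_eq_mul]

/-- Generators of the coideal complement `X₀`. -/
def X0gen : Set H := {y : H | ∃ (b : Hb) (a : A), ε b = 0 ∧ y = γ b * ι a}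

lemma X0_sub_ker (hh : Hyp ι π γ γ') (hg : ∀ a, g (ι a) = a) (hc : ι c = γ' 1) :
    Submodule.span k (X0gen (ι := ι) (γ := γ)) ≤ LinearMap.ker (pmap π γ' g c) := by
  rw [Submodule.span_le]
  rintro y ⟨b, a, hb, rfl⟩
  simp only [SetLike.mem_coe, LinearMap.mem_ker]
  rw [pmap_gamma_iota hh hg hc, hb, zero_smul]

lemma ker_sub_X0 (hh : Hyp ι π γ γ') (hg : ∀ a, g (ι a) = a) (hc : ι c = γ' 1)
    (x : H) (hx : pmap π γ' g c x = 0) :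
    x ∈ Submodule.span k (X0gen (ι := ι) (γ := γ)) := by
  set N : H →ₗ[k] H := LinearMap.id -
    (LinearMap.mulLeft k (γ (1 : Hb))) ∘ₗ ι ∘ₗ (LinearMap.mulLeft k c) ∘ₗ pmap π γ' g c
    with hN
  have hNx : ∀ h : H, N h ∈ Submodule.span k (X0gen (ι := ι) (γ := γ)) := by
    refine mem_of_gen hh _ N fun b a => ?_
    have hval : N (γ b * ι a) = γ (b - ε b • 1) * ι a := by
      have h1 : c * (ε b • (aS c * a)) = ε b • a := by
        rw [mul_smul_comm, ← mul_assoc, c_mul_Sc hh hc, one_mul]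
      simp only [hN, LinearMap.sub_apply, LinearMap.id_apply, LinearMap.comp_apply,
        LinearMap.mulLeft_apply]
      rw [pmap_gamma_iota hh hg hc, h1, map_smul, mul_smul_comm, map_sub, map_smul,
        sub_mul, smul_mul_assoc]
    rw [hval]
    refine Submodule.subset_span ⟨b - ε b • 1, a, ?_, rfl⟩
    rw [map_sub, map_smul, Bialgebra.counit_one, smul_eq_mul, mul_one, sub_self]
  have hx2 : N x = x := by
    simp only [hN, LinearMap.sub_apply, LinearMap.id_apply, LinearMap.comp_apply,
      LinearMap.mulLeft_apply, hx, mul_zero, map_zero, sub_zero]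
  rw [← hx2]
  exact hNx x

lemma comul_split {b : Hb} {I_rb : Type} (rb : Coalgebra.Repr k b I_rb) :
    Coalgebra.comul (R := k) b = (1 : Hb) ⊗ₜ[k] b +
      ∑ i ∈ rb.index, (rb.left i - ε (rb.left i) • 1) ⊗ₜ[k] rb.right i := by
  have h1 : ∑ i ∈ rb.index, (rb.left i - ε (rb.left i) • 1) ⊗ₜ[k] rb.right i
      = (∑ i ∈ rb.index, rb.left i ⊗ₜ[k] rb.right i)
        - ∑ i ∈ rb.index, ε (rb.left i) • ((1 : Hb) ⊗ₜ[k] rb.right i) := by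
    rw [← Finset.sum_sub_distrib]
    refine Finset.sum_congr rfl fun i _ => ?_
    rw [TensorProduct.sub_tmul, TensorProduct.smul_tmul']
  have h2 : ∑ i ∈ rb.index, ε (rb.left i) • ((1 : Hb) ⊗ₜ[k] rb.right i)
      = (1 : Hb) ⊗ₜ[k] b := by
    simp only [← TensorProduct.tmul_smul, ← TensorProduct.tmul_sum]
    rw [sum_counit_smul]
  rw [h1, h2, rb.eq, add_sub_cancel]

lemma cosplit (hh : Hyp ι π γ γ') (hg : ∀ a, g (ι a) = a) (hc : ι c = γ' 1) :
    Paper.CoSplit k A H (pmap π γ' g c) := by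
  constructor
  · intro x hx
    rw [LinearMap.mem_ker] at hx
    have h := LinearMap.congr_fun (counit_comp_pmap hh hg hc) x
    rw [LinearMap.comp_apply, hx, map_zero] at h
    exact h.symm
  · intro x hx
    rw [LinearMap.mem_ker] at hx
    set X := LinearMap.ker (pmap π γ' g c)
    set T := LinearMap.range (_root_.TensorProduct.map X.subtype (LinearMap.id (M := H))) ⊔
      LinearMap.range (_root_.TensorProduct.map (LinearMap.id (M := H)) X.subtype) with hT
    have hmem1 : ∀ (w z : H), pmap π γ' g c w = 0 → w ⊗ₜ[k] z ∈ T := by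
      intro w z hw
      exact Submodule.mem_sup_left ⟨(⟨w, hw⟩ : X) ⊗ₜ[k] z, by simp⟩
    have hmem2 : ∀ (w z : H), pmap π γ' g c z = 0 → w ⊗ₜ[k] z ∈ T := by
      intro w z hz
      exact Submodule.mem_sup_right ⟨w ⊗ₜ[k] (⟨z, hz⟩ : X), by simp⟩
    have hx0 := ker_sub_X0 hh hg hc x hx
    have hle : Submodule.span k (X0gen (ι := ι) (γ := γ)) ≤
        T.comap (Coalgebra.comul (R := k)) := by
      rw [Submodule.span_le]
      rintro y ⟨b, a, hb, rfl⟩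
      simp only [SetLike.mem_coe, Submodule.mem_comap]
      classical
      set rb := ℛ k b with hrb
      set ra := ℛ k a with hra
      have hcm : Coalgebra.comul (R := k) (γ b * ι a)
          = ∑ j ∈ ra.index, (γ 1 * ι (ra.left j)) ⊗ₜ[k] (γ b * ι (ra.right j))
            + ∑ i ∈ rb.index, ∑ j ∈ ra.index,
              (γ (rb.left i - ε (rb.left i) • 1) * ι (ra.left j)) ⊗ₜ[k]
                (γ (rb.right i) * ι (ra.right j)) := by
        rw [Bialgebra.comul_mul, hh.hγ_comul b, hh.hCbF.ι_comul a,
          comul_split rb, ← ra.eq, map_add, add_mul]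
        congr 1
        · rw [_root_.TensorProduct.map_tmul, map_sum, Finset.mul_sum]
          refine Finset.sum_congr rfl fun j _ => ?_
          rw [_root_.TensorProduct.map_tmul, Algebra.TensorProduct.tmul_mul_tmul]
        · rw [map_sum, map_sum, Finset.sum_mul_sum]
          refine Finset.sum_congr rfl fun i _ => Finset.sum_congr rfl fun j _ => ?_
          rw [_root_.TensorProduct.map_tmul, _root_.TensorProduct.map_tmul,
            Algebra.TensorProduct.tmul_mul_tmul]
      rw [hcm]
      refine Submodule.add_mem _ (Submodule.sum_mem _ fun j _ => ?_)
        (Submodule.sum_mem _ fun i _ => Submodule.sum_mem _ fun j _ => ?_)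
      · refine hmem2 _ _ ?_
        rw [pmap_gamma_iota hh hg hc, hb, zero_smul]
      · refine hmem1 _ _ ?_
        rw [pmap_gamma_iota hh hg hc]
        rw [map_sub, map_smul, Bialgebra.counit_one, smul_eq_mul, mul_one, sub_self,
          zero_smul]
    exact hle hx0

end WithGC

end Main2

end S5Aux
namespace S5Aux

open TensorProduct HopfAlgebra LinearMap
open scoped Coalgebra

variable {k : Type} [Field k]

lemma exists_finite_compl {V : Type} [AddCommGroup V] [Module k V] (N : Submodule k V)
    (hfd : FiniteDimensional k (V ⧸ N)) :
    ∃ L : Set V, L.Finite ∧ Submodule.span k L ⊔ N = ⊤ := by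
  obtain ⟨s, hs⟩ := Module.Finite.fg_top (R := k) (M := V ⧸ N)
  choose f hf using Submodule.mkQ_surjective N
  refine ⟨f '' ↑s, s.finite_toSet.image f, ?_⟩
  rw [eq_top_iff]
  intro v _
  have himg : N.mkQ '' (f '' ↑s) = ↑s := by
    rw [Set.image_image]
    simp only [hf, Set.image_id']
  have hv : N.mkQ v ∈ Submodule.span k (N.mkQ '' (f '' ↑s)) := by
    rw [himg, hs]; trivial
  rw [Submodule.span_image, Submodule.mem_map] at hv
  obtain ⟨w, hw, hwv⟩ := hv
  have : v - w ∈ N := by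
    rw [← Submodule.ker_mkQ N, LinearMap.mem_ker, map_sub, hwv, sub_self]
  have hv2 : v = w + (v - w) := by abel
  rw [hv2]
  exact Submodule.add_mem _ (Submodule.mem_sup_left hw) (Submodule.mem_sup_right this)

section Main3

variable {A H Hb : Type} [CommRing A] [HopfAlgebra k A]
  [Ring H] [HopfAlgebra k H] [Ring Hb] [HopfAlgebra k Hb]

local notation "aS" => HopfAlgebra.antipode (R := k)
local notation "ε" => Coalgebra.counit (R := k)

variable {ι : A →ₗ[k] H} {π : H →ₗ[k] Hb} {γ γ' : Hb →ₗ[k] H}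
variable {g : H →ₗ[k] A} {c : A}

lemma adr_iota_iota (hh : Hyp ι π γ γ') (a' x : A) :
    Paper.adr k H (ι a') (ι x) = ε a' • ι x := by
  classical
  set r := ℛ k a' with hr
  rw [adr_repr _ _ (mapRepr ι (hh.hCbF.ι_comul a') r)]
  simp only [mapRepr, Function.comp]
  have hterm : ∀ i, (aS (ι (r.left i)) * ι x) * ι (r.right i)
      = ι (x * (aS (r.left i) * r.right i)) := by
    intro i
    rw [← hh.hCbF.ι_antipode, ← hh.hCbF.ι_mul, ← hh.hCbF.ι_mul]
    congr 1
    rw [mul_comm (HopfAlgebra.antipode k (r.left i)) x, mul_assoc]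
  simp only [hterm, ← map_sum, ← Finset.mul_sum]
  rw [HopfAlgebra.sum_antipode_mul_eq_smul r, mul_smul_comm, mul_one, map_smul]

lemma adr_smul_right (h : H) (s : k) (w : H) :
    Paper.adr k H h (s • w) = s • Paper.adr k H h w := by
  classical
  rw [adr_repr h _ (ℛ k h), adr_repr h w (ℛ k h), Finset.smul_sum]
  refine Finset.sum_congr rfl fun i _ => ?_
  rw [mul_smul_comm, smul_mul_assoc]

lemma adr_one_right (x : H) : Paper.adr k H (1 : H) x = x := by
  rw [adr_repr _ _ (oneRepr (B := H))]
  simp [oneRepr, antipode_one']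

/-- `adr · (ι x)` as a linear map in the first argument. -/
noncomputable def adX (ι : A →ₗ[k] H) (x : A) : H →ₗ[k] H :=
  (TensorProduct.lift ((LinearMap.mul k H).comp ((LinearMap.mulRight k (ι x)) ∘ₗ
    (HopfAlgebra.antipode (R := k))))) ∘ₗ Coalgebra.comul

lemma adX_apply (x : A) (h : H) : adX ι x h = Paper.adr k H h (ι x) := rfl

lemma finDual_pmap (hh : Hyp ι π γ γ') (hg : ∀ a, g (ι a) = a) (hc : ι c = γ' 1)
    (α : Module.Dual k A) (hα : α ∈ Paper.finDual k A) :
    Paper.PiDual k A H (pmap π γ' g c) α ∈ Paper.finDual k H := by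
  classical
  obtain ⟨I, hImul, hIker, hIfd⟩ := hα
  haveI := hh.hQ.findim
  set n := Module.finrank k Hb with hn
  set B : Module.Basis (Fin n) k Hb := Module.finBasis k Hb with hB
  -- the maps T j : A →ₗ[k] A, x ↦ p (adr (γ (B j)) (ι x))
  set Gmap : Fin n → (A →ₗ[k] H) := fun j =>
    ∑ i ∈ (ℛ k (γ (B j))).index,
      (LinearMap.mulRight k ((ℛ k (γ (B j))).right i)) ∘ₗ
      (LinearMap.mulLeft k (aS ((ℛ k (γ (B j))).left i))) ∘ₗ ι with hGmap
  have hG : ∀ j x, Gmap j x = Paper.adr k H (γ (B j)) (ι x) := by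
    intro j x
    rw [adr_repr _ _ (ℛ k (γ (B j)))]
    simp [hGmap, LinearMap.sum_apply]
  set T : Fin n → (A →ₗ[k] A) := fun j => pmap π γ' g c ∘ₗ Gmap j with hT
  have hiotaT : ∀ j x, ι (T j x) = Paper.adr k H (γ (B j)) (ι x) := by
    intro j x
    obtain ⟨z, hz⟩ := hh.hCbF.normal_right (γ (B j)) x
    have h1 : T j x = pmap π γ' g c (Gmap j x) := rfl
    rw [h1, hG, ← hz, pmap_iota hh hg hc, hz]
  set I2 : Submodule k A := ⨅ j : Fin n, I.comap (T j) with hI2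
  have hI2mem : ∀ x ∈ I2, ∀ j, T j x ∈ I := by
    intro x hx j
    rw [hI2, Submodule.mem_iInf] at hx
    exact hx j
  -- key invariance
  have hkey : ∀ x ∈ I2, ∀ h : H, Paper.adr k H h (ι x) ∈ Submodule.map ι I := by
    intro x hx h
    have hle : Submodule.span k (Ngen (ι := ι) (γ := γ)) ≤
        (Submodule.map ι I).comap (adX ι x) := by
      rw [Submodule.span_le]
      rintro y ⟨a, b, rfl⟩
      simp only [SetLike.mem_coe, Submodule.mem_comap, adX_apply]
      rw [adr_mul, adr_iota_iota hh, adr_smul_right]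
      refine Submodule.smul_mem _ _ ?_
      -- adr (γ b) (ι x) ∈ map ι I
      have hb : γ b = ∑ j, B.repr b j • γ (B j) := by
        conv_lhs => rw [← B.sum_repr b]
        rw [map_sum]
        simp
      have hlin : Paper.adr k H (γ b) (ι x)
          = ∑ j, B.repr b j • Paper.adr k H (γ (B j)) (ι x) := by
        rw [← adX_apply, hb, map_sum]
        simp only [map_smul, adX_apply]
      rw [hlin]
      refine Submodule.sum_mem _ fun j _ => Submodule.smul_mem _ _ ?_
      rw [← hiotaT]
      exact Submodule.mem_map_of_mem (hI2mem x hx j)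
    have := hle (by rw [Ntop hh]; trivial : h ∈ Submodule.span k (Ngen (ι := ι) (γ := γ)))
    rw [Submodule.mem_comap, adX_apply] at this
    exact this
  have hI2I : I2 ≤ I := by
    intro x hx
    have h1 := hkey x hx 1
    rw [adr_one_right] at h1
    obtain ⟨w, hw, hw2⟩ := h1
    rw [← hh.hCbF.ι_inj hw2]
    exact hw
  -- stability of I2
  have hstab : ∀ x ∈ I2, ∀ h : H, ∃ y ∈ I2, Paper.adr k H h (ι x) = ι y := by
    intro x hx h
    obtain ⟨y, hy⟩ := hh.hCbF.normal_right h x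
    refine ⟨y, ?_, hy.symm⟩
    rw [hI2, Submodule.mem_iInf]
    intro j
    rw [Submodule.mem_comap]
    have h1 : ι (T j y) = Paper.adr k H (h * γ (B j)) (ι x) := by
      rw [hiotaT, hy, adr_mul]
    obtain ⟨w, hw, hw2⟩ := hkey x hx (h * γ (B j))
    have h2 : T j y = w := hh.hCbF.ι_inj (by rw [h1, ← hw2])
    rw [h2]; exact hw
  -- the ideal J
  set J : Submodule k H :=
    Submodule.span k {z : H | ∃ (h : H) (x : A), x ∈ I2 ∧ z = h * ι x} with hJ
  have hJgen : ∀ (h : H) (x : A), x ∈ I2 → h * ι x ∈ J :=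
    fun h x hx => Submodule.subset_span ⟨h, x, hx, rfl⟩
  have hJleft : ∀ (h : H), ∀ z ∈ J, h * z ∈ J := by
    intro h z hz
    have hle : J ≤ J.comap (LinearMap.mulLeft k h) := by
      rw [hJ, Submodule.span_le]
      rintro y ⟨h', x, hx, rfl⟩
      simp only [SetLike.mem_coe, Submodule.mem_comap, LinearMap.mulLeft_apply]
      rw [← mul_assoc]
      exact hJgen _ _ hx
    exact hle hz
  have hiotaJ : ∀ (x : A), x ∈ I2 → ∀ h : H, ι x * h ∈ J := by
    intro x hx h
    rw [iota_mul_expand x h (ℛ k h)]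
    refine Submodule.sum_mem _ fun i _ => ?_
    obtain ⟨y, hy, hy2⟩ := hstab x hx ((ℛ k h).right i)
    rw [hy2]
    exact hJgen _ _ hy
  have hJright : ∀ (h : H), ∀ z ∈ J, z * h ∈ J := by
    intro h z hz
    have hle : J ≤ J.comap (LinearMap.mulRight k h) := by
      rw [hJ, Submodule.span_le]
      rintro y ⟨h', x, hx, rfl⟩
      simp only [SetLike.mem_coe, Submodule.mem_comap, LinearMap.mulRight_apply]
      rw [mul_assoc]
      exact hJleft h' _ (hiotaJ x hx h)
    exact hle hz
  -- J is contained in the kernel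
  have hJker : J ≤ LinearMap.ker (Paper.PiDual k A H (pmap π γ' g c) α) := by
    rw [hJ, Submodule.span_le]
    rintro y ⟨h, x, hx, rfl⟩
    simp only [SetLike.mem_coe, LinearMap.mem_ker]
    show α (pmap π γ' g c (h * ι x)) = 0
    rw [pmap_mul_iota hh hg hc]
    have : pmap π γ' g c h * x ∈ I := (hImul (pmap π γ' g c h) x (hI2I hx)).1
    exact hIker this
  -- finite codimension of I2
  have hI2fd : FiniteDimensional k (A ⧸ I2) := by
    set φ : A →ₗ[k] (Fin n → A ⧸ I) := LinearMap.pi (fun j => I.mkQ ∘ₗ T j) with hφ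
    have hkerφ : I2 ≤ LinearMap.ker φ := by
      intro x hx
      rw [LinearMap.mem_ker]
      funext j
      show (I.mkQ ∘ₗ T j) x = 0
      rw [LinearMap.comp_apply, Submodule.mkQ_apply, Submodule.Quotient.mk_eq_zero]
      exact hI2mem x hx j
    have hker2 : LinearMap.ker φ ≤ I2 := by
      intro x hx
      rw [LinearMap.mem_ker] at hx
      rw [hI2, Submodule.mem_iInf]
      intro j
      rw [Submodule.mem_comap, ← Submodule.Quotient.mk_eq_zero, ← Submodule.mkQ_apply]
      exact congrFun hx j
    haveI : FiniteDimensional k (Fin n → A ⧸ I) := by infer_instance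
    refine FiniteDimensional.of_injective (I2.liftQ φ hkerφ) ?_
    rw [← LinearMap.ker_eq_bot]
    exact Submodule.ker_liftQ_eq_bot I2 φ hkerφ hker2
  -- finite complement of I2 in A
  obtain ⟨L, hLfin, hLspan⟩ := exists_finite_compl I2 hI2fd
  -- finite dimensionality of H ⧸ J
  have hHJfd : FiniteDimensional k (H ⧸ J) := by
    set qj : Fin n → (A →ₗ[k] H ⧸ J) :=
      fun j => J.mkQ ∘ₗ (LinearMap.mulLeft k (γ (B j))) ∘ₗ ι with hqj
    set S : Submodule k (H ⧸ J) :=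
      Submodule.span k (⋃ j : Fin n, (qj j) '' L) with hS
    have hqjI2 : ∀ j, ∀ x ∈ I2, qj j x = 0 := by
      intro j x hx
      show J.mkQ (γ (B j) * ι x) = 0
      rw [Submodule.mkQ_apply, Submodule.Quotient.mk_eq_zero]
      exact hJgen _ _ hx
    have hqjmem : ∀ j (a : A), qj j a ∈ S := by
      intro j a
      have ha : a ∈ Submodule.span k L ⊔ I2 := by rw [hLspan]; trivial
      rw [Submodule.mem_sup] at ha
      obtain ⟨y, hy, z, hz, rfl⟩ := ha
      rw [map_add, hqjI2 j z hz, add_zero]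
      have h2 : Submodule.span k L ≤ S.comap (qj j) := by
        rw [Submodule.span_le]
        intro w hw
        simp only [SetLike.mem_coe, Submodule.mem_comap]
        exact Submodule.subset_span (Set.mem_iUnion.mpr ⟨j, Set.mem_image_of_mem _ hw⟩)
      exact h2 hy
    have hqtop : ∀ h : H, J.mkQ h ∈ S := by
      refine mem_of_gen hh S J.mkQ fun b a => ?_
      have hb : γ b * ι a = ∑ j, B.repr b j • (γ (B j) * ι a) := by
        have h1 : γ b = ∑ j, B.repr b j • γ (B j) := by
          conv_lhs => rw [← B.sum_repr b]
          rw [map_sum]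
          simp
        rw [h1, Finset.sum_mul]
        refine Finset.sum_congr rfl fun j _ => ?_
        rw [smul_mul_assoc]
      rw [hb, map_sum]
      refine Submodule.sum_mem _ fun j _ => ?_
      rw [map_smul]
      refine Submodule.smul_mem _ _ ?_
      exact hqjmem j a
    have hfg : (⊤ : Submodule k (H ⧸ J)).FG := by
      rw [Submodule.fg_def]
      refine ⟨⋃ j : Fin n, (qj j) '' L, ?_, ?_⟩
      · exact Set.finite_iUnion fun j => hLfin.image _
      · rw [eq_top_iff]
        intro y _
        obtain ⟨h, rfl⟩ := Submodule.mkQ_surjective J y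
        exact hqtop h
    exact ⟨hfg⟩
  exact ⟨J, fun h => fun z hz => ⟨hJleft h z hz, hJright h z hz⟩, hJker, hHJfd⟩

end Main3

end S5Aux
namespace S5Aux

open TensorProduct HopfAlgebra LinearMap
open scoped Coalgebra

variable {k : Type} [Field k]

section Main4

variable {A H Hb : Type} [CommRing A] [HopfAlgebra k A]
  [Ring H] [HopfAlgebra k H] [Ring Hb] [HopfAlgebra k Hb]

local notation "aS" => HopfAlgebra.antipode (R := k)
local notation "ε" => Coalgebra.counit (R := k)

variable {ι : A →ₗ[k] H} {π : H →ₗ[k] Hb} {γ γ' : Hb →ₗ[k] H}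
variable {g : H →ₗ[k] A} {c : A}

lemma scalar_counit_left {C : Type} [AddCommMonoid C] [Module k C] [Coalgebra k C]
    (f : Module.Dual k C) {b : C} {I_r : Type} (r : Coalgebra.Repr k b I_r) :
    ∑ i ∈ r.index, ε (r.left i) * f (r.right i) = f b := by
  calc ∑ i ∈ r.index, ε (r.left i) * f (r.right i)
      = ∑ i ∈ r.index, f (ε (r.left i) • r.right i) := by
        refine Finset.sum_congr rfl fun i _ => ?_
        rw [map_smul, smul_eq_mul]
    _ = f b := by rw [← map_sum, sum_counit_smul]

lemma scalar_counit_right {C : Type} [AddCommMonoid C] [Module k C] [Coalgebra k C]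
    (f : Module.Dual k C) {b : C} {I_r : Type} (r : Coalgebra.Repr k b I_r) :
    ∑ i ∈ r.index, ε (r.right i) * f (r.left i) = f b := by
  calc ∑ i ∈ r.index, ε (r.right i) * f (r.left i)
      = ∑ i ∈ r.index, f (ε (r.right i) • r.left i) := by
        refine Finset.sum_congr rfl fun i _ => ?_
        rw [map_smul, smul_eq_mul]
    _ = f b := by rw [← map_sum, sum_smul_counit]

lemma alpha_collect_left (α : Module.Dual k A) (w : A) {a : A} {I_ra : Type} (ra : Coalgebra.Repr k a I_ra) :
    ∑ j ∈ ra.index, ε (ra.left j) * α (w * ra.right j) = α (w * a) := by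
  calc ∑ j ∈ ra.index, ε (ra.left j) * α (w * ra.right j)
      = ∑ j ∈ ra.index, α (w * (ε (ra.left j) • ra.right j)) := by
        refine Finset.sum_congr rfl fun j _ => ?_
        rw [mul_smul_comm, map_smul, smul_eq_mul]
    _ = α (w * a) := by rw [← map_sum, ← Finset.mul_sum, sum_counit_smul]

lemma alpha_collect_right (α : Module.Dual k A) (w : A) {a : A} {I_ra : Type} (ra : Coalgebra.Repr k a I_ra) :
    ∑ j ∈ ra.index, ε (ra.right j) * α (w * ra.left j) = α (w * a) := by
  calc ∑ j ∈ ra.index, ε (ra.right j) * α (w * ra.left j)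
      = ∑ j ∈ ra.index, α (w * (ε (ra.right j) • ra.left j)) := by
        refine Finset.sum_congr rfl fun j _ => ?_
        rw [mul_smul_comm, map_smul, smul_eq_mul]
    _ = α (w * a) := by rw [← map_sum, ← Finset.mul_sum, sum_smul_counit]

/-- Evaluation formula: `(π°β ⋆ Π°α)(γ(b)ι(a)) = β(b) α(S(c) a)`. -/
lemma conv_eval (hh : Hyp ι π γ γ') (hg : ∀ a, g (ι a) = a) (hc : ι c = γ' 1)
    (β : Module.Dual k Hb) (α : Module.Dual k A) (b : Hb) (a : A) :
    Paper.conv k (Paper.piDual k H Hb π β)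
      (Paper.PiDual k A H (pmap π γ' g c) α) (γ b * ι a)
      = β b * α (aS c * a) := by
  classical
  set rb := ℛ k b with hrb
  set ra := ℛ k a with hra
  rw [conv_repr _ _ (mulRepr (mapRepr γ (hh.hγ_comul b) rb)
    (mapRepr ι (hh.hCbF.ι_comul a) ra))]
  simp only [mulRepr, mapRepr, Function.comp, Paper.piDual, Paper.PiDual,
    LinearMap.comp_apply]
  rw [Finset.sum_product]
  have hterm : ∀ i j,
      β (π (γ (rb.left i) * ι (ra.left j))) *
        α (pmap π γ' g c (γ (rb.right i) * ι (ra.right j)))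
      = (ε (rb.right i) * β (rb.left i)) * (ε (ra.left j) * α (aS c * ra.right j)) := by
    intro i j
    rw [hh.hQ.π_mul, pi_gamma hh, pi_iota hh, pmap_gamma_iota hh hg hc,
      mul_smul_comm, mul_one, map_smul, map_smul, smul_eq_mul, smul_eq_mul]
    ring
  simp only [hterm]
  rw [← Finset.sum_mul_sum, scalar_counit_right β rb, alpha_collect_left α _ ra]

/-- Evaluation formula for the other order: `(Π°α ⋆ π°β)(γ(b)ι(a)) = β(b) α(S(c) a)`. -/
lemma conv_eval2 (hh : Hyp ι π γ γ') (hg : ∀ a, g (ι a) = a) (hc : ι c = γ' 1)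
    (β : Module.Dual k Hb) (α : Module.Dual k A) (b : Hb) (a : A) :
    Paper.conv k (Paper.PiDual k A H (pmap π γ' g c) α)
      (Paper.piDual k H Hb π β) (γ b * ι a)
      = β b * α (aS c * a) := by
  classical
  set rb := ℛ k b with hrb
  set ra := ℛ k a with hra
  rw [conv_repr _ _ (mulRepr (mapRepr γ (hh.hγ_comul b) rb)
    (mapRepr ι (hh.hCbF.ι_comul a) ra))]
  simp only [mulRepr, mapRepr, Function.comp, Paper.piDual, Paper.PiDual,
    LinearMap.comp_apply]
  rw [Finset.sum_product]
  have hterm : ∀ i j,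
      α (pmap π γ' g c (γ (rb.left i) * ι (ra.left j))) *
        β (π (γ (rb.right i) * ι (ra.right j)))
      = (ε (rb.left i) * β (rb.right i)) * (ε (ra.right j) * α (aS c * ra.left j)) := by
    intro i j
    rw [hh.hQ.π_mul, pi_gamma hh, pi_iota hh, pmap_gamma_iota hh hg hc,
      mul_smul_comm, mul_one, map_smul, map_smul, smul_eq_mul, smul_eq_mul]
    ring
  simp only [hterm]
  rw [← Finset.sum_mul_sum, scalar_counit_left β rb, alpha_collect_right α _ ra]

/-- `Π°` is an algebra map. -/
lemma pmap_alg (hh : Hyp ι π γ γ') (hg : ∀ a, g (ι a) = a) (hc : ι c = γ' 1)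
    (α β : Module.Dual k A) :
    Paper.PiDual k A H (pmap π γ' g c) (Paper.conv k α β)
      = Paper.conv k (Paper.PiDual k A H (pmap π γ' g c) α)
          (Paper.PiDual k A H (pmap π γ' g c) β) := by
  classical
  refine ext_of_gen hh _ _ fun b a => ?_
  set rb := ℛ k b with hrb
  set ra := ℛ k a with hra
  have hRHS : Paper.conv k (Paper.PiDual k A H (pmap π γ' g c) α)
      (Paper.PiDual k A H (pmap π γ' g c) β) (γ b * ι a)
      = ε b * (∑ j ∈ ra.index, α (aS c * ra.left j) * β (aS c * ra.right j)) := by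
    rw [conv_repr _ _ (mulRepr (mapRepr γ (hh.hγ_comul b) rb)
      (mapRepr ι (hh.hCbF.ι_comul a) ra))]
    simp only [mulRepr, mapRepr, Function.comp, Paper.PiDual, LinearMap.comp_apply]
    rw [Finset.sum_product]
    have hterm : ∀ i j,
        α (pmap π γ' g c (γ (rb.left i) * ι (ra.left j))) *
          β (pmap π γ' g c (γ (rb.right i) * ι (ra.right j)))
        = (ε (rb.left i) * ε (rb.right i)) *
            (α (aS c * ra.left j) * β (aS c * ra.right j)) := by
      intro i j
      rw [pmap_gamma_iota hh hg hc, pmap_gamma_iota hh hg hc, map_smul, map_smul,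
        smul_eq_mul, smul_eq_mul]
      ring
    simp only [hterm]
    rw [← Finset.sum_mul_sum, sum_counit_counit rb]
  have hLHS : Paper.PiDual k A H (pmap π γ' g c) (Paper.conv k α β) (γ b * ι a)
      = ε b * (∑ j ∈ ra.index, α (aS c * ra.left j) * β (aS c * ra.right j)) := by
    simp only [Paper.PiDual, LinearMap.comp_apply]
    rw [pmap_gamma_iota hh hg hc, map_smul, smul_eq_mul]
    congr 1
    rw [conv_repr _ _ (mulRepr (gpRepr (comul_d hh hc)) ra)]
    simp only [mulRepr, gpRepr]
    rw [Finset.sum_product, Finset.sum_singleton]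
  rw [hLHS, hRHS]

end Main4

end S5Aux

open Paper in
/-- If `H = A #_σ H̄` is a crossed product whose cleaving map
`γ : H̄ → H` is a coalgebra map, then (CoSplit) holds, the induced action of
`A°` on `H̄*` is trivial, and `H° ≅ H̄* ⊗ A°` as algebras, left `H̄*`-modules,
and right `A°`-comodules. -/
theorem statement_5
    (k : Type) [Field k] [IsAlgClosed k]
    (A : Type) [CommRing A] [HopfAlgebra k A]
    (H : Type) [Ring H] [HopfAlgebra k H]
    (Hb : Type) [Ring Hb] [HopfAlgebra k Hb]
    (ι : A →ₗ[k] H) (π : H →ₗ[k] Hb)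
    (hCbF : CommByFinite k A H ι)
    (hQ : IsHbarQuotient k A H Hb ι π)
    (hyp : StandingHyp k A H ι)
    -- `γ` is a cleaving map which is a coalgebra map:
    (γ : Hb →ₗ[k] H)
    (hγ_comul : ∀ b : Hb,
      Coalgebra.comul (R := k) (γ b) = TensorProduct.map γ γ (Coalgebra.comul b))
    (hγ_counit : ∀ b : Hb,
      Coalgebra.counit (R := k) (γ b) = Coalgebra.counit (R := k) b)
    -- `γ` is a right `H̄`-comodule map
    (hγ_comod : ∀ b : Hb,
      TensorProduct.map (LinearMap.id (M := H)) π (Coalgebra.comul (R := k) (γ b))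
        = TensorProduct.map γ (LinearMap.id (M := Hb)) (Coalgebra.comul b))
    -- `γ` is convolution invertible
    (hγ_inv : ∃ γ' : Hb →ₗ[k] H, ∀ (b : Hb) (n : ℕ) (l r : Fin n → Hb),
      Coalgebra.comul (R := k) b = ∑ i, l i ⊗ₜ[k] r i →
      (∑ i, γ (l i) * γ' (r i)) = Coalgebra.counit (R := k) b • (1 : H) ∧
      (∑ i, γ' (l i) * γ (r i)) = Coalgebra.counit (R := k) b • (1 : H))
    -- `H = A #_σ H̄` as an algebra: `H = A·γ(H̄)`, i.e. `(a, b) ↦ ι(a)γ(b)`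
    -- spans `H` freely
    (hcross : ∀ h : H, ∃ (n : ℕ) (a : Fin n → A) (b : Fin n → Hb),
      LinearIndependent k b ∧ h = ∑ i, ι (a i) * γ (b i)) :
    -- conclusion: for a suitable splitting `Π` (with `X = ker Π = A·γ(ker ε)`),
    ∃ p : H →ₗ[k] A, IsSplitting k A H ι p ∧
      -- (CoSplit) holds
      CoSplit k A H p ∧
      -- `Π°` is an algebra map `A° → H°`
      (∀ α β : Module.Dual k A,
        PiDual k A H p (conv k α β)
          = conv k (PiDual k A H p α) (PiDual k A H p β)) ∧
      PiDual k A H p (convOne k) = convOne k ∧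
      (∀ α ∈ finDual k A, PiDual k A H p α ∈ finDual k H) ∧
      -- the action of `A°` on `H̄*` is trivial: `Π°(A°)` and `π°(H̄*)` commute
      (∀ α ∈ finDual k A, ∀ β : Module.Dual k Hb,
        conv k (PiDual k A H p α) (piDual k H Hb π β)
          = conv k (piDual k H Hb π β) (PiDual k A H p α)) ∧
      -- `H° ≅ H̄* ⊗ A°` via `(β, α) ↦ π°(β) * Π°(α)`: surjectivity ...
      (∀ f ∈ finDual k H, ∃ (n : ℕ) (β : Fin n → Module.Dual k Hb)
          (α : Fin n → Module.Dual k A),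
        (∀ i, α i ∈ finDual k A) ∧
        f = ∑ i, conv k (piDual k H Hb π (β i)) (PiDual k A H p (α i))) ∧
      -- ... injectivity ...
      (∀ (n : ℕ) (β : Fin n → Module.Dual k Hb) (α : Fin n → Module.Dual k A),
        (∀ i, α i ∈ finDual k A) → LinearIndependent k α →
        (∑ i, conv k (piDual k H Hb π (β i)) (PiDual k A H p (α i))) = 0 →
        ∀ i, β i = 0) ∧
      -- ... left `H̄*`-linearity ...
      (∀ (β' β : Module.Dual k Hb) (α : Module.Dual k A),
        conv k (piDual k H Hb π (conv k β' β)) (PiDual k A H p α)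
          = conv k (piDual k H Hb π β')
              (conv k (piDual k H Hb π β) (PiDual k A H p α))) ∧
      -- ... and right `A°`-colinearity (pairing form)
      (∀ (β : Module.Dual k Hb) (α : Module.Dual k A) (h : H) (a : A),
        conv k (piDual k H Hb π β) (PiDual k A H p α) (h * ι a)
          = conv k (piDual k H Hb π β)
              (PiDual k A H p (α ∘ₗ LinearMap.mulRight k a)) h) := by
  classical
  obtain ⟨γ', hγ'⟩ := hγ_inv
  have hcross' : ∀ h : H, ∃ (n : ℕ) (a : Fin n → A) (b : Fin n → Hb),
      h = ∑ i, ι (a i) * γ (b i) := by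
    intro h
    obtain ⟨n, a, b, _, hs⟩ := hcross h
    exact ⟨n, a, b, hs⟩
  have hh : S5Aux.Hyp ι π γ γ' :=
    ⟨hCbF, hQ, hγ_comul, hγ_counit, hγ_comod, hγ', hcross'⟩
  obtain ⟨g, hg0⟩ := LinearMap.exists_leftInverse_of_injective ι
    (LinearMap.ker_eq_bot.mpr hCbF.ι_inj)
  have hg : ∀ a, g (ι a) = a := fun a => LinearMap.congr_fun hg0 a
  obtain ⟨c, hc⟩ : ∃ c : A, ι c = γ' 1 := by
    obtain ⟨c, hc⟩ := S5Aux.Psi_range hh (1 : H)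
    exact ⟨c, by rw [hc, S5Aux.Psi_one hh]⟩
  set p : H →ₗ[k] A := S5Aux.pmap π γ' g c with hp
  -- notation for the antipode of c
  set d : A := HopfAlgebra.antipode (R := k) c with hd
  haveI : FiniteDimensional k Hb := hQ.findim
  set n : ℕ := Module.finrank k Hb with hn
  set B : Module.Basis (Fin n) k Hb := Module.finBasis k Hb with hB
  refine ⟨p, ⟨S5Aux.pmap_iota hh hg hc, S5Aux.pmap_mul_iota hh hg hc⟩,
    S5Aux.cosplit hh hg hc, S5Aux.pmap_alg hh hg hc,
    S5Aux.counit_comp_pmap hh hg hc,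
    fun α hα => S5Aux.finDual_pmap hh hg hc α hα, ?_, ?_, ?_, ?_, ?_⟩
  -- commutation
  · intro α _ β
    refine S5Aux.ext_of_gen hh _ _ fun b a => ?_
    rw [S5Aux.conv_eval hh hg hc, S5Aux.conv_eval2 hh hg hc]
  -- surjectivity
  · intro f hf
    obtain ⟨Jf, hJmul, hJker, hJfd⟩ := hf
    refine ⟨n, fun j => B.coord j,
      fun j => f ∘ₗ (LinearMap.mulLeft k (γ (B j))) ∘ₗ ι ∘ₗ (LinearMap.mulRight k c),
      ?_, ?_⟩
    · intro j
      refine ⟨Jf.comap ι, ?_, ?_, ?_⟩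
      · intro h x hx
        constructor
        · have := (hJmul (ι h) (ι x) hx).1
          rw [Submodule.mem_comap, hCbF.ι_mul]
          exact this
        · have := (hJmul (ι h) (ι x) hx).2
          rw [Submodule.mem_comap, hCbF.ι_mul]
          exact this
      · intro x hx
        rw [LinearMap.mem_ker]
        show f (γ (B j) * ι (x * c)) = 0
        have hmem : γ (B j) * ι (x * c) ∈ Jf := by
          rw [hCbF.ι_mul, ← mul_assoc]
          exact (hJmul (ι c) _ ((hJmul (γ (B j)) (ι x) hx).1)).2
        exact hJker hmem
      · have hker : Jf.comap ι ≤ LinearMap.ker (Jf.mkQ ∘ₗ ι) := by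
          intro x hx
          rw [LinearMap.mem_ker, LinearMap.comp_apply, Submodule.mkQ_apply,
            Submodule.Quotient.mk_eq_zero]
          exact hx
        have hker2 : LinearMap.ker (Jf.mkQ ∘ₗ ι) ≤ Jf.comap ι := by
          intro x hx
          rw [LinearMap.mem_ker, LinearMap.comp_apply, Submodule.mkQ_apply,
            Submodule.Quotient.mk_eq_zero] at hx
          exact hx
        refine FiniteDimensional.of_injective ((Jf.comap ι).liftQ _ hker) ?_
        rw [← LinearMap.ker_eq_bot]
        exact Submodule.ker_liftQ_eq_bot _ _ hker hker2
    · refine S5Aux.ext_of_gen hh _ _ fun b a => ?_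
      rw [LinearMap.sum_apply]
      have hterm : ∀ j, Paper.conv k (Paper.piDual k H Hb π (B.coord j))
          (Paper.PiDual k A H p
            (f ∘ₗ (LinearMap.mulLeft k (γ (B j))) ∘ₗ ι ∘ₗ (LinearMap.mulRight k c)))
            (γ b * ι a)
          = B.repr b j • f (γ (B j) * ι a) := by
        intro j
        rw [S5Aux.conv_eval hh hg hc]
        have h1 : (HopfAlgebra.antipode (R := k) c * a) * c = a := by
          rw [mul_comm (HopfAlgebra.antipode (R := k) c) a, mul_assoc,
            S5Aux.Sc_mul_c hh hc, mul_one]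
        simp only [LinearMap.comp_apply, LinearMap.mulRight_apply,
          LinearMap.mulLeft_apply, Module.Basis.coord_apply]
        rw [h1, smul_eq_mul]
      simp only [hterm]
      have hexp : γ b * ι a = ∑ j, B.repr b j • (γ (B j) * ι a) := by
        have h1 : γ b = ∑ j, B.repr b j • γ (B j) := by
          conv_lhs => rw [← B.sum_repr b]
          rw [map_sum]
          simp
        rw [h1, Finset.sum_mul]
        refine Finset.sum_congr rfl fun j _ => ?_
        rw [smul_mul_assoc]
      conv_lhs => rw [hexp, map_sum]
      simp only [map_smul]
  -- injectivity
  · intro m β α hαfin hLI hsum0 i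
    have hval : ∀ (b : Hb) (a : A), ∑ j, β j b * α j (HopfAlgebra.antipode (R := k) c * a) = 0 := by
      intro b a
      have h1 := LinearMap.congr_fun hsum0 (γ b * ι a)
      rw [LinearMap.sum_apply] at h1
      simp only [hp, S5Aux.conv_eval hh hg hc] at h1
      simpa using h1
    have hβ : ∀ b : Hb, ∀ j, β j b = 0 := by
      intro b
      have hz : ∑ j, β j b • α j = 0 := by
        apply LinearMap.ext
        intro w
        have h2 := hval b (c * w)
        have h3 : HopfAlgebra.antipode (R := k) c * (c * w) = w := by
          rw [← mul_assoc, S5Aux.Sc_mul_c hh hc, one_mul]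
        rw [h3] at h2
        simpa [smul_eq_mul] using h2
      exact fun j => Fintype.linearIndependent_iff.mp hLI (fun j => β j b) hz j
    exact LinearMap.ext fun b => hβ b i
  -- H̄*-linearity
  · intro β' β α
    refine S5Aux.ext_of_gen hh _ _ fun b a => ?_
    classical
    rw [S5Aux.conv_eval hh hg hc]
    set rb := Coalgebra.Repr.arbitrary k b with hrb
    set ra := Coalgebra.Repr.arbitrary k a with hra
    rw [S5Aux.conv_repr _ _ (S5Aux.mulRepr (S5Aux.mapRepr γ (hh.hγ_comul b) rb)
      (S5Aux.mapRepr ι (hh.hCbF.ι_comul a) ra))]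
    simp only [S5Aux.mulRepr, S5Aux.mapRepr, Function.comp, Paper.piDual,
      LinearMap.comp_apply]
    rw [Finset.sum_product]
    have hterm : ∀ i j,
        β' (π (γ (rb.left i) * ι (ra.left j))) *
          Paper.conv k (β ∘ₗ π) (Paper.PiDual k A H p α)
            (γ (rb.right i) * ι (ra.right j))
        = (β' (rb.left i) * β (rb.right i)) *
            (Coalgebra.counit (R := k) (ra.left j) *
              α (HopfAlgebra.antipode (R := k) c * ra.right j)) := by
      intro i j
      have he := S5Aux.conv_eval hh hg hc β α (rb.right i) (ra.right j)
      rw [hQ.π_mul, S5Aux.pi_gamma hh, S5Aux.pi_iota hh,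
        mul_smul_comm, mul_one, map_smul, smul_eq_mul,
        show (Paper.conv k (β ∘ₗ π) (Paper.PiDual k A H p α))
            (γ (rb.right i) * ι (ra.right j))
          = β (rb.right i) * α (HopfAlgebra.antipode (R := k) c * ra.right j) from he]
      ring
    simp only [hterm]
    rw [← Finset.sum_mul_sum, S5Aux.alpha_collect_left α _ ra,
      S5Aux.conv_repr β' β rb]
  -- colinearity
  · intro β α h a
    have hfun : (Paper.conv k (Paper.piDual k H Hb π β) (Paper.PiDual k A H p α)) ∘ₗ
        (LinearMap.mulRight k (ι a))
        = Paper.conv k (Paper.piDual k H Hb π β)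
            (Paper.PiDual k A H p (α ∘ₗ LinearMap.mulRight k a)) := by
      refine S5Aux.ext_of_gen hh _ _ fun b a' => ?_
      rw [LinearMap.comp_apply, LinearMap.mulRight_apply, mul_assoc, ← hCbF.ι_mul,
        S5Aux.conv_eval hh hg hc, S5Aux.conv_eval hh hg hc]
      simp only [LinearMap.comp_apply, LinearMap.mulRight_apply]
      rw [mul_assoc]
    have := LinearMap.congr_fun hfun h
    rw [LinearMap.comp_apply, LinearMap.mulRight_apply] at this
    exact this
end
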